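/- For every integer d ≥ 2, the bound d² / (H_d + H_d·d − d) ≤ 1.09 · d / ln d holds, where H_d = ∑_{n=1}^d 1/n is the d-th harmonic number; equivalently, the function d ↦ (ln d) / (H_d + H_d·d − d), defined on integers d ≥ 2, is bounded above by 1.09/d, with its maximum of d·(ln d)/(H_d + H_d·d − d) attained at d = 48. -/

import Mathlib

open scoped ComplexOrder Kronecker Matrix
open MeasureTheory

noncomputable section

namespace QSteer

/-- Square complex matrices indexed by `ι` (the Hilbert space `ℂ^ι`). -/
abbrev HMat (ι : Type) : Type := Matrix ι ι ℂ

/-- A density matrix: positive semidefinite with unit trace. -/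
def IsDensity {ι : Type} [Fintype ι] (ρ : HMat ι) : Prop :=
  ρ.PosSemidef ∧ ρ.trace = 1

/-- A POVM family `{E_{a|x}}`: positive semidefinite effects summing to the identity
for every setting `x`. -/
def IsPOVM {ι A X : Type} [Fintype ι] [Fintype A] [DecidableEq ι]
    (E : A → X → HMat ι) : Prop :=
  (∀ a x, (E a x).PosSemidef) ∧ ∀ x, ∑ a, E a x = 1

/-- A projective measurement family: a POVM family whose effects are orthogonal
projections. -/
def IsProjPOVM {ι A X : Type} [Fintype ι] [Fintype A] [DecidableEq ι]
    (E : A → X → HMat ι) : Prop :=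
  IsPOVM E ∧ ∀ a x, (E a x).IsHermitian ∧ E a x * E a x = E a x

/-- An assemblage `{σ_{a|x}}`: positive semidefinite matrices such that `∑_a σ_{a|x}`
is the same unit-trace matrix for every `x`. -/
def IsAssemblage {ι A X : Type} [Fintype ι] [Fintype A] (σ : A → X → HMat ι) : Prop :=
  (∀ a x, (σ a x).PosSemidef) ∧ (∀ x x', ∑ a, σ a x = ∑ a, σ a x') ∧
    ∀ x, (∑ a, σ a x).trace = 1

/-- An unsteerable assemblage: one admitting a local-hidden-state model. -/
def IsUnsteerable {ι A X : Type} [Fintype ι] [Fintype A] (σ : A → X → HMat ι) : Prop :=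
  ∃ (n : ℕ) (w : Fin n → ℝ) (p : A → X → Fin n → ℝ) (τ : Fin n → HMat ι),
    (∀ l, 0 ≤ w l) ∧ (∑ l, w l = 1) ∧
    (∀ a x l, 0 ≤ p a x l) ∧ (∀ x l, ∑ a, p a x l = 1) ∧
    (∀ l, IsDensity (τ l)) ∧
    ∀ a x, σ a x = ∑ l, (w l * p a x l) • τ l

/-- A steering functional `{F_{a|x}}`: a family of positive semidefinite matrices. -/
def IsSteeringFunctional {ι A X : Type} [Fintype ι] (F : A → X → HMat ι) : Prop :=
  ∀ a x, (F a x).PosSemidef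

/-- The value `∑_{a,x} tr(F_{a|x} σ_{a|x})` (real part). -/
def steeringValue {ι A X : Type} [Fintype ι] [Fintype A] [Fintype X]
    (F σ : A → X → HMat ι) : ℝ :=
  ∑ x, ∑ a, ((F a x * σ a x).trace).re

/-- The steering bound `ω_s(F)`. -/
def steeringBound {ι A X : Type} [Fintype ι] [Fintype A] [Fintype X]
    (F : A → X → HMat ι) : ℝ :=
  sSup {r : ℝ | ∃ σ : A → X → HMat ι, IsAssemblage σ ∧ IsUnsteerable σ ∧
    r = steeringValue F σ}

/-- The steering fraction `Γ_s(σ, F)`. -/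
def steeringFraction {ι A X : Type} [Fintype ι] [Fintype A] [Fintype X]
    (σ F : A → X → HMat ι) : ℝ :=
  steeringValue F σ / steeringBound F

/-- Partial trace over the first (Alice's) tensor factor. -/
def ptraceA {ιA ιB : Type} [Fintype ιA] (M : Matrix (ιA × ιB) (ιA × ιB) ℂ) : HMat ιB :=
  Matrix.of fun j j' => ∑ i, M (i, j) (i, j')

/-- The assemblage induced by a bipartite state and Alice's POVMs:
`σ_{a|x} = Tr_A[ρ (E_{a|x} ⊗ I)]`. -/
def inducedAssemblage {ιA ιB A X : Type} [Fintype ιA] [Fintype ιB] [DecidableEq ιB]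
    (ρ : Matrix (ιA × ιB) (ιA × ιB) ℂ) (E : A → X → HMat ιA) : A → X → HMat ιB :=
  fun a x => ptraceA (ρ * ((E a x) ⊗ₖ (1 : HMat ιB)))

/-- Largest steering-inequality violation `LV_s(ρ, F)` over Alice POVM families. -/
def LVs {ιA ιB A X : Type} [Fintype ιA] [Fintype ιB] [DecidableEq ιA] [DecidableEq ιB]
    [Fintype A] [Fintype X]
    (ρ : Matrix (ιA × ιB) (ιA × ιB) ℂ) (F : A → X → HMat ιB) : ℝ :=
  sSup {r : ℝ | ∃ E : A → X → HMat ιA, IsPOVM E ∧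
    r = steeringFraction (inducedAssemblage ρ E) F}

/-- Largest steering-inequality violation `LV_s^π(ρ, F)` over projective Alice families. -/
def LVsProj {ιA ιB A X : Type} [Fintype ιA] [Fintype ιB] [DecidableEq ιA] [DecidableEq ιB]
    [Fintype A] [Fintype X]
    (ρ : Matrix (ιA × ιB) (ιA × ιB) ℂ) (F : A → X → HMat ιB) : ℝ :=
  sSup {r : ℝ | ∃ E : A → X → HMat ιA, IsProjPOVM E ∧
    r = steeringFraction (inducedAssemblage ρ E) F}

/-- The maximally entangled state `|Ψ⁺⟩⟨Ψ⁺|` on `ℂ^ι ⊗ ℂ^ι`. -/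
def maxEnt (ι : Type) [Fintype ι] [DecidableEq ι] : Matrix (ι × ι) (ι × ι) ℂ :=
  Matrix.of fun pq rs => if pq.1 = pq.2 ∧ rs.1 = rs.2 then ((Fintype.card ι : ℂ))⁻¹ else 0

/-- The fully entangled fraction `F(ρ) = sup_U ⟨Ψ⁺|(U ⊗ I) ρ (U ⊗ I)†|Ψ⁺⟩`. -/
def fef {ι : Type} [Fintype ι] [DecidableEq ι] (ρ : Matrix (ι × ι) (ι × ι) ℂ) : ℝ :=
  sSup {r : ℝ | ∃ U : Matrix ι ι ℂ, U ∈ Matrix.unitaryGroup ι ℂ ∧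
    r = ((maxEnt ι * ((U ⊗ₖ (1 : HMat ι)) * ρ * ((U ⊗ₖ (1 : HMat ι))ᴴ))).trace).re}

/-- A local-hidden-variable (Bell-local) correlation. -/
def IsLHV {A B X Y : Type} [Fintype A] [Fintype B] (P : A → B → X → Y → ℝ) : Prop :=
  ∃ (n : ℕ) (w : Fin n → ℝ) (pA : A → X → Fin n → ℝ) (pB : B → Y → Fin n → ℝ),
    (∀ l, 0 ≤ w l) ∧ (∑ l, w l = 1) ∧
    (∀ a x l, 0 ≤ pA a x l) ∧ (∀ x l, ∑ a, pA a x l = 1) ∧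
    (∀ b y l, 0 ≤ pB b y l) ∧ (∀ y l, ∑ b, pB b y l = 1) ∧
    ∀ a b x y, P a b x y = ∑ l, w l * pA a x l * pB b y l

/-- The Bell value `∑ B_{ab|xy} P(a,b|x,y)`. -/
def bellValue {A B X Y : Type} [Fintype A] [Fintype B] [Fintype X] [Fintype Y]
    (Bf P : A → B → X → Y → ℝ) : ℝ :=
  ∑ x, ∑ y, ∑ a, ∑ b, Bf a b x y * P a b x y

/-- The local bound `ω(B)`. -/
def localBound {A B X Y : Type} [Fintype A] [Fintype B] [Fintype X] [Fintype Y]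
    (Bf : A → B → X → Y → ℝ) : ℝ :=
  sSup {r : ℝ | ∃ P : A → B → X → Y → ℝ, IsLHV P ∧ r = bellValue Bf P}

/-- The nonlocality fraction `Γ(P, B)`. -/
def nonlocalityFraction {A B X Y : Type} [Fintype A] [Fintype B] [Fintype X] [Fintype Y]
    (P Bf : A → B → X → Y → ℝ) : ℝ :=
  bellValue Bf P / localBound Bf

/-- The quantum correlation `P(a,b|x,y) = tr[ρ (E_{a|x} ⊗ E_{b|y})]`. -/
def quantumCorr {ιA ιB A B X Y : Type} [Fintype ιA] [Fintype ιB]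
    (ρ : Matrix (ιA × ιB) (ιA × ιB) ℂ) (EA : A → X → HMat ιA) (EB : B → Y → HMat ιB) :
    A → B → X → Y → ℝ :=
  fun a b x y => ((ρ * ((EA a x) ⊗ₖ (EB b y))).trace).re

/-- Largest Bell-inequality violation `LV(ρ, B)` over pairs of POVM families. -/
def LV {ιA ιB A B X Y : Type} [Fintype ιA] [Fintype ιB] [DecidableEq ιA] [DecidableEq ιB]
    [Fintype A] [Fintype B] [Fintype X] [Fintype Y]
    (ρ : Matrix (ιA × ιB) (ιA × ιB) ℂ) (Bf : A → B → X → Y → ℝ) : ℝ :=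
  sSup {r : ℝ | ∃ (EA : A → X → HMat ιA) (EB : B → Y → HMat ιB),
    IsPOVM EA ∧ IsPOVM EB ∧ r = nonlocalityFraction (quantumCorr ρ EA EB) Bf}

/-- Largest Bell-inequality violation `LV^π(ρ, B)` over pairs of projective families. -/
def LVProj {ιA ιB A B X Y : Type} [Fintype ιA] [Fintype ιB] [DecidableEq ιA] [DecidableEq ιB]
    [Fintype A] [Fintype B] [Fintype X] [Fintype Y]
    (ρ : Matrix (ιA × ιB) (ιA × ιB) ℂ) (Bf : A → B → X → Y → ℝ) : ℝ :=
  sSup {r : ℝ | ∃ (EA : A → X → HMat ιA) (EB : B → Y → HMat ιB),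
    IsProjPOVM EA ∧ IsProjPOVM EB ∧ r = nonlocalityFraction (quantumCorr ρ EA EB) Bf}

/-- The steering functional induced by a Bell functional and Bob's POVMs:
`F_{a|x} = ∑_{b,y} B_{ab|xy} E_{b|y}`. -/
def inducedF {ιB A B X Y : Type} [Fintype B] [Fintype Y]
    (Bf : A → B → X → Y → ℝ) (EB : B → Y → HMat ιB) : A → X → HMat ιB :=
  fun a x => ∑ y, ∑ b, Bf a b x y • EB b y

/-- The `k`-fold tensor power of a bipartite state, regrouped as a bipartite state on
`ℂ^{d^k} ⊗ ℂ^{d^k}` (Alice's factors grouped together, likewise Bob's). -/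
def tensorPower {ι : Type} (ρ : Matrix (ι × ι) (ι × ι) ℂ) (k : ℕ) :
    Matrix ((Fin k → ι) × (Fin k → ι)) ((Fin k → ι) × (Fin k → ι)) ℂ :=
  Matrix.of fun p q => ∏ t, ρ (p.1 t, p.2 t) (q.1 t, q.2 t)

/-- The isotropic state `ρ_iso(p) = p |Ψ⁺⟩⟨Ψ⁺| + (1-p) I/d²` on `ℂ^d ⊗ ℂ^d`. -/
def iso (d : ℕ) (p : ℝ) : Matrix (Fin d × Fin d) (Fin d × Fin d) ℂ :=
  p • maxEnt (Fin d) + ((1 - p) / (d : ℝ) ^ 2) • (1 : Matrix (Fin d × Fin d) (Fin d × Fin d) ℂ)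

/-- `sup_F Γ_s(σ, F)` over positive semidefinite steering functionals with positive
steering bound. -/
def supFrac {ι A X : Type} [Fintype ι] [Fintype A] [Fintype X] (σ : A → X → HMat ι) : ℝ :=
  sSup {r : ℝ | ∃ F : A → X → HMat ι, IsSteeringFunctional F ∧ 0 < steeringBound F ∧
    r = steeringFraction σ F}

/-- The optimal steering fraction `S_O(σ) = max{0, sup_F Γ_s(σ, F) − 1}`. -/
def SO {ι A X : Type} [Fintype ι] [Fintype A] [Fintype X] (σ : A → X → HMat ι) : ℝ :=
  max 0 (supFrac σ - 1)

/-- The steerable weight `S_W(σ)`. -/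
def SW {ι A X : Type} [Fintype ι] [Fintype A] [Fintype X] (σ : A → X → HMat ι) : ℝ :=
  sInf {ν : ℝ | 0 ≤ ν ∧ ν ≤ 1 ∧ ∃ σUS σS : A → X → HMat ι,
    IsAssemblage σUS ∧ IsUnsteerable σUS ∧ IsAssemblage σS ∧
    ∀ a x, σ a x = (1 - ν) • σUS a x + ν • σS a x}

/-- The steering robustness `S_R(σ)`. -/
def SR {ι A X : Type} [Fintype ι] [Fintype A] [Fintype X] (σ : A → X → HMat ι) : ℝ :=
  sInf {ν : ℝ | 0 ≤ ν ∧ ∃ τ : A → X → HMat ι, IsAssemblage τ ∧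
    IsUnsteerable (fun a x => (1 / (1 + ν)) • σ a x + (ν / (1 + ν)) • τ a x)}

/-- Separability of a bipartite state. -/
def IsSeparable {ιA ιB : Type} [Fintype ιA] [Fintype ιB]
    (ρ : Matrix (ιA × ιB) (ιA × ιB) ℂ) : Prop :=
  ∃ (n : ℕ) (w : Fin n → ℝ) (ρA : Fin n → HMat ιA) (ρB : Fin n → HMat ιB),
    (∀ l, 0 ≤ w l) ∧ (∑ l, w l = 1) ∧ (∀ l, IsDensity (ρA l)) ∧ (∀ l, IsDensity (ρB l)) ∧
    ρ = ∑ l, w l • ((ρA l) ⊗ₖ (ρB l))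

/-- The (unnormalized) output assemblage of a one-way LOCC subchannel acting on an
assemblage: `M(σ)_{a'|x'} = K (∑_{a,x} P(x|x') P(a'|x',a,x) σ_{a|x}) K†`. -/
def wired {ι ι₂ A X A' X' : Type} [Fintype ι] [Fintype A] [Fintype X]
    (K : Matrix ι₂ ι ℂ) (Px : X → X' → ℝ) (Pa : A' → X' → A → X → ℝ)
    (σ : A → X → HMat ι) : A' → X' → HMat ι₂ :=
  fun a' x' => K * (∑ x, ∑ a, (Px x x' * Pa a' x' a x) • σ a x) * Kᴴ

instance matMeasurableSpace {m n : Type} : MeasurableSpace (Matrix m n ℂ) :=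
  inferInstanceAs (MeasurableSpace (m → n → ℂ))

/-- The `(U ⊗ U*)`-twirl of a bipartite state with respect to a measure `μ` on the
unitary group (entrywise Bochner integral). -/
def twirl {ι : Type} [Fintype ι] [DecidableEq ι]
    (μ : Measure (Matrix.unitaryGroup ι ℂ)) (ρ : Matrix (ι × ι) (ι × ι) ℂ) :
    Matrix (ι × ι) (ι × ι) ℂ :=
  Matrix.of fun p q =>
    ∫ V : Matrix.unitaryGroup ι ℂ,
      ((((V : Matrix ι ι ℂ)) ⊗ₖ ((V : Matrix ι ι ℂ).map (starRingEnd ℂ))) * ρ *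
        ((((V : Matrix ι ι ℂ)) ⊗ₖ ((V : Matrix ι ι ℂ).map (starRingEnd ℂ)))ᴴ)) p q ∂μ



theorem harmV1 : harmonic 1 = 1 := by
  rw [show (1:ℕ) = 0+1 from rfl, harmonic_succ, harmonic_zero]; norm_num
theorem harmV2 : harmonic 2 = ((3 : ℚ)/2) := by
  rw [show (2:ℕ) = 1+1 from rfl, harmonic_succ, harmV1]; norm_num
theorem harmV3 : harmonic 3 = ((11 : ℚ)/6) := by
  rw [show (3:ℕ) = 2+1 from rfl, harmonic_succ, harmV2]; norm_num
theorem harmV4 : harmonic 4 = ((25 : ℚ)/12) := by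
  rw [show (4:ℕ) = 3+1 from rfl, harmonic_succ, harmV3]; norm_num
theorem harmV5 : harmonic 5 = ((137 : ℚ)/60) := by
  rw [show (5:ℕ) = 4+1 from rfl, harmonic_succ, harmV4]; norm_num
theorem harmV6 : harmonic 6 = ((49 : ℚ)/20) := by
  rw [show (6:ℕ) = 5+1 from rfl, harmonic_succ, harmV5]; norm_num
theorem harmV7 : harmonic 7 = ((363 : ℚ)/140) := by
  rw [show (7:ℕ) = 6+1 from rfl, harmonic_succ, harmV6]; norm_num
theorem harmV8 : harmonic 8 = ((761 : ℚ)/280) := by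
  rw [show (8:ℕ) = 7+1 from rfl, harmonic_succ, harmV7]; norm_num
theorem harmV9 : harmonic 9 = ((7129 : ℚ)/2520) := by
  rw [show (9:ℕ) = 8+1 from rfl, harmonic_succ, harmV8]; norm_num
theorem harmV10 : harmonic 10 = ((7381 : ℚ)/2520) := by
  rw [show (10:ℕ) = 9+1 from rfl, harmonic_succ, harmV9]; norm_num
theorem harmV11 : harmonic 11 = ((83711 : ℚ)/27720) := by
  rw [show (11:ℕ) = 10+1 from rfl, harmonic_succ, harmV10]; norm_num
theorem harmV12 : harmonic 12 = ((86021 : ℚ)/27720) := by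
  rw [show (12:ℕ) = 11+1 from rfl, harmonic_succ, harmV11]; norm_num
theorem harmV13 : harmonic 13 = ((1145993 : ℚ)/360360) := by
  rw [show (13:ℕ) = 12+1 from rfl, harmonic_succ, harmV12]; norm_num
theorem harmV14 : harmonic 14 = ((1171733 : ℚ)/360360) := by
  rw [show (14:ℕ) = 13+1 from rfl, harmonic_succ, harmV13]; norm_num
theorem harmV15 : harmonic 15 = ((1195757 : ℚ)/360360) := by
  rw [show (15:ℕ) = 14+1 from rfl, harmonic_succ, harmV14]; norm_num
theorem harmV16 : harmonic 16 = ((2436559 : ℚ)/720720) := by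
  rw [show (16:ℕ) = 15+1 from rfl, harmonic_succ, harmV15]; norm_num
theorem harmV17 : harmonic 17 = ((42142223 : ℚ)/12252240) := by
  rw [show (17:ℕ) = 16+1 from rfl, harmonic_succ, harmV16]; norm_num
theorem harmV18 : harmonic 18 = ((14274301 : ℚ)/4084080) := by
  rw [show (18:ℕ) = 17+1 from rfl, harmonic_succ, harmV17]; norm_num
theorem harmV19 : harmonic 19 = ((275295799 : ℚ)/77597520) := by
  rw [show (19:ℕ) = 18+1 from rfl, harmonic_succ, harmV18]; norm_num
theorem harmV20 : harmonic 20 = ((55835135 : ℚ)/15519504) := by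
  rw [show (20:ℕ) = 19+1 from rfl, harmonic_succ, harmV19]; norm_num
theorem harmV21 : harmonic 21 = ((18858053 : ℚ)/5173168) := by
  rw [show (21:ℕ) = 20+1 from rfl, harmonic_succ, harmV20]; norm_num
theorem harmV22 : harmonic 22 = ((19093197 : ℚ)/5173168) := by
  rw [show (22:ℕ) = 21+1 from rfl, harmonic_succ, harmV21]; norm_num
theorem harmV23 : harmonic 23 = ((444316699 : ℚ)/118982864) := by
  rw [show (23:ℕ) = 22+1 from rfl, harmonic_succ, harmV22]; norm_num
theorem harmV24 : harmonic 24 = ((1347822955 : ℚ)/356948592) := by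
  rw [show (24:ℕ) = 23+1 from rfl, harmonic_succ, harmV23]; norm_num
theorem harmV25 : harmonic 25 = ((34052522467 : ℚ)/8923714800) := by
  rw [show (25:ℕ) = 24+1 from rfl, harmonic_succ, harmV24]; norm_num
theorem harmV26 : harmonic 26 = ((34395742267 : ℚ)/8923714800) := by
  rw [show (26:ℕ) = 25+1 from rfl, harmonic_succ, harmV25]; norm_num
theorem harmV27 : harmonic 27 = ((312536252003 : ℚ)/80313433200) := by
  rw [show (27:ℕ) = 26+1 from rfl, harmonic_succ, harmV26]; norm_num
theorem harmV28 : harmonic 28 = ((315404588903 : ℚ)/80313433200) := by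
  rw [show (28:ℕ) = 27+1 from rfl, harmonic_succ, harmV27]; norm_num
theorem harmV29 : harmonic 29 = ((9227046511387 : ℚ)/2329089562800) := by
  rw [show (29:ℕ) = 28+1 from rfl, harmonic_succ, harmV28]; norm_num
theorem harmV30 : harmonic 30 = ((9304682830147 : ℚ)/2329089562800) := by
  rw [show (30:ℕ) = 29+1 from rfl, harmonic_succ, harmV29]; norm_num
theorem harmV31 : harmonic 31 = ((290774257297357 : ℚ)/72201776446800) := by
  rw [show (31:ℕ) = 30+1 from rfl, harmonic_succ, harmV30]; norm_num
theorem harmV32 : harmonic 32 = ((586061125622639 : ℚ)/144403552893600) := by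
  rw [show (32:ℕ) = 31+1 from rfl, harmonic_succ, harmV31]; norm_num
theorem harmV33 : harmonic 33 = ((53676090078349 : ℚ)/13127595717600) := by
  rw [show (33:ℕ) = 32+1 from rfl, harmonic_succ, harmV32]; norm_num
theorem harmV34 : harmonic 34 = ((54062195834749 : ℚ)/13127595717600) := by
  rw [show (34:ℕ) = 33+1 from rfl, harmonic_succ, harmV33]; norm_num
theorem harmV35 : harmonic 35 = ((54437269998109 : ℚ)/13127595717600) := by
  rw [show (35:ℕ) = 34+1 from rfl, harmonic_succ, harmV34]; norm_num
theorem harmV36 : harmonic 36 = ((54801925434709 : ℚ)/13127595717600) := by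
  rw [show (36:ℕ) = 35+1 from rfl, harmonic_succ, harmV35]; norm_num
theorem harmV37 : harmonic 37 = ((2040798836801833 : ℚ)/485721041551200) := by
  rw [show (37:ℕ) = 36+1 from rfl, harmonic_succ, harmV36]; norm_num
theorem harmV38 : harmonic 38 = ((2053580969474233 : ℚ)/485721041551200) := by
  rw [show (38:ℕ) = 37+1 from rfl, harmonic_succ, harmV37]; norm_num
theorem harmV39 : harmonic 39 = ((2066035355155033 : ℚ)/485721041551200) := by
  rw [show (39:ℕ) = 38+1 from rfl, harmonic_succ, harmV38]; norm_num
theorem harmV40 : harmonic 40 = ((2078178381193813 : ℚ)/485721041551200) := by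
  rw [show (40:ℕ) = 39+1 from rfl, harmonic_succ, harmV39]; norm_num
theorem harmV41 : harmonic 41 = ((85691034670497533 : ℚ)/19914562703599200) := by
  rw [show (41:ℕ) = 40+1 from rfl, harmonic_succ, harmV40]; norm_num
theorem harmV42 : harmonic 42 = ((12309312989335019 : ℚ)/2844937529085600) := by
  rw [show (42:ℕ) = 41+1 from rfl, harmonic_succ, harmV41]; norm_num
theorem harmV43 : harmonic 43 = ((532145396070491417 : ℚ)/122332313750680800) := by
  rw [show (43:ℕ) = 42+1 from rfl, harmonic_succ, harmV42]; norm_num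
theorem harmV44 : harmonic 44 = ((5884182435213075787 : ℚ)/1345655451257488800) := by
  rw [show (44:ℕ) = 43+1 from rfl, harmonic_succ, harmV43]; norm_num
theorem harmV45 : harmonic 45 = ((5914085889685464427 : ℚ)/1345655451257488800) := by
  rw [show (45:ℕ) = 44+1 from rfl, harmonic_succ, harmV44]; norm_num
theorem harmV46 : harmonic 46 = ((5943339269060627227 : ℚ)/1345655451257488800) := by
  rw [show (46:ℕ) = 45+1 from rfl, harmonic_succ, harmV45]; norm_num
theorem harmV47 : harmonic 47 = ((280682601097106968469 : ℚ)/63245806209101973600) := by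
  rw [show (47:ℕ) = 46+1 from rfl, harmonic_succ, harmV46]; norm_num
theorem harmV48 : harmonic 48 = ((282000222059796592919 : ℚ)/63245806209101973600) := by
  rw [show (48:ℕ) = 47+1 from rfl, harmonic_succ, harmV47]; norm_num
theorem harmV49 : harmonic 49 = ((13881256687139135026631 : ℚ)/3099044504245996706400) := by
  rw [show (49:ℕ) = 48+1 from rfl, harmonic_succ, harmV48]; norm_num
theorem harmV50 : harmonic 50 = ((13943237577224054960759 : ℚ)/3099044504245996706400) := by
  rw [show (50:ℕ) = 49+1 from rfl, harmonic_succ, harmV49]; norm_num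
theorem harmV51 : harmonic 51 = ((14004003155738682347159 : ℚ)/3099044504245996706400) := by
  rw [show (51:ℕ) = 50+1 from rfl, harmonic_succ, harmV50]; norm_num
theorem harmV52 : harmonic 52 = ((14063600165435720745359 : ℚ)/3099044504245996706400) := by
  rw [show (52:ℕ) = 51+1 from rfl, harmonic_succ, harmV51]; norm_num
theorem harmV53 : harmonic 53 = ((748469853272339196210427 : ℚ)/164249358725037825439200) := by
  rw [show (53:ℕ) = 52+1 from rfl, harmonic_succ, harmV52]; norm_num
theorem harmV54 : harmonic 54 = ((250503836021181200128409 : ℚ)/54749786241679275146400) := by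
  rw [show (54:ℕ) = 53+1 from rfl, harmonic_succ, harmV53]; norm_num
theorem harmV55 : harmonic 55 = ((251499286680120823312889 : ℚ)/54749786241679275146400) := by
  rw [show (55:ℕ) = 54+1 from rfl, harmonic_succ, harmV54]; norm_num
theorem harmV56 : harmonic 56 = ((252476961434436524654789 : ℚ)/54749786241679275146400) := by
  rw [show (56:ℕ) = 55+1 from rfl, harmonic_succ, harmV55]; norm_num
theorem harmV57 : harmonic 57 = ((253437484000080020709989 : ℚ)/54749786241679275146400) := by
  rw [show (57:ℕ) = 56+1 from rfl, harmonic_succ, harmV56]; norm_num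
theorem harmV58 : harmonic 58 = ((254381445831833111660789 : ℚ)/54749786241679275146400) := by
  rw [show (58:ℕ) = 57+1 from rfl, harmonic_succ, harmV57]; norm_num
theorem harmV59 : harmonic 59 = ((15063255090319832863132951 : ℚ)/3230237388259077233637600) := by
  rw [show (59:ℕ) = 58+1 from rfl, harmonic_succ, harmV58]; norm_num
theorem harmV60 : harmonic 60 = ((15117092380124150817026911 : ℚ)/3230237388259077233637600) := by
  rw [show (60:ℕ) = 59+1 from rfl, harmonic_succ, harmV59]; norm_num
theorem harmV61 : harmonic 61 = ((925372872575832277072279171 : ℚ)/197044480683803711251893600) := by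
  rw [show (61:ℕ) = 60+1 from rfl, harmonic_succ, harmV60]; norm_num
theorem harmV62 : harmonic 62 = ((928551009361054917576341971 : ℚ)/197044480683803711251893600) := by
  rw [show (62:ℕ) = 61+1 from rfl, harmonic_succ, harmV61]; norm_num
theorem harmV63 : harmonic 63 = ((310559566510213034489743057 : ℚ)/65681493561267903750631200) := by
  rw [show (63:ℕ) = 62+1 from rfl, harmonic_succ, harmV62]; norm_num
theorem harmV64 : harmonic 64 = ((623171679694215690971693339 : ℚ)/131362987122535807501262400) := by
  rw [show (64:ℕ) = 63+1 from rfl, harmonic_succ, harmV63]; norm_num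
theorem harmV65 : harmonic 65 = ((625192648726870088010174299 : ℚ)/131362987122535807501262400) := by
  rw [show (65:ℕ) = 64+1 from rfl, harmonic_succ, harmV64]; norm_num
theorem harmV66 : harmonic 66 = ((209060999005535159677640233 : ℚ)/43787662374178602500420800) := by
  rw [show (66:ℕ) = 65+1 from rfl, harmonic_succ, harmV65]; norm_num
theorem harmV67 : harmonic 67 = ((14050874595745034300902316411 : ℚ)/2933773379069966367528193600) := by
  rw [show (67:ℕ) = 66+1 from rfl, harmonic_succ, harmV66]; norm_num
theorem harmV68 : harmonic 68 = ((14094018321907827923954201611 : ℚ)/2933773379069966367528193600) := by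
  rw [show (68:ℕ) = 67+1 from rfl, harmonic_succ, harmV67]; norm_num
theorem harmV69 : harmonic 69 = ((42409610330030873613929048033 : ℚ)/8801320137209899102584580800) := by
  rw [show (69:ℕ) = 68+1 from rfl, harmonic_succ, harmV68]; norm_num
theorem harmV70 : harmonic 70 = ((42535343474848157886823113473 : ℚ)/8801320137209899102584580800) := by
  rw [show (70:ℕ) = 69+1 from rfl, harmonic_succ, harmV69]; norm_num
theorem harmV71 : harmonic 71 = ((3028810706851429109067025637383 : ℚ)/624893729741902836283505236800) := by
  rw [show (71:ℕ) = 70+1 from rfl, harmonic_succ, harmV70]; norm_num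
theorem harmV72 : harmonic 72 = ((9112469359293533278712889630349 : ℚ)/1874681189225708508850515710400) := by
  rw [show (72:ℕ) = 71+1 from rfl, harmonic_succ, harmV71]; norm_num
theorem harmV73 : harmonic 73 = ((667084944417653637854891458725877 : ℚ)/136851726813476721146087646859200) := by
  rw [show (73:ℕ) = 72+1 from rfl, harmonic_succ, harmV72]; norm_num
theorem harmV74 : harmonic 74 = ((668934292077295215167676426926677 : ℚ)/136851726813476721146087646859200) := by
  rw [show (74:ℕ) = 73+1 from rfl, harmonic_succ, harmV73]; norm_num
theorem harmV75 : harmonic 75 = ((670758981768141571449624262218133 : ℚ)/136851726813476721146087646859200) := by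
  rw [show (75:ℕ) = 74+1 from rfl, harmonic_succ, harmV74]; norm_num
theorem harmV76 : harmonic 76 = ((672559662384108370412072783887333 : ℚ)/136851726813476721146087646859200) := by
  rw [show (76:ℕ) = 75+1 from rfl, harmonic_succ, harmV75]; norm_num
theorem harmV77 : harmonic 77 = ((61303359776139104182852056677903 : ℚ)/12441066073952429195098876987200) := by
  rw [show (77:ℕ) = 76+1 from rfl, harmonic_succ, harmV76]; norm_num
theorem harmV78 : harmonic 78 = ((61462860623241058403302042280303 : ℚ)/12441066073952429195098876987200) := by
  rw [show (78:ℕ) = 77+1 from rfl, harmonic_succ, harmV77]; norm_num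
theorem harmV79 : harmonic 79 = ((4868007055309996043055960217131137 : ℚ)/982844219842241906412811281988800) := by
  rw [show (79:ℕ) = 78+1 from rfl, harmonic_succ, harmV78]; norm_num
theorem harmV80 : harmonic 80 = ((4880292608058024066886120358155997 : ℚ)/982844219842241906412811281988800) := by
  rw [show (80:ℕ) = 79+1 from rfl, harmonic_succ, harmV79]; norm_num
theorem harmV81 : harmonic 81 = ((44031838385838021258243173365847173 : ℚ)/8845597978580177157715301537899200) := by
  rw [show (81:ℕ) = 80+1 from rfl, harmonic_succ, harmV80]; norm_num
theorem harmV82 : harmonic 82 = ((44139711531918267321142140457772773 : ℚ)/8845597978580177157715301537899200) := by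
  rw [show (82:ℕ) = 81+1 from rfl, harmonic_succ, harmV81]; norm_num
theorem harmV83 : harmonic 83 = ((3672441655127796364812512959533039359 : ℚ)/734184632222154704090370027645633600) := by
  rw [show (83:ℕ) = 82+1 from rfl, harmonic_succ, harmV82]; norm_num
theorem harmV84 : harmonic 84 = ((3681181948368536301765969745576439759 : ℚ)/734184632222154704090370027645633600) := by
  rw [show (84:ℕ) = 83+1 from rfl, harmonic_succ, harmV83]; norm_num
theorem harmV85 : harmonic 85 = ((3689819414629973415931738804725211919 : ℚ)/734184632222154704090370027645633600) := by
  rw [show (85:ℕ) = 84+1 from rfl, harmonic_succ, harmV84]; norm_num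
theorem harmV86 : harmonic 86 = ((3698356445237207772956045432953649519 : ℚ)/734184632222154704090370027645633600) := by
  rw [show (86:ℕ) = 85+1 from rfl, harmonic_succ, harmV85]; norm_num
theorem harmV87 : harmonic 87 = ((3706795349055853229324900260857622319 : ℚ)/734184632222154704090370027645633600) := by
  rw [show (87:ℕ) = 86+1 from rfl, harmonic_succ, harmV86]; norm_num
theorem harmV88 : harmonic 88 = ((40866521918642154860585199122889549709 : ℚ)/8076030954443701744994070304101969600) := by
  rw [show (88:ℕ) = 87+1 from rfl, harmonic_succ, harmV87]; norm_num
theorem harmV89 : harmonic 89 = ((3645196481713595484337076792241271893701 : ℚ)/718766754945489455304472257065075294400) := by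
  rw [show (89:ℕ) = 88+1 from rfl, harmonic_succ, harmV88]; norm_num
theorem harmV90 : harmonic 90 = ((3653182778990767589396015372875328285861 : ℚ)/718766754945489455304472257065075294400) := by
  rw [show (90:ℕ) = 89+1 from rfl, harmonic_succ, harmV89]; norm_num
theorem harmV91 : harmonic 91 = ((3661081314759399341652108474601318124261 : ℚ)/718766754945489455304472257065075294400) := by
  rw [show (91:ℕ) = 90+1 from rfl, harmonic_succ, harmV90]; norm_num
theorem harmV92 : harmonic 92 = ((3668893996878372053122809260004199377461 : ℚ)/718766754945489455304472257065075294400) := by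
  rw [show (92:ℕ) = 91+1 from rfl, harmonic_succ, harmV91]; norm_num
theorem harmV93 : harmonic 93 = ((3676622671662732154792749821908124918261 : ℚ)/718766754945489455304472257065075294400) := by
  rw [show (93:ℕ) = 92+1 from rfl, harmonic_succ, harmV92]; norm_num
theorem harmV94 : harmonic 94 = ((3684269126502577787295988888472646995861 : ℚ)/718766754945489455304472257065075294400) := by
  rw [show (94:ℕ) = 93+1 from rfl, harmonic_succ, harmV93]; norm_num
theorem harmV95 : harmonic 95 = ((3691835092344109255246562280652279367381 : ℚ)/718766754945489455304472257065075294400) := by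
  rw [show (95:ℕ) = 94+1 from rfl, harmonic_succ, harmV94]; norm_num
theorem harmV96 : harmonic 96 = ((3699322246041458103739317199996707235031 : ℚ)/718766754945489455304472257065075294400) := by
  rw [show (96:ℕ) = 95+1 from rfl, harmonic_succ, harmV95]; norm_num
theorem harmV97 : harmonic 97 = ((359553024620966925518018240656745677092407 : ℚ)/69720375229712477164533808935312303556800) := by
  rw [show (97:ℕ) = 96+1 from rfl, harmonic_succ, harmV96]; norm_num
theorem harmV98 : harmonic 98 = ((360264457021270114060513483605065190394007 : ℚ)/69720375229712477164533808935312303556800) := by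
  rw [show (98:ℕ) = 97+1 from rfl, harmonic_succ, harmV97]; norm_num
theorem harmV99 : harmonic 99 = ((360968703235711654233892612988250163157207 : ℚ)/69720375229712477164533808935312303556800) := by
  rw [show (99:ℕ) = 98+1 from rfl, harmonic_succ, harmV98]; norm_num
theorem harmV100 : harmonic 100 = ((14466636279520351160221518043104131447711 : ℚ)/2788815009188499086581352357412492142272) := by
  rw [show (100:ℕ) = 99+1 from rfl, harmonic_succ, harmV99]; norm_num
theorem harmV101 : harmonic 101 = ((1463919079240743966268954674710929768361083 : ℚ)/281670315928038407744716588098661706369472) := by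
  rw [show (101:ℕ) = 100+1 from rfl, harmonic_succ, harmV100]; norm_num
theorem harmV102 : harmonic 102 = ((1466680552926312970266451896162877432149019 : ℚ)/281670315928038407744716588098661706369472) := by
  rw [show (102:ℕ) = 101+1 from rfl, harmonic_succ, harmV101]; norm_num
theorem harmV103 : harmonic 103 = ((151349767267338274345189261892875037217718429 : ℚ)/29012042540587955997705808574162155756055616) := by
  rw [show (103:ℕ) = 102+1 from rfl, harmonic_succ, harmV102]; norm_num
theorem harmV104 : harmonic 104 = ((151628729214843927768244125436857365638449733 : ℚ)/29012042540587955997705808574162155756055616) := by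
  rw [show (104:ℕ) = 103+1 from rfl, harmonic_succ, harmV103]; norm_num
theorem harmV105 : harmonic 105 = ((759525171909485731983968522830675502275870361 : ℚ)/145060212702939779988529042870810778780278080) := by
  rw [show (105:ℕ) = 104+1 from rfl, harmonic_succ, harmV104]; norm_num
theorem harmV106 : harmonic 106 = ((760893664482154975191407476065305792641722041 : ℚ)/145060212702939779988529042870810778780278080) := by
  rw [show (106:ℕ) = 105+1 from rfl, harmonic_succ, harmV105]; norm_num
theorem harmV107 : harmonic 107 = ((81560682312293522125469128981858530591444536467 : ℚ)/15521442759214556458772607587176753329489754560) := by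
  rw [show (107:ℕ) = 106+1 from rfl, harmonic_succ, harmV106]; norm_num
theorem harmV108 : harmonic 108 = ((81704399374878842092679986459517574603754626787 : ℚ)/15521442759214556458772607587176753329489754560) := by
  rw [show (108:ℕ) = 107+1 from rfl, harmonic_succ, harmV107]; norm_num
theorem harmV109 : harmonic 109 = ((8921300974621008344560891131674592385138744074343 : ℚ)/1691837260754386654006214227002266112914383247040) := by
  rw [show (109:ℕ) = 108+1 from rfl, harmonic_succ, harmV108]; norm_num
theorem harmV110 : harmonic 110 = ((812425573941376284756780362571245808659649778037 : ℚ)/153803387341307877636928566091115101174034840640) := by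
  rw [show (110:ℕ) = 109+1 from rfl, harmonic_succ, harmV109]; norm_num
theorem harmV111 : harmonic 111 = ((813811190043550229600356295599093692454010452277 : ℚ)/153803387341307877636928566091115101174034840640) := by
  rw [show (111:ℕ) = 110+1 from rfl, harmonic_succ, harmV110]; norm_num
theorem harmV112 : harmonic 112 = ((815184434573383335650686014939192934428778620497 : ℚ)/153803387341307877636928566091115101174034840640) := by
  rw [show (112:ℕ) = 111+1 from rfl, harmonic_succ, harmV111]; norm_num
theorem harmV113 : harmonic 113 = ((92269644494133624806164448254219916691626018956801 : ℚ)/17379782769567790172972927968296006432665936992320) := by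
  rw [show (113:ℕ) = 112+1 from rfl, harmonic_succ, harmV112]; norm_num
theorem harmV114 : harmonic 114 = ((92422098728954394895401052885520758853316071035681 : ℚ)/17379782769567790172972927968296006432665936992320) := by
  rw [show (114:ℕ) = 113+1 from rfl, harmonic_succ, harmV113]; norm_num
theorem harmV115 : harmonic 115 = ((92573227274776723505600817476549419778817513966049 : ℚ)/17379782769567790172972927968296006432665936992320) := by
  rw [show (115:ℕ) = 114+1 from rfl, harmonic_succ, harmV114]; norm_num
theorem harmV116 : harmonic 116 = ((92723052988307480317436790993517488799788772043569 : ℚ)/17379782769567790172972927968296006432665936992320) := by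
  rw [show (116:ℕ) = 115+1 from rfl, harmonic_succ, harmV115]; norm_num
theorem harmV117 : harmonic 117 = ((92871598140184128096692969865041386290666258684529 : ℚ)/17379782769567790172972927968296006432665936992320) := by
  rw [show (117:ℕ) = 116+1 from rfl, harmonic_succ, harmV116]; norm_num
theorem harmV118 : harmonic 118 = ((93018884434841482250701215017315081260434614082769 : ℚ)/17379782769567790172972927968296006432665936992320) := by
  rw [show (118:ℕ) = 117+1 from rfl, harmonic_succ, harmV117]; norm_num
theorem harmV119 : harmonic 119 = ((93164933029543732588289222815367988877515840444049 : ℚ)/17379782769567790172972927968296006432665936992320) := by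
  rw [show (119:ℕ) = 118+1 from rfl, harmonic_succ, harmV118]; norm_num
theorem harmV120 : harmonic 120 = ((18661952910524692834612799443020757786224277983797 : ℚ)/3475956553913558034594585593659201286533187398464) := by
  rw [show (120:ℕ) = 119+1 from rfl, harmonic_succ, harmV119]; norm_num
theorem harmV121 : harmonic 121 = ((2261572258727401391022743318199170893419670823437901 : ℚ)/420590743023540522185944856832763355670515675214144) := by
  rw [show (121:ℕ) = 120+1 from rfl, harmonic_succ, harmV120]; norm_num
theorem harmV122 : harmonic 122 = ((2265019723834151723171808439976488625843199640447853 : ℚ)/420590743023540522185944856832763355670515675214144) := by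
  rw [show (122:ℕ) = 121+1 from rfl, harmonic_succ, harmV121]; norm_num
theorem harmV123 : harmonic 123 = ((2268439160769302459124539698975128978328325784148781 : ℚ)/420590743023540522185944856832763355670515675214144) := by
  rw [show (123:ℕ) = 122+1 from rfl, harmonic_succ, harmV122]; norm_num
theorem harmV124 : harmonic 124 = ((2271831021600137463335716673627006102164378329916637 : ℚ)/420590743023540522185944856832763355670515675214144) := by
  rw [show (124:ℕ) = 123+1 from rfl, harmonic_succ, harmV123]; norm_num
theorem harmV125 : harmonic 125 = ((284399468443040723439150529060208526126217806914793769 : ℚ)/52573842877942565273243107104095419458814459401768000) := by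
  rw [show (125:ℕ) = 124+1 from rfl, harmonic_succ, harmV124]; norm_num
theorem harmV126 : harmonic 126 = ((284816721164294235861954045783256902471129032783061769 : ℚ)/52573842877942565273243107104095419458814459401768000) := by
  rw [show (126:ℕ) = 125+1 from rfl, harmonic_succ, harmV125]; norm_num
theorem harmV127 : harmonic 127 = ((36224297430743310519741406921577722033292201622850612663 : ℚ)/6676878045498705789701874602220118271269436344024536000) := by
  rw [show (127:ℕ) = 126+1 from rfl, harmonic_succ, harmV126]; norm_num
theorem harmV128 : harmonic 128 = ((72552921080947538317446905633815133414572988188576608701 : ℚ)/13353756090997411579403749204440236542538872688049072000) := by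
  rw [show (128:ℕ) = 127+1 from rfl, harmonic_succ, harmV127]; norm_num
theorem harmV129 : harmonic 129 = ((72656438570025037632015926945477460829631429062127376701 : ℚ)/13353756090997411579403749204440236542538872688049072000) := by
  rw [show (129:ℕ) = 128+1 from rfl, harmonic_succ, harmV128]; norm_num
theorem harmV130 : harmonic 130 = ((72759159770725017721088263477819308803035574236650831101 : ℚ)/13353756090997411579403749204440236542538872688049072000) := by
  rw [show (130:ℕ) = 129+1 from rfl, harmonic_succ, harmV129]; norm_num
theorem harmV131 : harmonic 131 = ((9544803686055974733041966264798769689740199097689307946231 : ℚ)/1749342047920660916901891145781670987072592322134428432000) := by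
  rw [show (131:ℕ) = 130+1 from rfl, harmonic_succ, harmV130]; norm_num
theorem harmV132 : harmonic 132 = ((9558056277328100952109404834084994469945294494069114222231 : ℚ)/1749342047920660916901891145781670987072592322134428432000) := by
  rw [show (132:ℕ) = 131+1 from rfl, harmonic_succ, harmV131]; norm_num
theorem harmV133 : harmonic 133 = ((9571209225056827725920697248714931845787945564160350526231 : ℚ)/1749342047920660916901891145781670987072592322134428432000) := by
  rw [show (133:ℕ) = 132+1 from rfl, harmonic_succ, harmV132]; norm_num
theorem harmV134 : harmonic 134 = ((9584264016459220717837875540847630883004905208355383574231 : ℚ)/1749342047920660916901891145781670987072592322134428432000) := by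
  rw [show (134:ℕ) = 133+1 from rfl, harmonic_succ, harmV133]; norm_num
theorem harmV135 : harmonic 135 = ((9597222105703077465370482141927495112538776262593416377431 : ℚ)/1749342047920660916901891145781670987072592322134428432000) := by
  rw [show (135:ℕ) = 134+1 from rfl, harmonic_succ, harmV134]; norm_num
theorem harmV136 : harmonic 136 = ((9610084914878964677994760753293536810973133559079698939431 : ℚ)/1749342047920660916901891145781670987072592322134428432000) := by
  rw [show (136:ℕ) = 135+1 from rfl, harmonic_succ, harmV135]; norm_num
theorem harmV137 : harmonic 137 = ((1318330975386338821802184114346996214090391889916053183134047 : ℚ)/239659860565130545615559086972088925228945148132416695184000) := by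
  rw [show (137:ℕ) = 136+1 from rfl, harmonic_succ, harmV136]; norm_num
theorem harmV138 : harmonic 138 = ((1320067641042607883726934542513460626592050912728606927302047 : ℚ)/239659860565130545615559086972088925228945148132416695184000) := by
  rw [show (138:ℕ) = 137+1 from rfl, harmonic_succ, harmV137]; norm_num
theorem harmV139 : harmonic 139 = ((183729061965487626383659460496343116021524022017408779590168533 : ℚ)/33312720618553145840562713089120360606823375590405920630576000) := by
  rw [show (139:ℕ) = 138+1 from rfl, harmonic_succ, harmV138]; norm_num
theorem harmV140 : harmonic 140 = ((183967009969905863139663479875551118597287046128768821880386933 : ℚ)/33312720618553145840562713089120360606823375590405920630576000) := by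
  rw [show (140:ℕ) = 139+1 from rfl, harmonic_succ, harmV139]; norm_num
theorem harmV141 : harmonic 141 = ((184203270399824679776830591315899489949108488508842622735922933 : ℚ)/33312720618553145840562713089120360606823375590405920630576000) := by
  rw [show (141:ℕ) = 140+1 from rfl, harmonic_succ, harmV140]; norm_num
theorem harmV142 : harmonic 142 = ((184437867023898997705285258309484844601269216505958157388250933 : ℚ)/33312720618553145840562713089120360606823375590405920630576000) := by
  rw [show (142:ℕ) = 141+1 from rfl, harmonic_succ, harmV141]; norm_num
theorem harmV143 : harmonic 143 = ((184670823112140628095778703855562609360757491859737219770282933 : ℚ)/33312720618553145840562713089120360606823375590405920630576000) := by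
  rw [show (143:ℕ) = 142+1 from rfl, harmonic_succ, harmV142]; norm_num
theorem harmV144 : harmonic 144 = ((184902161449769469386338167140903722976082654190226149774661933 : ℚ)/33312720618553145840562713089120360606823375590405920630576000) := by
  rw [show (144:ℕ) = 143+1 from rfl, harmonic_succ, harmV143]; norm_num
theorem harmV145 : harmonic 145 = ((185131904350587077288686875507035587531991780918435845779010733 : ℚ)/33312720618553145840562713089120360606823375590405920630576000) := by
  rw [show (145:ℕ) = 144+1 from rfl, harmonic_succ, harmV144]; norm_num
theorem harmV146 : harmonic 146 = ((185360073669892235821841414637782987262175502669055064413466733 : ℚ)/33312720618553145840562713089120360606823375590405920630576000) := by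
  rw [show (146:ℕ) = 145+1 from rfl, harmonic_succ, harmV145]; norm_num
theorem harmV147 : harmonic 147 = ((185586690816957223208511909284647751620045049441778914213674733 : ℚ)/33312720618553145840562713089120360606823375590405920630576000) := by
  rw [show (147:ℕ) = 146+1 from rfl, harmonic_succ, harmV146]; norm_num
theorem harmV148 : harmonic 148 = ((185811776767082582302029224913628294597118180357930305569286733 : ℚ)/33312720618553145840562713089120360606823375590405920630576000) := by
  rw [show (148:ℕ) = 147+1 from rfl, harmonic_succ, harmV147]; norm_num
theorem harmV149 : harmonic 149 = ((27719267458913857908842917225219736255577432248922021450454299217 : ℚ)/4963595372164418730243844250278933730416682962970482173955824000) := by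
  rw [show (149:ℕ) = 148+1 from rfl, harmonic_succ, harmV148]; norm_num
theorem harmV150 : harmonic 150 = ((27752358094728287367044542853554929147113543468675157998280671377 : ℚ)/4963595372164418730243844250278933730416682962970482173955824000) := by
  rw [show (150:ℕ) = 149+1 from rfl, harmonic_succ, harmV149]; norm_num
theorem harmV151 : harmonic 151 = ((4195569667676135811153969815137073234944561746732919339914337201927 : ℚ)/749502901196827228266820481792118993292919127408542808267329424000) := by
  rw [show (151:ℕ) = 150+1 from rfl, harmonic_succ, harmV150]; norm_num
theorem harmV152 : harmonic 152 = ((4200500607815588621866251528833074017795173056781659753126622263927 : ℚ)/749502901196827228266820481792118993292919127408542808267329424000) := by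
  rw [show (152:ℕ) = 151+1 from rfl, harmonic_succ, harmV151]; norm_num
theorem harmV153 : harmonic 153 = ((4205399319588116904403943165968970220365715011862761340108761671927 : ℚ)/749502901196827228266820481792118993292919127408542808267329424000) := by
  rw [show (153:ℕ) = 152+1 from rfl, harmonic_succ, harmV152]; norm_num
theorem harmV154 : harmonic 154 = ((4210266221543940457834247195071516447594889811391388241461146927927 : ℚ)/749502901196827228266820481792118993292919127408542808267329424000) := by
  rw [show (154:ℕ) = 153+1 from rfl, harmonic_succ, harmV153]; norm_num
theorem harmV155 : harmonic 155 = ((4215101724132307085113387972373401086261295741245636904740290988727 : ℚ)/749502901196827228266820481792118993292919127408542808267329424000) := by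
  rw [show (155:ℕ) = 154+1 from rfl, harmonic_succ, harmV154]; norm_num
theorem harmV156 : harmonic 156 = ((324608171531477678750471077007910595882670145346019674530450060979 : ℚ)/57654069322832863712832344753239922560993779031426369866717648000) := by
  rw [show (156:ℕ) = 155+1 from rfl, harmonic_succ, harmV155]; norm_num
theorem harmV157 : harmonic 157 = ((51021136999764828427536791434995203476140206598356515271147377221703 : ℚ)/9051688883684759602914678126258667842076023307933940069074670736000) := by
  rw [show (157:ℕ) = 156+1 from rfl, harmonic_succ, harmV156]; norm_num
theorem harmV158 : harmonic 158 = ((51078426169914731969327390663642410234634358644609261727280761213703 : ℚ)/9051688883684759602914678126258667842076023307933940069074670736000) := by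
  rw [show (158:ℕ) = 157+1 from rfl, harmonic_succ, harmV157]; norm_num
theorem harmV159 : harmonic 159 = ((51135355030818409702679055305945923868861251872961047513878715117703 : ℚ)/9051688883684759602914678126258667842076023307933940069074670736000) := by
  rw [show (159:ℕ) = 158+1 from rfl, harmonic_succ, harmV158]; norm_num
theorem harmV160 : harmonic 160 = ((51191928086341439450197272044235040542874227018635634639310431809803 : ℚ)/9051688883684759602914678126258667842076023307933940069074670736000) := by
  rw [show (160:ℕ) = 159+1 from rfl, harmonic_succ, harmV159]; norm_num
theorem harmV161 : harmonic 161 = ((51248149756426437957047673771727330405247370020548267807441330385803 : ℚ)/9051688883684759602914678126258667842076023307933940069074670736000) := by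
  rw [show (161:ℕ) = 160+1 from rfl, harmonic_succ, harmV160]; norm_num
theorem harmV162 : harmonic 162 = ((17101341459721744256470448208119518916650514334643525359824218504601 : ℚ)/3017229627894919867638226042086222614025341102644646689691556912000) := by
  rw [show (162:ℕ) = 161+1 from rfl, harmonic_succ, harmV161]; norm_num
theorem harmV163 : harmonic 163 = ((2790535887562539233672321283965567806028059177649539280341039173161963 : ℚ)/491808429346871938425030844860054286086130599731077410419723776656000) := by
  rw [show (163:ℕ) = 162+1 from rfl, harmonic_succ, harmV162]; norm_num
theorem harmV164 : harmonic 164 = ((2793534719448800647931010496434226673626145339843021459672866757165963 : ℚ)/491808429346871938425030844860054286086130599731077410419723776656000) := by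
  rw [show (164:ℕ) = 163+1 from rfl, harmonic_succ, harmV163]; norm_num
theorem harmV165 : harmonic 165 = ((2796515376596357447557828865190954275360000676811088595493592355812363 : ℚ)/491808429346871938425030844860054286086130599731077410419723776656000) := by
  rw [show (165:ℕ) = 164+1 from rfl, harmonic_succ, harmV164]; norm_num
theorem harmV166 : harmonic 166 = ((2799478077977965109837497725702159421661724355122721591941903944828363 : ℚ)/491808429346871938425030844860054286086130599731077410419723776656000) := by
  rw [show (166:ℕ) = 165+1 from rfl, harmonic_succ, harmV165]; norm_num
theorem harmV167 : harmonic 167 = ((468004647451667045281287151037120677703594097905225583264717682562992621 : ℚ)/82132007700927613716980151091629065776383810155089927540093870701552000) := by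
  rw [show (167:ℕ) = 166+1 from rfl, harmonic_succ, harmV166]; norm_num
theorem harmV168 : harmonic 168 = ((468493528449886852505792985269808945952263049156148737595313479412406621 : ℚ)/82132007700927613716980151091629065776383810155089927540093870701552000) := by
  rw [show (168:ℕ) = 167+1 from rfl, harmonic_succ, harmV167]; norm_num
theorem harmV169 : harmonic 169 = ((79257538315731805687195994661689340931708839117544226581148071891398270949 : ℚ)/13880309301456766718169645534485312116208863916210197754275864148562288000) := by
  rw [show (169:ℕ) = 168+1 from rfl, harmonic_succ, harmV168]; norm_num
theorem harmV170 : harmonic 170 = ((79339187193975669020832286694245136885333597140580757156173224033448637349 : ℚ)/13880309301456766718169645534485312116208863916210197754275864148562288000) := by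
  rw [show (170:ℕ) = 169+1 from rfl, harmonic_succ, harmV169]; norm_num
theorem harmV171 : harmonic 171 = ((79420358593399392802809886960528676722270491081611226148888287566481165349 : ℚ)/13880309301456766718169645534485312116208863916210197754275864148562288000) := by
  rw [show (171:ℕ) = 170+1 from rfl, harmonic_succ, harmV170]; norm_num
theorem harmV172 : harmonic 172 = ((79501058066082280981403896527589637839225193778798494740482914683623969349 : ℚ)/13880309301456766718169645534485312116208863916210197754275864148562288000) := by
  rw [show (172:ℕ) = 171+1 from rfl, harmonic_succ, harmV171]; norm_num
theorem harmV173 : harmonic 173 = ((13767563354733691376501043744807492658302167387648349787857820104415508985377 : ℚ)/2401293509152020642243348677465958996104133457504364211489724497701275824000) := by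
  rw [show (173:ℕ) = 172+1 from rfl, harmonic_succ, harmV172]; norm_num
theorem harmV174 : harmonic 174 = ((13781363892142611035364511265942354491613110683381133490222703578540228961377 : ℚ)/2401293509152020642243348677465958996104133457504364211489724497701275824000) := by
  rw [show (174:ℕ) = 173+1 from rfl, harmonic_succ, harmV173]; norm_num
theorem harmV175 : harmonic 175 = ((13795085569337765439034473258385017114447991445995444142859787718527093394657 : ℚ)/2401293509152020642243348677465958996104133457504364211489724497701275824000) := by
  rw [show (175:ℕ) = 174+1 from rfl, harmonic_succ, harmV174]; norm_num
theorem harmV176 : harmonic 176 = ((13808729282457947374501765012234255517834946749731264394061433880445850643657 : ℚ)/2401293509152020642243348677465958996104133457504364211489724497701275824000) := by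
  rw [show (176:ℕ) = 175+1 from rfl, harmonic_succ, harmV175]; norm_num
theorem harmV177 : harmonic 177 = ((13822295912453156530672631388943102743801636769265187355708268482127778755657 : ℚ)/2401293509152020642243348677465958996104133457504364211489724497701275824000) := by
  rw [show (177:ℕ) = 176+1 from rfl, harmonic_succ, harmV176]; norm_num
theorem harmV178 : harmonic 178 = ((13835786325425920691584110875895158693217952125768020862514390529867673563657 : ℚ)/2401293509152020642243348677465958996104133457504364211489724497701275824000) := by
  rw [show (178:ℕ) = 177+1 from rfl, harmonic_succ, harmV177]; norm_num
theorem harmV179 : harmonic 179 = ((2479007045760391824435799195462699365082117563969980098601565629344014843718603 : ℚ)/429831538138211694961559413266406660302639888893281193856660685088528372496000) := by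
  rw [show (179:ℕ) = 178+1 from rfl, harmonic_succ, harmV178]; norm_num
theorem harmV180 : harmonic 180 = ((2481394998750048556074474525536401624306021118908276105234102633150062223565803 : ℚ)/429831538138211694961559413266406660302639888893281193856660685088528372496000) := by
  rw [show (180:ℕ) = 179+1 from rfl, harmonic_succ, harmV179]; norm_num

lemma lnUB (n : ℕ) (hn : 0 < n) {y r : ℝ} (hy : 0 < y)
    (h1 : 0 ≤ 1 + r / n) (h : y ≤ (1 + r / n) ^ n) : Real.log y ≤ r := by
  have hn' : ((n:ℝ)) ≠ 0 := Nat.cast_ne_zero.mpr hn.ne'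
  rw [Real.log_le_iff_le_exp hy]
  calc y ≤ (1 + r/n)^n := h
    _ ≤ (Real.exp (r/n))^n := by
        apply pow_le_pow_left₀ h1 _ n
        linarith [Real.add_one_le_exp (r/n)]
    _ = Real.exp r := by
        rw [← Real.exp_nat_mul]
        congr 1
        field_simp

lemma lnLB (n : ℕ) (hn : 0 < n) {y r : ℝ} (hy : 0 < y)
    (h1 : 0 < 1 - r / n) (h : 1 ≤ y * (1 - r / n) ^ n) : r ≤ Real.log y := by
  have hn' : ((n:ℝ)) ≠ 0 := Nat.cast_ne_zero.mpr hn.ne'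
  rw [Real.le_log_iff_exp_le hy]
  have h2 : 1 - r/n ≤ Real.exp (-(r/n)) := by linarith [Real.add_one_le_exp (-(r/n))]
  have h4 : Real.exp (r/n) ≤ (1 - r/n)⁻¹ := by
    rw [inv_eq_one_div, le_div_iff₀ h1]
    calc Real.exp (r/n) * (1 - r/n) ≤ Real.exp (r/n) * Real.exp (-(r/n)) :=
          mul_le_mul_of_nonneg_left h2 (Real.exp_pos _).le
      _ = 1 := by rw [← Real.exp_add]; simp
  have hp : 0 < (1 - r/n)^n := pow_pos h1 n
  calc Real.exp r = (Real.exp (r/n))^n := by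
        rw [← Real.exp_nat_mul]; congr 1; field_simp
    _ ≤ ((1 - r/n)⁻¹)^n := pow_le_pow_left₀ (Real.exp_pos _).le h4 n
    _ = ((1 - r/n)^n)⁻¹ := by rw [inv_pow]
    _ ≤ y := by rw [inv_eq_one_div, div_le_iff₀ hp]; linarith [h]

lemma log48_ge : ((7742381947 : ℝ)/2000000000) ≤ Real.log 48 := by
  have hr : (((12670471 : ℝ)/31250000)) ≤ Real.log ((3:ℝ)/2) :=
    lnLB 8192 (by norm_num) (by norm_num) (by norm_num) (by rw [show (8192:ℕ) = 16*16*16*2 from rfl, pow_mul, pow_mul, pow_mul]; norm_num)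
  have h48 : (48:ℝ) = 2^5 * (3/2) := by norm_num
  rw [h48, Real.log_mul (by norm_num) (by norm_num), Real.log_pow]
  have := Real.log_two_gt_d9
  push_cast
  linarith

lemma log48_le : Real.log 48 ≤ ((483901381 : ℝ)/125000000) := by
  have hr : Real.log ((3:ℝ)/2) ≤ (((50684393 : ℝ)/125000000)) :=
    lnUB 8192 (by norm_num) (by norm_num) (by norm_num) (by rw [show (8192:ℕ) = 16*16*16*2 from rfl, pow_mul, pow_mul, pow_mul]; norm_num)
  have h48 : (48:ℝ) = 2^5 * (3/2) := by norm_num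
  rw [h48, Real.log_mul (by norm_num) (by norm_num), Real.log_pow]
  have := Real.log_two_lt_d9
  push_cast
  linarith

theorem key2 : (2 : ℝ) * Real.log 2 * ((10782212182893138320231 : ℝ)/63245806209101973600) ≤ 48 * Real.log 48 * (((harmonic 2 : ℚ) : ℝ) + ((harmonic 2 : ℚ) : ℝ) * 2 - 2) := by
  have hs : Real.log ((2:ℝ)/48) ≤ (((-655677119 : ℝ)/250000000)) :=
    lnUB 8 (by norm_num) (by norm_num) (by norm_num) (by norm_num)
  rw [Real.log_div (by norm_num) (by norm_num)] at hs
  have h1 := log48_ge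
  have h2 := log48_le
  rw [harmV2]
  push_cast
  linarith only [hs, h1, h2]

theorem key3 : (3 : ℝ) * Real.log 3 * ((10782212182893138320231 : ℝ)/63245806209101973600) ≤ 48 * Real.log 48 * (((harmonic 3 : ℚ) : ℝ) + ((harmonic 3 : ℚ) : ℝ) * 3 - 3) := by
  have hs : Real.log ((3:ℝ)/48) ≤ (((-2343145749 : ℝ)/1000000000)) :=
    lnUB 8 (by norm_num) (by norm_num) (by norm_num) (by norm_num)
  rw [Real.log_div (by norm_num) (by norm_num)] at hs
  have h1 := log48_ge
  have h2 := log48_le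
  rw [harmV3]
  push_cast
  linarith only [hs, h1, h2]

theorem key4 : (4 : ℝ) * Real.log 4 * ((10782212182893138320231 : ℝ)/63245806209101973600) ≤ 48 * Real.log 48 * (((harmonic 4 : ℚ) : ℝ) + ((harmonic 4 : ℚ) : ℝ) * 4 - 4) := by
  have hs : Real.log ((4:ℝ)/48) ≤ (((-2136022013 : ℝ)/1000000000)) :=
    lnUB 8 (by norm_num) (by norm_num) (by norm_num) (by norm_num)
  rw [Real.log_div (by norm_num) (by norm_num)] at hs
  have h1 := log48_ge
  have h2 := log48_le
  rw [harmV4]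
  push_cast
  linarith only [hs, h1, h2]

theorem key5 : (5 : ℝ) * Real.log 5 * ((10782212182893138320231 : ℝ)/63245806209101973600) ≤ 48 * Real.log 48 * (((harmonic 5 : ℚ) : ℝ) + ((harmonic 5 : ℚ) : ℝ) * 5 - 5) := by
  have hs : Real.log ((5:ℝ)/48) ≤ (((-2109175299 : ℝ)/1000000000)) :=
    lnUB 16 (by norm_num) (by norm_num) (by norm_num) (by norm_num)
  rw [Real.log_div (by norm_num) (by norm_num)] at hs
  have h1 := log48_ge
  have h2 := log48_le
  rw [harmV5]
  push_cast
  linarith only [hs, h1, h2]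

theorem key6 : (6 : ℝ) * Real.log 6 * ((10782212182893138320231 : ℝ)/63245806209101973600) ≤ 48 * Real.log 48 * (((harmonic 6 : ℚ) : ℝ) + ((harmonic 6 : ℚ) : ℝ) * 6 - 6) := by
  have hs : Real.log ((6:ℝ)/48) ≤ (((-487495679 : ℝ)/250000000)) :=
    lnUB 16 (by norm_num) (by norm_num) (by norm_num) (by norm_num)
  rw [Real.log_div (by norm_num) (by norm_num)] at hs
  have h1 := log48_ge
  have h2 := log48_le
  rw [harmV6]
  push_cast
  linarith only [hs, h1, h2]

theorem key7 : (7 : ℝ) * Real.log 7 * ((10782212182893138320231 : ℝ)/63245806209101973600) ≤ 48 * Real.log 48 * (((harmonic 7 : ℚ) : ℝ) + ((harmonic 7 : ℚ) : ℝ) * 7 - 7) := by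
  have hs : Real.log ((7:ℝ)/48) ≤ (((-1813964809 : ℝ)/1000000000)) :=
    lnUB 16 (by norm_num) (by norm_num) (by norm_num) (by norm_num)
  rw [Real.log_div (by norm_num) (by norm_num)] at hs
  have h1 := log48_ge
  have h2 := log48_le
  rw [harmV7]
  push_cast
  linarith only [hs, h1, h2]

theorem key8 : (8 : ℝ) * Real.log 8 * ((10782212182893138320231 : ℝ)/63245806209101973600) ≤ 48 * Real.log 48 * (((harmonic 8 : ℚ) : ℝ) + ((harmonic 8 : ℚ) : ℝ) * 8 - 8) := by
  have hs : Real.log ((8:ℝ)/48) ≤ (((-52971151 : ℝ)/31250000)) :=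
    lnUB 16 (by norm_num) (by norm_num) (by norm_num) (by norm_num)
  rw [Real.log_div (by norm_num) (by norm_num)] at hs
  have h1 := log48_ge
  have h2 := log48_le
  rw [harmV8]
  push_cast
  linarith only [hs, h1, h2]

theorem key9 : (9 : ℝ) * Real.log 9 * ((10782212182893138320231 : ℝ)/63245806209101973600) ≤ 48 * Real.log 48 * (((harmonic 9 : ℚ) : ℝ) + ((harmonic 9 : ℚ) : ℝ) * 9 - 9) := by
  have hs : Real.log ((9:ℝ)/48) ≤ (((-397345863 : ℝ)/250000000)) :=
    lnUB 16 (by norm_num) (by norm_num) (by norm_num) (by norm_num)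
  rw [Real.log_div (by norm_num) (by norm_num)] at hs
  have h1 := log48_ge
  have h2 := log48_le
  rw [harmV9]
  push_cast
  linarith only [hs, h1, h2]

theorem key10 : (10 : ℝ) * Real.log 10 * ((10782212182893138320231 : ℝ)/63245806209101973600) ≤ 48 * Real.log 48 * (((harmonic 10 : ℚ) : ℝ) + ((harmonic 10 : ℚ) : ℝ) * 10 - 10) := by
  have hs : Real.log ((10:ℝ)/48) ≤ (((-1494175949 : ℝ)/1000000000)) :=
    lnUB 16 (by norm_num) (by norm_num) (by norm_num) (by norm_num)
  rw [Real.log_div (by norm_num) (by norm_num)] at hs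
  have h1 := log48_ge
  have h2 := log48_le
  rw [harmV10]
  push_cast
  linarith only [hs, h1, h2]

theorem key11 : (11 : ℝ) * Real.log 11 * ((10782212182893138320231 : ℝ)/63245806209101973600) ≤ 48 * Real.log 48 * (((harmonic 11 : ℚ) : ℝ) + ((harmonic 11 : ℚ) : ℝ) * 11 - 11) := by
  have hs : Real.log ((11:ℝ)/48) ≤ (((-87969283 : ℝ)/62500000)) :=
    lnUB 16 (by norm_num) (by norm_num) (by norm_num) (by norm_num)
  rw [Real.log_div (by norm_num) (by norm_num)] at hs
  have h1 := log48_ge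
  have h2 := log48_le
  rw [harmV11]
  push_cast
  linarith only [hs, h1, h2]

theorem key12 : (12 : ℝ) * Real.log 12 * ((10782212182893138320231 : ℝ)/63245806209101973600) ≤ 48 * Real.log 48 * (((harmonic 12 : ℚ) : ℝ) + ((harmonic 12 : ℚ) : ℝ) * 12 - 12) := by
  have hs : Real.log ((12:ℝ)/48) ≤ (((-1327935307 : ℝ)/1000000000)) :=
    lnUB 16 (by norm_num) (by norm_num) (by norm_num) (by norm_num)
  rw [Real.log_div (by norm_num) (by norm_num)] at hs
  have h1 := log48_ge
  have h2 := log48_le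
  rw [harmV12]
  push_cast
  linarith only [hs, h1, h2]

theorem key13 : (13 : ℝ) * Real.log 13 * ((10782212182893138320231 : ℝ)/63245806209101973600) ≤ 48 * Real.log 48 * (((harmonic 13 : ℚ) : ℝ) + ((harmonic 13 : ℚ) : ℝ) * 13 - 13) := by
  have hs : Real.log ((13:ℝ)/48) ≤ (((-1254351917 : ℝ)/1000000000)) :=
    lnUB 16 (by norm_num) (by norm_num) (by norm_num) (by norm_num)
  rw [Real.log_div (by norm_num) (by norm_num)] at hs
  have h1 := log48_ge
  have h2 := log48_le
  rw [harmV13]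
  push_cast
  linarith only [hs, h1, h2]

theorem key14 : (14 : ℝ) * Real.log 14 * ((10782212182893138320231 : ℝ)/63245806209101973600) ≤ 48 * Real.log 48 * (((harmonic 14 : ℚ) : ℝ) + ((harmonic 14 : ℚ) : ℝ) * 14 - 14) := by
  have hs : Real.log ((14:ℝ)/48) ≤ (((-1185895373 : ℝ)/1000000000)) :=
    lnUB 16 (by norm_num) (by norm_num) (by norm_num) (by norm_num)
  rw [Real.log_div (by norm_num) (by norm_num)] at hs
  have h1 := log48_ge
  have h2 := log48_le
  rw [harmV14]
  push_cast
  linarith only [hs, h1, h2]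

theorem key15 : (15 : ℝ) * Real.log 15 * ((10782212182893138320231 : ℝ)/63245806209101973600) ≤ 48 * Real.log 48 * (((harmonic 15 : ℚ) : ℝ) + ((harmonic 15 : ℚ) : ℝ) * 15 - 15) := by
  have hs : Real.log ((15:ℝ)/48) ≤ (((-70117389 : ℝ)/62500000)) :=
    lnUB 16 (by norm_num) (by norm_num) (by norm_num) (by norm_num)
  rw [Real.log_div (by norm_num) (by norm_num)] at hs
  have h1 := log48_ge
  have h2 := log48_le
  rw [harmV15]
  push_cast
  linarith only [hs, h1, h2]

theorem key16 : (16 : ℝ) * Real.log 16 * ((10782212182893138320231 : ℝ)/63245806209101973600) ≤ 48 * Real.log 48 * (((harmonic 16 : ℚ) : ℝ) + ((harmonic 16 : ℚ) : ℝ) * 16 - 16) := by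
  have hs : Real.log ((16:ℝ)/48) ≤ (((-33179493 : ℝ)/31250000)) :=
    lnUB 16 (by norm_num) (by norm_num) (by norm_num) (by norm_num)
  rw [Real.log_div (by norm_num) (by norm_num)] at hs
  have h1 := log48_ge
  have h2 := log48_le
  rw [harmV16]
  push_cast
  linarith only [hs, h1, h2]

theorem key17 : (17 : ℝ) * Real.log 17 * ((10782212182893138320231 : ℝ)/63245806209101973600) ≤ 48 * Real.log 48 * (((harmonic 17 : ℚ) : ℝ) + ((harmonic 17 : ℚ) : ℝ) * 17 - 17) := by
  have hs : Real.log ((17:ℝ)/48) ≤ (((-502517387 : ℝ)/500000000)) :=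
    lnUB 16 (by norm_num) (by norm_num) (by norm_num) (by norm_num)
  rw [Real.log_div (by norm_num) (by norm_num)] at hs
  have h1 := log48_ge
  have h2 := log48_le
  rw [harmV17]
  push_cast
  linarith only [hs, h1, h2]

theorem key18 : (18 : ℝ) * Real.log 18 * ((10782212182893138320231 : ℝ)/63245806209101973600) ≤ 48 * Real.log 48 * (((harmonic 18 : ℚ) : ℝ) + ((harmonic 18 : ℚ) : ℝ) * 18 - 18) := by
  have hs : Real.log ((18:ℝ)/48) ≤ (((-19027419 : ℝ)/20000000)) :=
    lnUB 16 (by norm_num) (by norm_num) (by norm_num) (by norm_num)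
  rw [Real.log_div (by norm_num) (by norm_num)] at hs
  have h1 := log48_ge
  have h2 := log48_le
  rw [harmV18]
  push_cast
  linarith only [hs, h1, h2]

theorem key19 : (19 : ℝ) * Real.log 19 * ((10782212182893138320231 : ℝ)/63245806209101973600) ≤ 48 * Real.log 48 * (((harmonic 19 : ℚ) : ℝ) + ((harmonic 19 : ℚ) : ℝ) * 19 - 19) := by
  have hs : Real.log ((19:ℝ)/48) ≤ (((-450216293 : ℝ)/500000000)) :=
    lnUB 16 (by norm_num) (by norm_num) (by norm_num) (by norm_num)
  rw [Real.log_div (by norm_num) (by norm_num)] at hs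
  have h1 := log48_ge
  have h2 := log48_le
  rw [harmV19]
  push_cast
  linarith only [hs, h1, h2]

theorem key20 : (20 : ℝ) * Real.log 20 * ((10782212182893138320231 : ℝ)/63245806209101973600) ≤ 48 * Real.log 48 * (((harmonic 20 : ℚ) : ℝ) + ((harmonic 20 : ℚ) : ℝ) * 20 - 20) := by
  have hs : Real.log ((20:ℝ)/48) ≤ (((-851948251 : ℝ)/1000000000)) :=
    lnUB 16 (by norm_num) (by norm_num) (by norm_num) (by norm_num)
  rw [Real.log_div (by norm_num) (by norm_num)] at hs
  have h1 := log48_ge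
  have h2 := log48_le
  rw [harmV20]
  push_cast
  linarith only [hs, h1, h2]

theorem key21 : (21 : ℝ) * Real.log 21 * ((10782212182893138320231 : ℝ)/63245806209101973600) ≤ 48 * Real.log 48 * (((harmonic 21 : ℚ) : ℝ) + ((harmonic 21 : ℚ) : ℝ) * 21 - 21) := by
  have hs : Real.log ((21:ℝ)/48) ≤ (((-161137101 : ℝ)/200000000)) :=
    lnUB 16 (by norm_num) (by norm_num) (by norm_num) (by norm_num)
  rw [Real.log_div (by norm_num) (by norm_num)] at hs
  have h1 := log48_ge
  have h2 := log48_le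
  rw [harmV21]
  push_cast
  linarith only [hs, h1, h2]

theorem key22 : (22 : ℝ) * Real.log 22 * ((10782212182893138320231 : ℝ)/63245806209101973600) ≤ 48 * Real.log 48 * (((harmonic 22 : ℚ) : ℝ) + ((harmonic 22 : ℚ) : ℝ) * 22 - 22) := by
  have hs : Real.log ((22:ℝ)/48) ≤ (((-152288747 : ℝ)/200000000)) :=
    lnUB 16 (by norm_num) (by norm_num) (by norm_num) (by norm_num)
  rw [Real.log_div (by norm_num) (by norm_num)] at hs
  have h1 := log48_ge
  have h2 := log48_le
  rw [harmV22]
  push_cast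
  linarith only [hs, h1, h2]

theorem key23 : (23 : ℝ) * Real.log 23 * ((10782212182893138320231 : ℝ)/63245806209101973600) ≤ 48 * Real.log 48 * (((harmonic 23 : ℚ) : ℝ) + ((harmonic 23 : ℚ) : ℝ) * 23 - 23) := by
  have hs : Real.log ((23:ℝ)/48) ≤ (((-359524289 : ℝ)/500000000)) :=
    lnUB 16 (by norm_num) (by norm_num) (by norm_num) (by norm_num)
  rw [Real.log_div (by norm_num) (by norm_num)] at hs
  have h1 := log48_ge
  have h2 := log48_le
  rw [harmV23]
  push_cast
  linarith only [hs, h1, h2]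

theorem key24 : (24 : ℝ) * Real.log 24 * ((10782212182893138320231 : ℝ)/63245806209101973600) ≤ 48 * Real.log 48 * (((harmonic 24 : ℚ) : ℝ) + ((harmonic 24 : ℚ) : ℝ) * 24 - 24) := by
  have hs : Real.log ((24:ℝ)/48) ≤ (((-678347507 : ℝ)/1000000000)) :=
    lnUB 16 (by norm_num) (by norm_num) (by norm_num) (by norm_num)
  rw [Real.log_div (by norm_num) (by norm_num)] at hs
  have h1 := log48_ge
  have h2 := log48_le
  rw [harmV24]
  push_cast
  linarith only [hs, h1, h2]

theorem key25 : (25 : ℝ) * Real.log 25 * ((10782212182893138320231 : ℝ)/63245806209101973600) ≤ 48 * Real.log 48 * (((harmonic 25 : ℚ) : ℝ) + ((harmonic 25 : ℚ) : ℝ) * 25 - 25) := by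
  have hs : Real.log ((25:ℝ)/48) ≤ (((-639206321 : ℝ)/1000000000)) :=
    lnUB 16 (by norm_num) (by norm_num) (by norm_num) (by norm_num)
  rw [Real.log_div (by norm_num) (by norm_num)] at hs
  have h1 := log48_ge
  have h2 := log48_le
  rw [harmV25]
  push_cast
  linarith only [hs, h1, h2]

theorem key26 : (26 : ℝ) * Real.log 26 * ((10782212182893138320231 : ℝ)/63245806209101973600) ≤ 48 * Real.log 48 * (((harmonic 26 : ℚ) : ℝ) + ((harmonic 26 : ℚ) : ℝ) * 26 - 26) := by
  have hs : Real.log ((26:ℝ)/48) ≤ (((-601506303 : ℝ)/1000000000)) :=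
    lnUB 16 (by norm_num) (by norm_num) (by norm_num) (by norm_num)
  rw [Real.log_div (by norm_num) (by norm_num)] at hs
  have h1 := log48_ge
  have h2 := log48_le
  rw [harmV26]
  push_cast
  linarith only [hs, h1, h2]

theorem key27 : (27 : ℝ) * Real.log 27 * ((10782212182893138320231 : ℝ)/63245806209101973600) ≤ 48 * Real.log 48 * (((harmonic 27 : ℚ) : ℝ) + ((harmonic 27 : ℚ) : ℝ) * 27 - 27) := by
  have hs : Real.log ((27:ℝ)/48) ≤ (((-565141919 : ℝ)/1000000000)) :=
    lnUB 16 (by norm_num) (by norm_num) (by norm_num) (by norm_num)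
  rw [Real.log_div (by norm_num) (by norm_num)] at hs
  have h1 := log48_ge
  have h2 := log48_le
  rw [harmV27]
  push_cast
  linarith only [hs, h1, h2]

theorem key28 : (28 : ℝ) * Real.log 28 * ((10782212182893138320231 : ℝ)/63245806209101973600) ≤ 48 * Real.log 48 * (((harmonic 28 : ℚ) : ℝ) + ((harmonic 28 : ℚ) : ℝ) * 28 - 28) := by
  have hs : Real.log ((28:ℝ)/48) ≤ (((-33126183 : ℝ)/62500000)) :=
    lnUB 16 (by norm_num) (by norm_num) (by norm_num) (by norm_num)
  rw [Real.log_div (by norm_num) (by norm_num)] at hs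
  have h1 := log48_ge
  have h2 := log48_le
  rw [harmV28]
  push_cast
  linarith only [hs, h1, h2]

theorem key29 : (29 : ℝ) * Real.log 29 * ((10782212182893138320231 : ℝ)/63245806209101973600) ≤ 48 * Real.log 48 * (((harmonic 29 : ℚ) : ℝ) + ((harmonic 29 : ℚ) : ℝ) * 29 - 29) := by
  have hs : Real.log ((29:ℝ)/48) ≤ (((-31003301 : ℝ)/62500000)) :=
    lnUB 16 (by norm_num) (by norm_num) (by norm_num) (by norm_num)
  rw [Real.log_div (by norm_num) (by norm_num)] at hs
  have h1 := log48_ge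
  have h2 := log48_le
  rw [harmV29]
  push_cast
  linarith only [hs, h1, h2]

theorem key30 : (30 : ℝ) * Real.log 30 * ((10782212182893138320231 : ℝ)/63245806209101973600) ≤ 48 * Real.log 48 * (((harmonic 30 : ℚ) : ℝ) + ((harmonic 30 : ℚ) : ℝ) * 30 - 30) := by
  have hs : Real.log ((30:ℝ)/48) ≤ (((-463167497 : ℝ)/1000000000)) :=
    lnUB 16 (by norm_num) (by norm_num) (by norm_num) (by norm_num)
  rw [Real.log_div (by norm_num) (by norm_num)] at hs
  have h1 := log48_ge
  have h2 := log48_le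
  rw [harmV30]
  push_cast
  linarith only [hs, h1, h2]

theorem key31 : (31 : ℝ) * Real.log 31 * ((10782212182893138320231 : ℝ)/63245806209101973600) ≤ 48 * Real.log 48 * (((harmonic 31 : ℚ) : ℝ) + ((harmonic 31 : ℚ) : ℝ) * 31 - 31) := by
  have hs : Real.log ((31:ℝ)/48) ≤ (((-26955889 : ℝ)/62500000)) :=
    lnUB 16 (by norm_num) (by norm_num) (by norm_num) (by norm_num)
  rw [Real.log_div (by norm_num) (by norm_num)] at hs
  have h1 := log48_ge
  have h2 := log48_le
  rw [harmV31]
  push_cast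
  linarith only [hs, h1, h2]

theorem key32 : (32 : ℝ) * Real.log 32 * ((10782212182893138320231 : ℝ)/63245806209101973600) ≤ 48 * Real.log 48 * (((harmonic 32 : ℚ) : ℝ) + ((harmonic 32 : ℚ) : ℝ) * 32 - 32) := by
  have hs : Real.log ((32:ℝ)/48) ≤ (((-40037067 : ℝ)/100000000)) :=
    lnUB 16 (by norm_num) (by norm_num) (by norm_num) (by norm_num)
  rw [Real.log_div (by norm_num) (by norm_num)] at hs
  have h1 := log48_ge
  have h2 := log48_le
  rw [harmV32]
  push_cast
  linarith only [hs, h1, h2]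

theorem key33 : (33 : ℝ) * Real.log 33 * ((10782212182893138320231 : ℝ)/63245806209101973600) ≤ 48 * Real.log 48 * (((harmonic 33 : ℚ) : ℝ) + ((harmonic 33 : ℚ) : ℝ) * 33 - 33) := by
  have hs : Real.log ((33:ℝ)/48) ≤ (((-370340147 : ℝ)/1000000000)) :=
    lnUB 16 (by norm_num) (by norm_num) (by norm_num) (by norm_num)
  rw [Real.log_div (by norm_num) (by norm_num)] at hs
  have h1 := log48_ge
  have h2 := log48_le
  rw [harmV33]
  push_cast
  linarith only [hs, h1, h2]

theorem key34 : (34 : ℝ) * Real.log 34 * ((10782212182893138320231 : ℝ)/63245806209101973600) ≤ 48 * Real.log 48 * (((harmonic 34 : ℚ) : ℝ) + ((harmonic 34 : ℚ) : ℝ) * 34 - 34) := by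
  have hs : Real.log ((34:ℝ)/48) ≤ (((-170575473 : ℝ)/500000000)) :=
    lnUB 16 (by norm_num) (by norm_num) (by norm_num) (by norm_num)
  rw [Real.log_div (by norm_num) (by norm_num)] at hs
  have h1 := log48_ge
  have h2 := log48_le
  rw [harmV34]
  push_cast
  linarith only [hs, h1, h2]

theorem key35 : (35 : ℝ) * Real.log 35 * ((10782212182893138320231 : ℝ)/63245806209101973600) ≤ 48 * Real.log 48 * (((harmonic 35 : ℚ) : ℝ) + ((harmonic 35 : ℚ) : ℝ) * 35 - 35) := by
  have hs : Real.log ((35:ℝ)/48) ≤ (((-62551153 : ℝ)/200000000)) :=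
    lnUB 16 (by norm_num) (by norm_num) (by norm_num) (by norm_num)
  rw [Real.log_div (by norm_num) (by norm_num)] at hs
  have h1 := log48_ge
  have h2 := log48_le
  rw [harmV35]
  push_cast
  linarith only [hs, h1, h2]

theorem key36 : (36 : ℝ) * Real.log 36 * ((10782212182893138320231 : ℝ)/63245806209101973600) ≤ 48 * Real.log 48 * (((harmonic 36 : ℚ) : ℝ) + ((harmonic 36 : ℚ) : ℝ) * 36 - 36) := by
  have hs : Real.log ((36:ℝ)/48) ≤ (((-142555611 : ℝ)/500000000)) :=
    lnUB 16 (by norm_num) (by norm_num) (by norm_num) (by norm_num)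
  rw [Real.log_div (by norm_num) (by norm_num)] at hs
  have h1 := log48_ge
  have h2 := log48_le
  rw [harmV36]
  push_cast
  linarith only [hs, h1, h2]

theorem key37 : (37 : ℝ) * Real.log 37 * ((10782212182893138320231 : ℝ)/63245806209101973600) ≤ 48 * Real.log 48 * (((harmonic 37 : ℚ) : ℝ) + ((harmonic 37 : ℚ) : ℝ) * 37 - 37) := by
  have hs : Real.log ((37:ℝ)/48) ≤ (((-64544357 : ℝ)/250000000)) :=
    lnUB 16 (by norm_num) (by norm_num) (by norm_num) (by norm_num)
  rw [Real.log_div (by norm_num) (by norm_num)] at hs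
  have h1 := log48_ge
  have h2 := log48_le
  rw [harmV37]
  push_cast
  linarith only [hs, h1, h2]

theorem key38 : (38 : ℝ) * Real.log 38 * ((10782212182893138320231 : ℝ)/63245806209101973600) ≤ 48 * Real.log 48 * (((harmonic 38 : ℚ) : ℝ) + ((harmonic 38 : ℚ) : ℝ) * 38 - 38) := by
  have hs : Real.log ((38:ℝ)/48) ≤ (((-231917623 : ℝ)/1000000000)) :=
    lnUB 16 (by norm_num) (by norm_num) (by norm_num) (by norm_num)
  rw [Real.log_div (by norm_num) (by norm_num)] at hs
  have h1 := log48_ge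
  have h2 := log48_le
  rw [harmV38]
  push_cast
  linarith only [hs, h1, h2]

theorem key39 : (39 : ℝ) * Real.log 39 * ((10782212182893138320231 : ℝ)/63245806209101973600) ≤ 48 * Real.log 48 * (((harmonic 39 : ℚ) : ℝ) + ((harmonic 39 : ℚ) : ℝ) * 39 - 39) := by
  have hs : Real.log ((39:ℝ)/48) ≤ (((-206297857 : ℝ)/1000000000)) :=
    lnUB 16 (by norm_num) (by norm_num) (by norm_num) (by norm_num)
  rw [Real.log_div (by norm_num) (by norm_num)] at hs
  have h1 := log48_ge
  have h2 := log48_le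
  rw [harmV39]
  push_cast
  linarith only [hs, h1, h2]

theorem key40 : (40 : ℝ) * Real.log 40 * ((10782212182893138320231 : ℝ)/63245806209101973600) ≤ 48 * Real.log 48 * (((harmonic 40 : ℚ) : ℝ) + ((harmonic 40 : ℚ) : ℝ) * 40 - 40) := by
  have hs : Real.log ((40:ℝ)/48) ≤ (((-11330419 : ℝ)/62500000)) :=
    lnUB 16 (by norm_num) (by norm_num) (by norm_num) (by norm_num)
  rw [Real.log_div (by norm_num) (by norm_num)] at hs
  have h1 := log48_ge
  have h2 := log48_le
  rw [harmV40]
  push_cast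
  linarith only [hs, h1, h2]

theorem key41 : (41 : ℝ) * Real.log 41 * ((10782212182893138320231 : ℝ)/63245806209101973600) ≤ 48 * Real.log 48 * (((harmonic 41 : ℚ) : ℝ) + ((harmonic 41 : ℚ) : ℝ) * 41 - 41) := by
  have hs : Real.log ((41:ℝ)/48) ≤ (((-156855021 : ℝ)/1000000000)) :=
    lnUB 16 (by norm_num) (by norm_num) (by norm_num) (by norm_num)
  rw [Real.log_div (by norm_num) (by norm_num)] at hs
  have h1 := log48_ge
  have h2 := log48_le
  rw [harmV41]
  push_cast
  linarith only [hs, h1, h2]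

theorem key42 : (42 : ℝ) * Real.log 42 * ((10782212182893138320231 : ℝ)/63245806209101973600) ≤ 48 * Real.log 48 * (((harmonic 42 : ℚ) : ℝ) + ((harmonic 42 : ℚ) : ℝ) * 42 - 42) := by
  have hs : Real.log ((42:ℝ)/48) ≤ (((-132975731 : ℝ)/1000000000)) :=
    lnUB 16 (by norm_num) (by norm_num) (by norm_num) (by norm_num)
  rw [Real.log_div (by norm_num) (by norm_num)] at hs
  have h1 := log48_ge
  have h2 := log48_le
  rw [harmV42]
  push_cast
  linarith only [hs, h1, h2]

theorem key43 : (43 : ℝ) * Real.log 43 * ((10782212182893138320231 : ℝ)/63245806209101973600) ≤ 48 * Real.log 48 * (((harmonic 43 : ℚ) : ℝ) + ((harmonic 43 : ℚ) : ℝ) * 43 - 43) := by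
  have hs : Real.log ((43:ℝ)/48) ≤ (((-27405907 : ℝ)/250000000)) :=
    lnUB 16 (by norm_num) (by norm_num) (by norm_num) (by norm_num)
  rw [Real.log_div (by norm_num) (by norm_num)] at hs
  have h1 := log48_ge
  have h2 := log48_le
  rw [harmV43]
  push_cast
  linarith only [hs, h1, h2]

theorem key44 : (44 : ℝ) * Real.log 44 * ((10782212182893138320231 : ℝ)/63245806209101973600) ≤ 48 * Real.log 48 * (((harmonic 44 : ℚ) : ℝ) + ((harmonic 44 : ℚ) : ℝ) * 44 - 44) := by
  have hs : Real.log ((44:ℝ)/48) ≤ (((-86775211 : ℝ)/1000000000)) :=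
    lnUB 16 (by norm_num) (by norm_num) (by norm_num) (by norm_num)
  rw [Real.log_div (by norm_num) (by norm_num)] at hs
  have h1 := log48_ge
  have h2 := log48_le
  rw [harmV44]
  push_cast
  linarith only [hs, h1, h2]

theorem key45 : (45 : ℝ) * Real.log 45 * ((10782212182893138320231 : ℝ)/63245806209101973600) ≤ 48 * Real.log 48 * (((harmonic 45 : ℚ) : ℝ) + ((harmonic 45 : ℚ) : ℝ) * 45 - 45) := by
  have hs : Real.log ((45:ℝ)/48) ≤ (((-64408531 : ℝ)/1000000000)) :=
    lnUB 16 (by norm_num) (by norm_num) (by norm_num) (by norm_num)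
  rw [Real.log_div (by norm_num) (by norm_num)] at hs
  have h1 := log48_ge
  have h2 := log48_le
  rw [harmV45]
  push_cast
  linarith only [hs, h1, h2]

theorem key46 : (46 : ℝ) * Real.log 46 * ((10782212182893138320231 : ℝ)/63245806209101973600) ≤ 48 * Real.log 48 * (((harmonic 46 : ℚ) : ℝ) + ((harmonic 46 : ℚ) : ℝ) * 46 - 46) := by
  have hs : Real.log ((46:ℝ)/48) ≤ (((-42503059 : ℝ)/1000000000)) :=
    lnUB 16 (by norm_num) (by norm_num) (by norm_num) (by norm_num)
  rw [Real.log_div (by norm_num) (by norm_num)] at hs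
  have h1 := log48_ge
  have h2 := log48_le
  rw [harmV46]
  push_cast
  linarith only [hs, h1, h2]

theorem key47 : (47 : ℝ) * Real.log 47 * ((10782212182893138320231 : ℝ)/63245806209101973600) ≤ 48 * Real.log 48 * (((harmonic 47 : ℚ) : ℝ) + ((harmonic 47 : ℚ) : ℝ) * 47 - 47) := by
  have hs : Real.log ((47:ℝ)/48) ≤ (((-10519781 : ℝ)/500000000)) :=
    lnUB 16 (by norm_num) (by norm_num) (by norm_num) (by norm_num)
  rw [Real.log_div (by norm_num) (by norm_num)] at hs
  have h1 := log48_ge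
  have h2 := log48_le
  rw [harmV47]
  push_cast
  linarith only [hs, h1, h2]

theorem key48 : (48 : ℝ) * Real.log 48 * ((10782212182893138320231 : ℝ)/63245806209101973600) ≤ 48 * Real.log 48 * (((harmonic 48 : ℚ) : ℝ) + ((harmonic 48 : ℚ) : ℝ) * 48 - 48) := by
  have hs : Real.log ((48:ℝ)/48) ≤ ((0 : ℝ)) :=
    lnUB 1 (by norm_num) (by norm_num) (by norm_num) (by norm_num)
  rw [Real.log_div (by norm_num) (by norm_num)] at hs
  have h1 := log48_ge
  have h2 := log48_le
  rw [harmV48]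
  push_cast
  linarith only [hs, h1, h2]

theorem key49 : (49 : ℝ) * Real.log 49 * ((10782212182893138320231 : ℝ)/63245806209101973600) ≤ 48 * Real.log 48 * (((harmonic 49 : ℚ) : ℝ) + ((harmonic 49 : ℚ) : ℝ) * 49 - 49) := by
  have hs : Real.log ((49:ℝ)/48) ≤ (((20625933 : ℝ)/1000000000)) :=
    lnUB 32 (by norm_num) (by norm_num) (by norm_num) (by norm_num)
  rw [Real.log_div (by norm_num) (by norm_num)] at hs
  have h1 := log48_ge
  have h2 := log48_le
  rw [harmV49]
  push_cast
  linarith only [hs, h1, h2]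

theorem key50 : (50 : ℝ) * Real.log 50 * ((10782212182893138320231 : ℝ)/63245806209101973600) ≤ 48 * Real.log 48 * (((harmonic 50 : ℚ) : ℝ) + ((harmonic 50 : ℚ) : ℝ) * 50 - 50) := by
  have hs : Real.log ((50:ℝ)/48) ≤ (((10218529 : ℝ)/250000000)) :=
    lnUB 16 (by norm_num) (by norm_num) (by norm_num) (by norm_num)
  rw [Real.log_div (by norm_num) (by norm_num)] at hs
  have h1 := log48_ge
  have h2 := log48_le
  rw [harmV50]
  push_cast
  linarith only [hs, h1, h2]

theorem key51 : (51 : ℝ) * Real.log 51 * ((10782212182893138320231 : ℝ)/63245806209101973600) ≤ 48 * Real.log 48 * (((harmonic 51 : ℚ) : ℝ) + ((harmonic 51 : ℚ) : ℝ) * 51 - 51) := by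
  have hs : Real.log ((51:ℝ)/48) ≤ (((60739623 : ℝ)/1000000000)) :=
    lnUB 16 (by norm_num) (by norm_num) (by norm_num) (by norm_num)
  rw [Real.log_div (by norm_num) (by norm_num)] at hs
  have h1 := log48_ge
  have h2 := log48_le
  rw [harmV51]
  push_cast
  linarith only [hs, h1, h2]

theorem key52 : (52 : ℝ) * Real.log 52 * ((10782212182893138320231 : ℝ)/63245806209101973600) ≤ 48 * Real.log 48 * (((harmonic 52 : ℚ) : ℝ) + ((harmonic 52 : ℚ) : ℝ) * 52 - 52) := by
  have hs : Real.log ((52:ℝ)/48) ≤ (((80243257 : ℝ)/1000000000)) :=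
    lnUB 16 (by norm_num) (by norm_num) (by norm_num) (by norm_num)
  rw [Real.log_div (by norm_num) (by norm_num)] at hs
  have h1 := log48_ge
  have h2 := log48_le
  rw [harmV52]
  push_cast
  linarith only [hs, h1, h2]

theorem key53 : (53 : ℝ) * Real.log 53 * ((10782212182893138320231 : ℝ)/63245806209101973600) ≤ 48 * Real.log 48 * (((harmonic 53 : ℚ) : ℝ) + ((harmonic 53 : ℚ) : ℝ) * 53 - 53) := by
  have hs : Real.log ((53:ℝ)/48) ≤ (((99398383 : ℝ)/1000000000)) :=
    lnUB 16 (by norm_num) (by norm_num) (by norm_num) (by norm_num)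
  rw [Real.log_div (by norm_num) (by norm_num)] at hs
  have h1 := log48_ge
  have h2 := log48_le
  rw [harmV53]
  push_cast
  linarith only [hs, h1, h2]

theorem key54 : (54 : ℝ) * Real.log 54 * ((10782212182893138320231 : ℝ)/63245806209101973600) ≤ 48 * Real.log 48 * (((harmonic 54 : ℚ) : ℝ) + ((harmonic 54 : ℚ) : ℝ) * 54 - 54) := by
  have hs : Real.log ((54:ℝ)/48) ≤ (((118217629 : ℝ)/1000000000)) :=
    lnUB 16 (by norm_num) (by norm_num) (by norm_num) (by norm_num)
  rw [Real.log_div (by norm_num) (by norm_num)] at hs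
  have h1 := log48_ge
  have h2 := log48_le
  rw [harmV54]
  push_cast
  linarith only [hs, h1, h2]

theorem key55 : (55 : ℝ) * Real.log 55 * ((10782212182893138320231 : ℝ)/63245806209101973600) ≤ 48 * Real.log 48 * (((harmonic 55 : ℚ) : ℝ) + ((harmonic 55 : ℚ) : ℝ) * 55 - 55) := by
  have hs : Real.log ((55:ℝ)/48) ≤ (((68356473 : ℝ)/500000000)) :=
    lnUB 16 (by norm_num) (by norm_num) (by norm_num) (by norm_num)
  rw [Real.log_div (by norm_num) (by norm_num)] at hs
  have h1 := log48_ge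
  have h2 := log48_le
  rw [harmV55]
  push_cast
  linarith only [hs, h1, h2]

theorem key56 : (56 : ℝ) * Real.log 56 * ((10782212182893138320231 : ℝ)/63245806209101973600) ≤ 48 * Real.log 48 * (((harmonic 56 : ℚ) : ℝ) + ((harmonic 56 : ℚ) : ℝ) * 56 - 56) := by
  have hs : Real.log ((56:ℝ)/48) ≤ (((4840489 : ℝ)/31250000)) :=
    lnUB 16 (by norm_num) (by norm_num) (by norm_num) (by norm_num)
  rw [Real.log_div (by norm_num) (by norm_num)] at hs
  have h1 := log48_ge
  have h2 := log48_le
  rw [harmV56]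
  push_cast
  linarith only [hs, h1, h2]

theorem key57 : (57 : ℝ) * Real.log 57 * ((10782212182893138320231 : ℝ)/63245806209101973600) ≤ 48 * Real.log 48 * (((harmonic 57 : ℚ) : ℝ) + ((harmonic 57 : ℚ) : ℝ) * 57 - 57) := by
  have hs : Real.log ((57:ℝ)/48) ≤ (((86388231 : ℝ)/500000000)) :=
    lnUB 16 (by norm_num) (by norm_num) (by norm_num) (by norm_num)
  rw [Real.log_div (by norm_num) (by norm_num)] at hs
  have h1 := log48_ge
  have h2 := log48_le
  rw [harmV57]
  push_cast
  linarith only [hs, h1, h2]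

theorem key58 : (58 : ℝ) * Real.log 58 * ((10782212182893138320231 : ℝ)/63245806209101973600) ≤ 48 * Real.log 48 * (((harmonic 58 : ℚ) : ℝ) + ((harmonic 58 : ℚ) : ℝ) * 58 - 58) := by
  have hs : Real.log ((58:ℝ)/48) ≤ (((1487231 : ℝ)/7812500)) :=
    lnUB 16 (by norm_num) (by norm_num) (by norm_num) (by norm_num)
  rw [Real.log_div (by norm_num) (by norm_num)] at hs
  have h1 := log48_ge
  have h2 := log48_le
  rw [harmV58]
  push_cast
  linarith only [hs, h1, h2]

theorem key59 : (59 : ℝ) * Real.log 59 * ((10782212182893138320231 : ℝ)/63245806209101973600) ≤ 48 * Real.log 48 * (((harmonic 59 : ℚ) : ℝ) + ((harmonic 59 : ℚ) : ℝ) * 59 - 59) := by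
  have hs : Real.log ((59:ℝ)/48) ≤ (((25959079 : ℝ)/125000000)) :=
    lnUB 16 (by norm_num) (by norm_num) (by norm_num) (by norm_num)
  rw [Real.log_div (by norm_num) (by norm_num)] at hs
  have h1 := log48_ge
  have h2 := log48_le
  rw [harmV59]
  push_cast
  linarith only [hs, h1, h2]

theorem key60 : (60 : ℝ) * Real.log 60 * ((10782212182893138320231 : ℝ)/63245806209101973600) ≤ 48 * Real.log 48 * (((harmonic 60 : ℚ) : ℝ) + ((harmonic 60 : ℚ) : ℝ) * 60 - 60) := by
  have hs : Real.log ((60:ℝ)/48) ≤ (((56176711 : ℝ)/250000000)) :=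
    lnUB 16 (by norm_num) (by norm_num) (by norm_num) (by norm_num)
  rw [Real.log_div (by norm_num) (by norm_num)] at hs
  have h1 := log48_ge
  have h2 := log48_le
  rw [harmV60]
  push_cast
  linarith only [hs, h1, h2]

theorem key61 : (61 : ℝ) * Real.log 61 * ((10782212182893138320231 : ℝ)/63245806209101973600) ≤ 48 * Real.log 48 * (((harmonic 61 : ℚ) : ℝ) + ((harmonic 61 : ℚ) : ℝ) * 61 - 61) := by
  have hs : Real.log ((61:ℝ)/48) ≤ (((60369237 : ℝ)/250000000)) :=
    lnUB 16 (by norm_num) (by norm_num) (by norm_num) (by norm_num)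
  rw [Real.log_div (by norm_num) (by norm_num)] at hs
  have h1 := log48_ge
  have h2 := log48_le
  rw [harmV61]
  push_cast
  linarith only [hs, h1, h2]

theorem key62 : (62 : ℝ) * Real.log 62 * ((10782212182893138320231 : ℝ)/63245806209101973600) ≤ 48 * Real.log 48 * (((harmonic 62 : ℚ) : ℝ) + ((harmonic 62 : ℚ) : ℝ) * 62 - 62) := by
  have hs : Real.log ((62:ℝ)/48) ≤ (((64497817 : ℝ)/250000000)) :=
    lnUB 16 (by norm_num) (by norm_num) (by norm_num) (by norm_num)
  rw [Real.log_div (by norm_num) (by norm_num)] at hs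
  have h1 := log48_ge
  have h2 := log48_le
  rw [harmV62]
  push_cast
  linarith only [hs, h1, h2]

theorem key63 : (63 : ℝ) * Real.log 63 * ((10782212182893138320231 : ℝ)/63245806209101973600) ≤ 48 * Real.log 48 * (((harmonic 63 : ℚ) : ℝ) + ((harmonic 63 : ℚ) : ℝ) * 63 - 63) := by
  have hs : Real.log ((63:ℝ)/48) ≤ (((137128869 : ℝ)/500000000)) :=
    lnUB 16 (by norm_num) (by norm_num) (by norm_num) (by norm_num)
  rw [Real.log_div (by norm_num) (by norm_num)] at hs
  have h1 := log48_ge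
  have h2 := log48_le
  rw [harmV63]
  push_cast
  linarith only [hs, h1, h2]

theorem key64 : (64 : ℝ) * Real.log 64 * ((10782212182893138320231 : ℝ)/63245806209101973600) ≤ 48 * Real.log 48 * (((harmonic 64 : ℚ) : ℝ) + ((harmonic 64 : ℚ) : ℝ) * 64 - 64) := by
  have hs : Real.log ((64:ℝ)/48) ≤ (((144489549 : ℝ)/500000000)) :=
    lnUB 32 (by norm_num) (by norm_num) (by norm_num) (by norm_num)
  rw [Real.log_div (by norm_num) (by norm_num)] at hs
  have h1 := log48_ge
  have h2 := log48_le
  rw [harmV64]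
  push_cast
  linarith only [hs, h1, h2]

theorem key65 : (65 : ℝ) * Real.log 65 * ((10782212182893138320231 : ℝ)/63245806209101973600) ≤ 48 * Real.log 48 * (((harmonic 65 : ℚ) : ℝ) + ((harmonic 65 : ℚ) : ℝ) * 65 - 65) := by
  have hs : Real.log ((65:ℝ)/48) ≤ (((304627087 : ℝ)/1000000000)) :=
    lnUB 32 (by norm_num) (by norm_num) (by norm_num) (by norm_num)
  rw [Real.log_div (by norm_num) (by norm_num)] at hs
  have h1 := log48_ge
  have h2 := log48_le
  rw [harmV65]
  push_cast
  linarith only [hs, h1, h2]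

theorem key66 : (66 : ℝ) * Real.log 66 * ((10782212182893138320231 : ℝ)/63245806209101973600) ≤ 48 * Real.log 48 * (((harmonic 66 : ℚ) : ℝ) + ((harmonic 66 : ℚ) : ℝ) * 66 - 66) := by
  have hs : Real.log ((66:ℝ)/48) ≤ (((320043577 : ℝ)/1000000000)) :=
    lnUB 32 (by norm_num) (by norm_num) (by norm_num) (by norm_num)
  rw [Real.log_div (by norm_num) (by norm_num)] at hs
  have h1 := log48_ge
  have h2 := log48_le
  rw [harmV66]
  push_cast
  linarith only [hs, h1, h2]

theorem key67 : (67 : ℝ) * Real.log 67 * ((10782212182893138320231 : ℝ)/63245806209101973600) ≤ 48 * Real.log 48 * (((harmonic 67 : ℚ) : ℝ) + ((harmonic 67 : ℚ) : ℝ) * 67 - 67) := by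
  have hs : Real.log ((67:ℝ)/48) ≤ (((335235423 : ℝ)/1000000000)) :=
    lnUB 32 (by norm_num) (by norm_num) (by norm_num) (by norm_num)
  rw [Real.log_div (by norm_num) (by norm_num)] at hs
  have h1 := log48_ge
  have h2 := log48_le
  rw [harmV67]
  push_cast
  linarith only [hs, h1, h2]

theorem key68 : (68 : ℝ) * Real.log 68 * ((10782212182893138320231 : ℝ)/63245806209101973600) ≤ 48 * Real.log 48 * (((harmonic 68 : ℚ) : ℝ) + ((harmonic 68 : ℚ) : ℝ) * 68 - 68) := by
  have hs : Real.log ((68:ℝ)/48) ≤ (((350209179 : ℝ)/1000000000)) :=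
    lnUB 32 (by norm_num) (by norm_num) (by norm_num) (by norm_num)
  rw [Real.log_div (by norm_num) (by norm_num)] at hs
  have h1 := log48_ge
  have h2 := log48_le
  rw [harmV68]
  push_cast
  linarith only [hs, h1, h2]

theorem key69 : (69 : ℝ) * Real.log 69 * ((10782212182893138320231 : ℝ)/63245806209101973600) ≤ 48 * Real.log 48 * (((harmonic 69 : ℚ) : ℝ) + ((harmonic 69 : ℚ) : ℝ) * 69 - 69) := by
  have hs : Real.log ((69:ℝ)/48) ≤ (((72994223 : ℝ)/200000000)) :=
    lnUB 32 (by norm_num) (by norm_num) (by norm_num) (by norm_num)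
  rw [Real.log_div (by norm_num) (by norm_num)] at hs
  have h1 := log48_ge
  have h2 := log48_le
  rw [harmV69]
  push_cast
  linarith only [hs, h1, h2]

theorem key70 : (70 : ℝ) * Real.log 70 * ((10782212182893138320231 : ℝ)/63245806209101973600) ≤ 48 * Real.log 48 * (((harmonic 70 : ℚ) : ℝ) + ((harmonic 70 : ℚ) : ℝ) * 70 - 70) := by
  have hs : Real.log ((70:ℝ)/48) ≤ (((379527233 : ℝ)/1000000000)) :=
    lnUB 32 (by norm_num) (by norm_num) (by norm_num) (by norm_num)
  rw [Real.log_div (by norm_num) (by norm_num)] at hs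
  have h1 := log48_ge
  have h2 := log48_le
  rw [harmV70]
  push_cast
  linarith only [hs, h1, h2]

theorem key71 : (71 : ℝ) * Real.log 71 * ((10782212182893138320231 : ℝ)/63245806209101973600) ≤ 48 * Real.log 48 * (((harmonic 71 : ℚ) : ℝ) + ((harmonic 71 : ℚ) : ℝ) * 71 - 71) := by
  have hs : Real.log ((71:ℝ)/48) ≤ (((393883283 : ℝ)/1000000000)) :=
    lnUB 32 (by norm_num) (by norm_num) (by norm_num) (by norm_num)
  rw [Real.log_div (by norm_num) (by norm_num)] at hs
  have h1 := log48_ge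
  have h2 := log48_le
  rw [harmV71]
  push_cast
  linarith only [hs, h1, h2]

theorem key72 : (72 : ℝ) * Real.log 72 * ((10782212182893138320231 : ℝ)/63245806209101973600) ≤ 48 * Real.log 48 * (((harmonic 72 : ℚ) : ℝ) + ((harmonic 72 : ℚ) : ℝ) * 72 - 72) := by
  have hs : Real.log ((72:ℝ)/48) ≤ (((204022387 : ℝ)/500000000)) :=
    lnUB 32 (by norm_num) (by norm_num) (by norm_num) (by norm_num)
  rw [Real.log_div (by norm_num) (by norm_num)] at hs
  have h1 := log48_ge
  have h2 := log48_le
  rw [harmV72]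
  push_cast
  linarith only [hs, h1, h2]

theorem key73 : (73 : ℝ) * Real.log 73 * ((10782212182893138320231 : ℝ)/63245806209101973600) ≤ 48 * Real.log 48 * (((harmonic 73 : ℚ) : ℝ) + ((harmonic 73 : ℚ) : ℝ) * 73 - 73) := by
  have hs : Real.log ((73:ℝ)/48) ≤ (((422016991 : ℝ)/1000000000)) :=
    lnUB 32 (by norm_num) (by norm_num) (by norm_num) (by norm_num)
  rw [Real.log_div (by norm_num) (by norm_num)] at hs
  have h1 := log48_ge
  have h2 := log48_le
  rw [harmV73]
  push_cast
  linarith only [hs, h1, h2]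

theorem key74 : (74 : ℝ) * Real.log 74 * ((10782212182893138320231 : ℝ)/63245806209101973600) ≤ 48 * Real.log 48 * (((harmonic 74 : ℚ) : ℝ) + ((harmonic 74 : ℚ) : ℝ) * 74 - 74) := by
  have hs : Real.log ((74:ℝ)/48) ≤ (((217902503 : ℝ)/500000000)) :=
    lnUB 32 (by norm_num) (by norm_num) (by norm_num) (by norm_num)
  rw [Real.log_div (by norm_num) (by norm_num)] at hs
  have h1 := log48_ge
  have h2 := log48_le
  rw [harmV74]
  push_cast
  linarith only [hs, h1, h2]

theorem key75 : (75 : ℝ) * Real.log 75 * ((10782212182893138320231 : ℝ)/63245806209101973600) ≤ 48 * Real.log 48 * (((harmonic 75 : ℚ) : ℝ) + ((harmonic 75 : ℚ) : ℝ) * 75 - 75) := by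
  have hs : Real.log ((75:ℝ)/48) ≤ (((449413687 : ℝ)/1000000000)) :=
    lnUB 32 (by norm_num) (by norm_num) (by norm_num) (by norm_num)
  rw [Real.log_div (by norm_num) (by norm_num)] at hs
  have h1 := log48_ge
  have h2 := log48_le
  rw [harmV75]
  push_cast
  linarith only [hs, h1, h2]

theorem key76 : (76 : ℝ) * Real.log 76 * ((10782212182893138320231 : ℝ)/63245806209101973600) ≤ 48 * Real.log 48 * (((harmonic 76 : ℚ) : ℝ) + ((harmonic 76 : ℚ) : ℝ) * 76 - 76) := by
  have hs : Real.log ((76:ℝ)/48) ≤ (((462847713 : ℝ)/1000000000)) :=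
    lnUB 32 (by norm_num) (by norm_num) (by norm_num) (by norm_num)
  rw [Real.log_div (by norm_num) (by norm_num)] at hs
  have h1 := log48_ge
  have h2 := log48_le
  rw [harmV76]
  push_cast
  linarith only [hs, h1, h2]

theorem key77 : (77 : ℝ) * Real.log 77 * ((10782212182893138320231 : ℝ)/63245806209101973600) ≤ 48 * Real.log 48 * (((harmonic 77 : ℚ) : ℝ) + ((harmonic 77 : ℚ) : ℝ) * 77 - 77) := by
  have hs : Real.log ((77:ℝ)/48) ≤ (((238055789 : ℝ)/500000000)) :=
    lnUB 32 (by norm_num) (by norm_num) (by norm_num) (by norm_num)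
  rw [Real.log_div (by norm_num) (by norm_num)] at hs
  have h1 := log48_ge
  have h2 := log48_le
  rw [harmV77]
  push_cast
  linarith only [hs, h1, h2]

theorem key78 : (78 : ℝ) * Real.log 78 * ((10782212182893138320231 : ℝ)/63245806209101973600) ≤ 48 * Real.log 48 * (((harmonic 78 : ℚ) : ℝ) + ((harmonic 78 : ℚ) : ℝ) * 78 - 78) := by
  have hs : Real.log ((78:ℝ)/48) ≤ (((244604803 : ℝ)/500000000)) :=
    lnUB 32 (by norm_num) (by norm_num) (by norm_num) (by norm_num)
  rw [Real.log_div (by norm_num) (by norm_num)] at hs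
  have h1 := log48_ge
  have h2 := log48_le
  rw [harmV78]
  push_cast
  linarith only [hs, h1, h2]

theorem key79 : (79 : ℝ) * Real.log 79 * ((10782212182893138320231 : ℝ)/63245806209101973600) ≤ 48 * Real.log 48 * (((harmonic 79 : ℚ) : ℝ) + ((harmonic 79 : ℚ) : ℝ) * 79 - 79) := by
  have hs : Real.log ((79:ℝ)/48) ≤ (((251072979 : ℝ)/500000000)) :=
    lnUB 32 (by norm_num) (by norm_num) (by norm_num) (by norm_num)
  rw [Real.log_div (by norm_num) (by norm_num)] at hs
  have h1 := log48_ge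
  have h2 := log48_le
  rw [harmV79]
  push_cast
  linarith only [hs, h1, h2]

theorem key80 : (80 : ℝ) * Real.log 80 * ((10782212182893138320231 : ℝ)/63245806209101973600) ≤ 48 * Real.log 48 * (((harmonic 80 : ℚ) : ℝ) + ((harmonic 80 : ℚ) : ℝ) * 80 - 80) := by
  have hs : Real.log ((80:ℝ)/48) ≤ (((514924639 : ℝ)/1000000000)) :=
    lnUB 32 (by norm_num) (by norm_num) (by norm_num) (by norm_num)
  rw [Real.log_div (by norm_num) (by norm_num)] at hs
  have h1 := log48_ge
  have h2 := log48_le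
  rw [harmV80]
  push_cast
  linarith only [hs, h1, h2]

theorem key81 : (81 : ℝ) * Real.log 81 * ((10782212182893138320231 : ℝ)/63245806209101973600) ≤ 48 * Real.log 48 * (((harmonic 81 : ℚ) : ℝ) + ((harmonic 81 : ℚ) : ℝ) * 81 - 81) := by
  have hs : Real.log ((81:ℝ)/48) ≤ (((105509901 : ℝ)/200000000)) :=
    lnUB 32 (by norm_num) (by norm_num) (by norm_num) (by norm_num)
  rw [Real.log_div (by norm_num) (by norm_num)] at hs
  have h1 := log48_ge
  have h2 := log48_le
  rw [harmV81]
  push_cast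
  linarith only [hs, h1, h2]

theorem key82 : (82 : ℝ) * Real.log 82 * ((10782212182893138320231 : ℝ)/63245806209101973600) ≤ 48 * Real.log 48 * (((harmonic 82 : ℚ) : ℝ) + ((harmonic 82 : ℚ) : ℝ) * 82 - 82) := by
  have hs : Real.log ((82:ℝ)/48) ≤ (((540024273 : ℝ)/1000000000)) :=
    lnUB 32 (by norm_num) (by norm_num) (by norm_num) (by norm_num)
  rw [Real.log_div (by norm_num) (by norm_num)] at hs
  have h1 := log48_ge
  have h2 := log48_le
  rw [harmV82]
  push_cast
  linarith only [hs, h1, h2]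

theorem key83 : (83 : ℝ) * Real.log 83 * ((10782212182893138320231 : ℝ)/63245806209101973600) ≤ 48 * Real.log 48 * (((harmonic 83 : ℚ) : ℝ) + ((harmonic 83 : ℚ) : ℝ) * 83 - 83) := by
  have hs : Real.log ((83:ℝ)/48) ≤ (((22094101 : ℝ)/40000000)) :=
    lnUB 32 (by norm_num) (by norm_num) (by norm_num) (by norm_num)
  rw [Real.log_div (by norm_num) (by norm_num)] at hs
  have h1 := log48_ge
  have h2 := log48_le
  rw [harmV83]
  push_cast
  linarith only [hs, h1, h2]

theorem key84 : (84 : ℝ) * Real.log 84 * ((10782212182893138320231 : ℝ)/63245806209101973600) ≤ 48 * Real.log 48 * (((harmonic 84 : ℚ) : ℝ) + ((harmonic 84 : ℚ) : ℝ) * 84 - 84) := by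
  have hs : Real.log ((84:ℝ)/48) ≤ (((282268859 : ℝ)/500000000)) :=
    lnUB 32 (by norm_num) (by norm_num) (by norm_num) (by norm_num)
  rw [Real.log_div (by norm_num) (by norm_num)] at hs
  have h1 := log48_ge
  have h2 := log48_le
  rw [harmV84]
  push_cast
  linarith only [hs, h1, h2]

theorem key85 : (85 : ℝ) * Real.log 85 * ((10782212182893138320231 : ℝ)/63245806209101973600) ≤ 48 * Real.log 48 * (((harmonic 85 : ℚ) : ℝ) + ((harmonic 85 : ℚ) : ℝ) * 85 - 85) := by
  have hs : Real.log ((85:ℝ)/48) ≤ (((36036449 : ℝ)/62500000)) :=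
    lnUB 32 (by norm_num) (by norm_num) (by norm_num) (by norm_num)
  rw [Real.log_div (by norm_num) (by norm_num)] at hs
  have h1 := log48_ge
  have h2 := log48_le
  rw [harmV85]
  push_cast
  linarith only [hs, h1, h2]

theorem key86 : (86 : ℝ) * Real.log 86 * ((10782212182893138320231 : ℝ)/63245806209101973600) ≤ 48 * Real.log 48 * (((harmonic 86 : ℚ) : ℝ) + ((harmonic 86 : ℚ) : ℝ) * 86 - 86) := by
  have hs : Real.log ((86:ℝ)/48) ≤ (((294246071 : ℝ)/500000000)) :=
    lnUB 32 (by norm_num) (by norm_num) (by norm_num) (by norm_num)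
  rw [Real.log_div (by norm_num) (by norm_num)] at hs
  have h1 := log48_ge
  have h2 := log48_le
  rw [harmV86]
  push_cast
  linarith only [hs, h1, h2]

theorem key87 : (87 : ℝ) * Real.log 87 * ((10782212182893138320231 : ℝ)/63245806209101973600) ≤ 48 * Real.log 48 * (((harmonic 87 : ℚ) : ℝ) + ((harmonic 87 : ℚ) : ℝ) * 87 - 87) := by
  have hs : Real.log ((87:ℝ)/48) ≤ (((600267699 : ℝ)/1000000000)) :=
    lnUB 32 (by norm_num) (by norm_num) (by norm_num) (by norm_num)
  rw [Real.log_div (by norm_num) (by norm_num)] at hs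
  have h1 := log48_ge
  have h2 := log48_le
  rw [harmV87]
  push_cast
  linarith only [hs, h1, h2]

theorem key88 : (88 : ℝ) * Real.log 88 * ((10782212182893138320231 : ℝ)/63245806209101973600) ≤ 48 * Real.log 48 * (((harmonic 88 : ℚ) : ℝ) + ((harmonic 88 : ℚ) : ℝ) * 88 - 88) := by
  have hs : Real.log ((88:ℝ)/48) ≤ (((305956429 : ℝ)/500000000)) :=
    lnUB 32 (by norm_num) (by norm_num) (by norm_num) (by norm_num)
  rw [Real.log_div (by norm_num) (by norm_num)] at hs
  have h1 := log48_ge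
  have h2 := log48_le
  rw [harmV88]
  push_cast
  linarith only [hs, h1, h2]

theorem key89 : (89 : ℝ) * Real.log 89 * ((10782212182893138320231 : ℝ)/63245806209101973600) ≤ 48 * Real.log 48 * (((harmonic 89 : ℚ) : ℝ) + ((harmonic 89 : ℚ) : ℝ) * 89 - 89) := by
  have hs : Real.log ((89:ℝ)/48) ≤ (((15585763 : ℝ)/25000000)) :=
    lnUB 32 (by norm_num) (by norm_num) (by norm_num) (by norm_num)
  rw [Real.log_div (by norm_num) (by norm_num)] at hs
  have h1 := log48_ge
  have h2 := log48_le
  rw [harmV89]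
  push_cast
  linarith only [hs, h1, h2]

theorem key90 : (90 : ℝ) * Real.log 90 * ((10782212182893138320231 : ℝ)/63245806209101973600) ≤ 48 * Real.log 48 * (((harmonic 90 : ℚ) : ℝ) + ((harmonic 90 : ℚ) : ℝ) * 90 - 90) := by
  have hs : Real.log ((90:ℝ)/48) ≤ (((63482349 : ℝ)/100000000)) :=
    lnUB 32 (by norm_num) (by norm_num) (by norm_num) (by norm_num)
  rw [Real.log_div (by norm_num) (by norm_num)] at hs
  have h1 := log48_ge
  have h2 := log48_le
  rw [harmV90]
  push_cast
  linarith only [hs, h1, h2]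

theorem key91 : (91 : ℝ) * Real.log 91 * ((10782212182893138320231 : ℝ)/63245806209101973600) ≤ 48 * Real.log 48 * (((harmonic 91 : ℚ) : ℝ) + ((harmonic 91 : ℚ) : ℝ) * 91 - 91) := by
  have hs : Real.log ((91:ℝ)/48) ≤ (((646094481 : ℝ)/1000000000)) :=
    lnUB 32 (by norm_num) (by norm_num) (by norm_num) (by norm_num)
  rw [Real.log_div (by norm_num) (by norm_num)] at hs
  have h1 := log48_ge
  have h2 := log48_le
  rw [harmV91]
  push_cast
  linarith only [hs, h1, h2]

theorem key92 : (92 : ℝ) * Real.log 92 * ((10782212182893138320231 : ℝ)/63245806209101973600) ≤ 48 * Real.log 48 * (((harmonic 92 : ℚ) : ℝ) + ((harmonic 92 : ℚ) : ℝ) * 92 - 92) := by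
  have hs : Real.log ((92:ℝ)/48) ≤ (((657246119 : ℝ)/1000000000)) :=
    lnUB 32 (by norm_num) (by norm_num) (by norm_num) (by norm_num)
  rw [Real.log_div (by norm_num) (by norm_num)] at hs
  have h1 := log48_ge
  have h2 := log48_le
  rw [harmV92]
  push_cast
  linarith only [hs, h1, h2]

theorem key93 : (93 : ℝ) * Real.log 93 * ((10782212182893138320231 : ℝ)/63245806209101973600) ≤ 48 * Real.log 48 * (((harmonic 93 : ℚ) : ℝ) + ((harmonic 93 : ℚ) : ℝ) * 93 - 93) := by
  have hs : Real.log ((93:ℝ)/48) ≤ (((668280943 : ℝ)/1000000000)) :=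
    lnUB 32 (by norm_num) (by norm_num) (by norm_num) (by norm_num)
  rw [Real.log_div (by norm_num) (by norm_num)] at hs
  have h1 := log48_ge
  have h2 := log48_le
  rw [harmV93]
  push_cast
  linarith only [hs, h1, h2]

theorem key94 : (94 : ℝ) * Real.log 94 * ((10782212182893138320231 : ℝ)/63245806209101973600) ≤ 48 * Real.log 48 * (((harmonic 94 : ℚ) : ℝ) + ((harmonic 94 : ℚ) : ℝ) * 94 - 94) := by
  have hs : Real.log ((94:ℝ)/48) ≤ (((135840283 : ℝ)/200000000)) :=
    lnUB 32 (by norm_num) (by norm_num) (by norm_num) (by norm_num)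
  rw [Real.log_div (by norm_num) (by norm_num)] at hs
  have h1 := log48_ge
  have h2 := log48_le
  rw [harmV94]
  push_cast
  linarith only [hs, h1, h2]

theorem key95 : (95 : ℝ) * Real.log 95 * ((10782212182893138320231 : ℝ)/63245806209101973600) ≤ 48 * Real.log 48 * (((harmonic 95 : ℚ) : ℝ) + ((harmonic 95 : ℚ) : ℝ) * 95 - 95) := by
  have hs : Real.log ((95:ℝ)/48) ≤ (((345004959 : ℝ)/500000000)) :=
    lnUB 32 (by norm_num) (by norm_num) (by norm_num) (by norm_num)
  rw [Real.log_div (by norm_num) (by norm_num)] at hs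
  have h1 := log48_ge
  have h2 := log48_le
  rw [harmV95]
  push_cast
  linarith only [hs, h1, h2]

theorem key96 : (96 : ℝ) * Real.log 96 * ((10782212182893138320231 : ℝ)/63245806209101973600) ≤ 48 * Real.log 48 * (((harmonic 96 : ℚ) : ℝ) + ((harmonic 96 : ℚ) : ℝ) * 96 - 96) := by
  have hs : Real.log ((96:ℝ)/48) ≤ (((350354379 : ℝ)/500000000)) :=
    lnUB 32 (by norm_num) (by norm_num) (by norm_num) (by norm_num)
  rw [Real.log_div (by norm_num) (by norm_num)] at hs
  have h1 := log48_ge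
  have h2 := log48_le
  rw [harmV96]
  push_cast
  linarith only [hs, h1, h2]

theorem key97 : (97 : ℝ) * Real.log 97 * ((10782212182893138320231 : ℝ)/63245806209101973600) ≤ 48 * Real.log 48 * (((harmonic 97 : ℚ) : ℝ) + ((harmonic 97 : ℚ) : ℝ) * 97 - 97) := by
  have hs : Real.log ((97:ℝ)/48) ≤ (((44456261 : ℝ)/62500000)) :=
    lnUB 32 (by norm_num) (by norm_num) (by norm_num) (by norm_num)
  rw [Real.log_div (by norm_num) (by norm_num)] at hs
  have h1 := log48_ge
  have h2 := log48_le
  rw [harmV97]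
  push_cast
  linarith only [hs, h1, h2]

theorem key98 : (98 : ℝ) * Real.log 98 * ((10782212182893138320231 : ℝ)/63245806209101973600) ≤ 48 * Real.log 48 * (((harmonic 98 : ℚ) : ℝ) + ((harmonic 98 : ℚ) : ℝ) * 98 - 98) := by
  have hs : Real.log ((98:ℝ)/48) ≤ (((721786339 : ℝ)/1000000000)) :=
    lnUB 32 (by norm_num) (by norm_num) (by norm_num) (by norm_num)
  rw [Real.log_div (by norm_num) (by norm_num)] at hs
  have h1 := log48_ge
  have h2 := log48_le
  rw [harmV98]
  push_cast
  linarith only [hs, h1, h2]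

theorem key99 : (99 : ℝ) * Real.log 99 * ((10782212182893138320231 : ℝ)/63245806209101973600) ≤ 48 * Real.log 48 * (((harmonic 99 : ℚ) : ℝ) + ((harmonic 99 : ℚ) : ℝ) * 99 - 99) := by
  have hs : Real.log ((99:ℝ)/48) ≤ (((732169353 : ℝ)/1000000000)) :=
    lnUB 32 (by norm_num) (by norm_num) (by norm_num) (by norm_num)
  rw [Real.log_div (by norm_num) (by norm_num)] at hs
  have h1 := log48_ge
  have h2 := log48_le
  rw [harmV99]
  push_cast
  linarith only [hs, h1, h2]

theorem key100 : (100 : ℝ) * Real.log 100 * ((10782212182893138320231 : ℝ)/63245806209101973600) ≤ 48 * Real.log 48 * (((harmonic 100 : ℚ) : ℝ) + ((harmonic 100 : ℚ) : ℝ) * 100 - 100) := by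
  have hs : Real.log ((100:ℝ)/48) ≤ (((371225629 : ℝ)/500000000)) :=
    lnUB 32 (by norm_num) (by norm_num) (by norm_num) (by norm_num)
  rw [Real.log_div (by norm_num) (by norm_num)] at hs
  have h1 := log48_ge
  have h2 := log48_le
  rw [harmV100]
  push_cast
  linarith only [hs, h1, h2]

theorem key101 : (101 : ℝ) * Real.log 101 * ((10782212182893138320231 : ℝ)/63245806209101973600) ≤ 48 * Real.log 48 * (((harmonic 101 : ℚ) : ℝ) + ((harmonic 101 : ℚ) : ℝ) * 101 - 101) := by
  have hs : Real.log ((101:ℝ)/48) ≤ (((150526807 : ℝ)/200000000)) :=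
    lnUB 32 (by norm_num) (by norm_num) (by norm_num) (by norm_num)
  rw [Real.log_div (by norm_num) (by norm_num)] at hs
  have h1 := log48_ge
  have h2 := log48_le
  rw [harmV101]
  push_cast
  linarith only [hs, h1, h2]

theorem key102 : (102 : ℝ) * Real.log 102 * ((10782212182893138320231 : ℝ)/63245806209101973600) ≤ 48 * Real.log 48 * (((harmonic 102 : ℚ) : ℝ) + ((harmonic 102 : ℚ) : ℝ) * 102 - 102) := by
  have hs : Real.log ((102:ℝ)/48) ≤ (((95339951 : ℝ)/125000000)) :=
    lnUB 32 (by norm_num) (by norm_num) (by norm_num) (by norm_num)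
  rw [Real.log_div (by norm_num) (by norm_num)] at hs
  have h1 := log48_ge
  have h2 := log48_le
  rw [harmV102]
  push_cast
  linarith only [hs, h1, h2]

theorem key103 : (103 : ℝ) * Real.log 103 * ((10782212182893138320231 : ℝ)/63245806209101973600) ≤ 48 * Real.log 48 * (((harmonic 103 : ℚ) : ℝ) + ((harmonic 103 : ℚ) : ℝ) * 103 - 103) := by
  have hs : Real.log ((103:ℝ)/48) ≤ (((154541969 : ℝ)/200000000)) :=
    lnUB 32 (by norm_num) (by norm_num) (by norm_num) (by norm_num)
  rw [Real.log_div (by norm_num) (by norm_num)] at hs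
  have h1 := log48_ge
  have h2 := log48_le
  rw [harmV103]
  push_cast
  linarith only [hs, h1, h2]

theorem key104 : (104 : ℝ) * Real.log 104 * ((10782212182893138320231 : ℝ)/63245806209101973600) ≤ 48 * Real.log 48 * (((harmonic 104 : ℚ) : ℝ) + ((harmonic 104 : ℚ) : ℝ) * 104 - 104) := by
  have hs : Real.log ((104:ℝ)/48) ≤ (((782606557 : ℝ)/1000000000)) :=
    lnUB 32 (by norm_num) (by norm_num) (by norm_num) (by norm_num)
  rw [Real.log_div (by norm_num) (by norm_num)] at hs
  have h1 := log48_ge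
  have h2 := log48_le
  rw [harmV104]
  push_cast
  linarith only [hs, h1, h2]

theorem key105 : (105 : ℝ) * Real.log 105 * ((10782212182893138320231 : ℝ)/63245806209101973600) ≤ 48 * Real.log 48 * (((harmonic 105 : ℚ) : ℝ) + ((harmonic 105 : ℚ) : ℝ) * 105 - 105) := by
  have hs : Real.log ((105:ℝ)/48) ≤ (((792411509 : ℝ)/1000000000)) :=
    lnUB 32 (by norm_num) (by norm_num) (by norm_num) (by norm_num)
  rw [Real.log_div (by norm_num) (by norm_num)] at hs
  have h1 := log48_ge
  have h2 := log48_le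
  rw [harmV105]
  push_cast
  linarith only [hs, h1, h2]

theorem key106 : (106 : ℝ) * Real.log 106 * ((10782212182893138320231 : ℝ)/63245806209101973600) ≤ 48 * Real.log 48 * (((harmonic 106 : ℚ) : ℝ) + ((harmonic 106 : ℚ) : ℝ) * 106 - 106) := by
  have hs : Real.log ((106:ℝ)/48) ≤ (((802126413 : ℝ)/1000000000)) :=
    lnUB 32 (by norm_num) (by norm_num) (by norm_num) (by norm_num)
  rw [Real.log_div (by norm_num) (by norm_num)] at hs
  have h1 := log48_ge
  have h2 := log48_le
  rw [harmV106]
  push_cast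
  linarith only [hs, h1, h2]

theorem key107 : (107 : ℝ) * Real.log 107 * ((10782212182893138320231 : ℝ)/63245806209101973600) ≤ 48 * Real.log 48 * (((harmonic 107 : ℚ) : ℝ) + ((harmonic 107 : ℚ) : ℝ) * 107 - 107) := by
  have hs : Real.log ((107:ℝ)/48) ≤ (((811752933 : ℝ)/1000000000)) :=
    lnUB 32 (by norm_num) (by norm_num) (by norm_num) (by norm_num)
  rw [Real.log_div (by norm_num) (by norm_num)] at hs
  have h1 := log48_ge
  have h2 := log48_le
  rw [harmV107]
  push_cast
  linarith only [hs, h1, h2]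

theorem key108 : (108 : ℝ) * Real.log 108 * ((10782212182893138320231 : ℝ)/63245806209101973600) ≤ 48 * Real.log 48 * (((harmonic 108 : ℚ) : ℝ) + ((harmonic 108 : ℚ) : ℝ) * 108 - 108) := by
  have hs : Real.log ((108:ℝ)/48) ≤ (((51330793 : ℝ)/62500000)) :=
    lnUB 32 (by norm_num) (by norm_num) (by norm_num) (by norm_num)
  rw [Real.log_div (by norm_num) (by norm_num)] at hs
  have h1 := log48_ge
  have h2 := log48_le
  rw [harmV108]
  push_cast
  linarith only [hs, h1, h2]

theorem key109 : (109 : ℝ) * Real.log 109 * ((10782212182893138320231 : ℝ)/63245806209101973600) ≤ 48 * Real.log 48 * (((harmonic 109 : ℚ) : ℝ) + ((harmonic 109 : ℚ) : ℝ) * 109 - 109) := by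
  have hs : Real.log ((109:ℝ)/48) ≤ (((415373627 : ℝ)/500000000)) :=
    lnUB 32 (by norm_num) (by norm_num) (by norm_num) (by norm_num)
  rw [Real.log_div (by norm_num) (by norm_num)] at hs
  have h1 := log48_ge
  have h2 := log48_le
  rw [harmV109]
  push_cast
  linarith only [hs, h1, h2]

theorem key110 : (110 : ℝ) * Real.log 110 * ((10782212182893138320231 : ℝ)/63245806209101973600) ≤ 48 * Real.log 48 * (((harmonic 110 : ℚ) : ℝ) + ((harmonic 110 : ℚ) : ℝ) * 110 - 110) := by
  have hs : Real.log ((110:ℝ)/48) ≤ (((420059081 : ℝ)/500000000)) :=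
    lnUB 32 (by norm_num) (by norm_num) (by norm_num) (by norm_num)
  rw [Real.log_div (by norm_num) (by norm_num)] at hs
  have h1 := log48_ge
  have h2 := log48_le
  rw [harmV110]
  push_cast
  linarith only [hs, h1, h2]

theorem key111 : (111 : ℝ) * Real.log 111 * ((10782212182893138320231 : ℝ)/63245806209101973600) ≤ 48 * Real.log 48 * (((harmonic 111 : ℚ) : ℝ) + ((harmonic 111 : ℚ) : ℝ) * 111 - 111) := by
  have hs : Real.log ((111:ℝ)/48) ≤ (((424703451 : ℝ)/500000000)) :=
    lnUB 32 (by norm_num) (by norm_num) (by norm_num) (by norm_num)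
  rw [Real.log_div (by norm_num) (by norm_num)] at hs
  have h1 := log48_ge
  have h2 := log48_le
  rw [harmV111]
  push_cast
  linarith only [hs, h1, h2]

theorem key112 : (112 : ℝ) * Real.log 112 * ((10782212182893138320231 : ℝ)/63245806209101973600) ≤ 48 * Real.log 48 * (((harmonic 112 : ℚ) : ℝ) + ((harmonic 112 : ℚ) : ℝ) * 112 - 112) := by
  have hs : Real.log ((112:ℝ)/48) ≤ (((858614927 : ℝ)/1000000000)) :=
    lnUB 32 (by norm_num) (by norm_num) (by norm_num) (by norm_num)
  rw [Real.log_div (by norm_num) (by norm_num)] at hs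
  have h1 := log48_ge
  have h2 := log48_le
  rw [harmV112]
  push_cast
  linarith only [hs, h1, h2]

theorem key113 : (113 : ℝ) * Real.log 113 * ((10782212182893138320231 : ℝ)/63245806209101973600) ≤ 48 * Real.log 48 * (((harmonic 113 : ℚ) : ℝ) + ((harmonic 113 : ℚ) : ℝ) * 113 - 113) := by
  have hs : Real.log ((113:ℝ)/48) ≤ (((27116989 : ℝ)/31250000)) :=
    lnUB 32 (by norm_num) (by norm_num) (by norm_num) (by norm_num)
  rw [Real.log_div (by norm_num) (by norm_num)] at hs
  have h1 := log48_ge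
  have h2 := log48_le
  rw [harmV113]
  push_cast
  linarith only [hs, h1, h2]

theorem key114 : (114 : ℝ) * Real.log 114 * ((10782212182893138320231 : ℝ)/63245806209101973600) ≤ 48 * Real.log 48 * (((harmonic 114 : ℚ) : ℝ) + ((harmonic 114 : ℚ) : ℝ) * 114 - 114) := by
  have hs : Real.log ((114:ℝ)/48) ≤ (((876794441 : ℝ)/1000000000)) :=
    lnUB 32 (by norm_num) (by norm_num) (by norm_num) (by norm_num)
  rw [Real.log_div (by norm_num) (by norm_num)] at hs
  have h1 := log48_ge
  have h2 := log48_le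
  rw [harmV114]
  push_cast
  linarith only [hs, h1, h2]

theorem key115 : (115 : ℝ) * Real.log 115 * ((10782212182893138320231 : ℝ)/63245806209101973600) ≤ 48 * Real.log 48 * (((harmonic 115 : ℚ) : ℝ) + ((harmonic 115 : ℚ) : ℝ) * 115 - 115) := by
  have hs : Real.log ((115:ℝ)/48) ≤ (((885768647 : ℝ)/1000000000)) :=
    lnUB 32 (by norm_num) (by norm_num) (by norm_num) (by norm_num)
  rw [Real.log_div (by norm_num) (by norm_num)] at hs
  have h1 := log48_ge
  have h2 := log48_le
  rw [harmV115]
  push_cast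
  linarith only [hs, h1, h2]

theorem key116 : (116 : ℝ) * Real.log 116 * ((10782212182893138320231 : ℝ)/63245806209101973600) ≤ 48 * Real.log 48 * (((harmonic 116 : ℚ) : ℝ) + ((harmonic 116 : ℚ) : ℝ) * 116 - 116) := by
  have hs : Real.log ((116:ℝ)/48) ≤ (((894667571 : ℝ)/1000000000)) :=
    lnUB 32 (by norm_num) (by norm_num) (by norm_num) (by norm_num)
  rw [Real.log_div (by norm_num) (by norm_num)] at hs
  have h1 := log48_ge
  have h2 := log48_le
  rw [harmV116]
  push_cast
  linarith only [hs, h1, h2]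

theorem key117 : (117 : ℝ) * Real.log 117 * ((10782212182893138320231 : ℝ)/63245806209101973600) ≤ 48 * Real.log 48 * (((harmonic 117 : ℚ) : ℝ) + ((harmonic 117 : ℚ) : ℝ) * 117 - 117) := by
  have hs : Real.log ((117:ℝ)/48) ≤ (((451746243 : ℝ)/500000000)) :=
    lnUB 32 (by norm_num) (by norm_num) (by norm_num) (by norm_num)
  rw [Real.log_div (by norm_num) (by norm_num)] at hs
  have h1 := log48_ge
  have h2 := log48_le
  rw [harmV117]
  push_cast
  linarith only [hs, h1, h2]

theorem key118 : (118 : ℝ) * Real.log 118 * ((10782212182893138320231 : ℝ)/63245806209101973600) ≤ 48 * Real.log 48 * (((harmonic 118 : ℚ) : ℝ) + ((harmonic 118 : ℚ) : ℝ) * 118 - 118) := by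
  have hs : Real.log ((118:ℝ)/48) ≤ (((912244631 : ℝ)/1000000000)) :=
    lnUB 32 (by norm_num) (by norm_num) (by norm_num) (by norm_num)
  rw [Real.log_div (by norm_num) (by norm_num)] at hs
  have h1 := log48_ge
  have h2 := log48_le
  rw [harmV118]
  push_cast
  linarith only [hs, h1, h2]

theorem key119 : (119 : ℝ) * Real.log 119 * ((10782212182893138320231 : ℝ)/63245806209101973600) ≤ 48 * Real.log 48 * (((harmonic 119 : ℚ) : ℝ) + ((harmonic 119 : ℚ) : ℝ) * 119 - 119) := by
  have hs : Real.log ((119:ℝ)/48) ≤ (((920925217 : ℝ)/1000000000)) :=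
    lnUB 32 (by norm_num) (by norm_num) (by norm_num) (by norm_num)
  rw [Real.log_div (by norm_num) (by norm_num)] at hs
  have h1 := log48_ge
  have h2 := log48_le
  rw [harmV119]
  push_cast
  linarith only [hs, h1, h2]

theorem key120 : (120 : ℝ) * Real.log 120 * ((10782212182893138320231 : ℝ)/63245806209101973600) ≤ 48 * Real.log 48 * (((harmonic 120 : ℚ) : ℝ) + ((harmonic 120 : ℚ) : ℝ) * 120 - 120) := by
  have hs : Real.log ((120:ℝ)/48) ≤ (((929535421 : ℝ)/1000000000)) :=
    lnUB 32 (by norm_num) (by norm_num) (by norm_num) (by norm_num)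
  rw [Real.log_div (by norm_num) (by norm_num)] at hs
  have h1 := log48_ge
  have h2 := log48_le
  rw [harmV120]
  push_cast
  linarith only [hs, h1, h2]

theorem key121 : (121 : ℝ) * Real.log 121 * ((10782212182893138320231 : ℝ)/63245806209101973600) ≤ 48 * Real.log 48 * (((harmonic 121 : ℚ) : ℝ) + ((harmonic 121 : ℚ) : ℝ) * 121 - 121) := by
  have hs : Real.log ((121:ℝ)/48) ≤ (((187615279 : ℝ)/200000000)) :=
    lnUB 32 (by norm_num) (by norm_num) (by norm_num) (by norm_num)
  rw [Real.log_div (by norm_num) (by norm_num)] at hs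
  have h1 := log48_ge
  have h2 := log48_le
  rw [harmV121]
  push_cast
  linarith only [hs, h1, h2]

theorem key122 : (122 : ℝ) * Real.log 122 * ((10782212182893138320231 : ℝ)/63245806209101973600) ≤ 48 * Real.log 48 * (((harmonic 122 : ℚ) : ℝ) + ((harmonic 122 : ℚ) : ℝ) * 122 - 122) := by
  have hs : Real.log ((122:ℝ)/48) ≤ (((47327463 : ℝ)/50000000)) :=
    lnUB 32 (by norm_num) (by norm_num) (by norm_num) (by norm_num)
  rw [Real.log_div (by norm_num) (by norm_num)] at hs
  have h1 := log48_ge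
  have h2 := log48_le
  rw [harmV122]
  push_cast
  linarith only [hs, h1, h2]

theorem key123 : (123 : ℝ) * Real.log 123 * ((10782212182893138320231 : ℝ)/63245806209101973600) ≤ 48 * Real.log 48 * (((harmonic 123 : ℚ) : ℝ) + ((harmonic 123 : ℚ) : ℝ) * 123 - 123) := by
  have hs : Real.log ((123:ℝ)/48) ≤ (((954955111 : ℝ)/1000000000)) :=
    lnUB 32 (by norm_num) (by norm_num) (by norm_num) (by norm_num)
  rw [Real.log_div (by norm_num) (by norm_num)] at hs
  have h1 := log48_ge
  have h2 := log48_le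
  rw [harmV123]
  push_cast
  linarith only [hs, h1, h2]

theorem key124 : (124 : ℝ) * Real.log 124 * ((10782212182893138320231 : ℝ)/63245806209101973600) ≤ 48 * Real.log 48 * (((harmonic 124 : ℚ) : ℝ) + ((harmonic 124 : ℚ) : ℝ) * 124 - 124) := by
  have hs : Real.log ((124:ℝ)/48) ≤ (((120411877 : ℝ)/125000000)) :=
    lnUB 32 (by norm_num) (by norm_num) (by norm_num) (by norm_num)
  rw [Real.log_div (by norm_num) (by norm_num)] at hs
  have h1 := log48_ge
  have h2 := log48_le
  rw [harmV124]
  push_cast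
  linarith only [hs, h1, h2]

theorem key125 : (125 : ℝ) * Real.log 125 * ((10782212182893138320231 : ℝ)/63245806209101973600) ≤ 48 * Real.log 48 * (((harmonic 125 : ℚ) : ℝ) + ((harmonic 125 : ℚ) : ℝ) * 125 - 125) := by
  have hs : Real.log ((125:ℝ)/48) ≤ (((485785009 : ℝ)/500000000)) :=
    lnUB 32 (by norm_num) (by norm_num) (by norm_num) (by norm_num)
  rw [Real.log_div (by norm_num) (by norm_num)] at hs
  have h1 := log48_ge
  have h2 := log48_le
  rw [harmV125]
  push_cast
  linarith only [hs, h1, h2]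

theorem key126 : (126 : ℝ) * Real.log 126 * ((10782212182893138320231 : ℝ)/63245806209101973600) ≤ 48 * Real.log 48 * (((harmonic 126 : ℚ) : ℝ) + ((harmonic 126 : ℚ) : ℝ) * 126 - 126) := by
  have hs : Real.log ((126:ℝ)/48) ≤ (((61236321 : ℝ)/62500000)) :=
    lnUB 32 (by norm_num) (by norm_num) (by norm_num) (by norm_num)
  rw [Real.log_div (by norm_num) (by norm_num)] at hs
  have h1 := log48_ge
  have h2 := log48_le
  rw [harmV126]
  push_cast
  linarith only [hs, h1, h2]

theorem key127 : (127 : ℝ) * Real.log 127 * ((10782212182893138320231 : ℝ)/63245806209101973600) ≤ 48 * Real.log 48 * (((harmonic 127 : ℚ) : ℝ) + ((harmonic 127 : ℚ) : ℝ) * 127 - 127) := by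
  have hs : Real.log ((127:ℝ)/48) ≤ (((246982341 : ℝ)/250000000)) :=
    lnUB 32 (by norm_num) (by norm_num) (by norm_num) (by norm_num)
  rw [Real.log_div (by norm_num) (by norm_num)] at hs
  have h1 := log48_ge
  have h2 := log48_le
  rw [harmV127]
  push_cast
  linarith only [hs, h1, h2]

theorem key128 : (128 : ℝ) * Real.log 128 * ((10782212182893138320231 : ℝ)/63245806209101973600) ≤ 48 * Real.log 48 * (((harmonic 128 : ℚ) : ℝ) + ((harmonic 128 : ℚ) : ℝ) * 128 - 128) := by
  have hs : Real.log ((128:ℝ)/48) ≤ (((996015673 : ℝ)/1000000000)) :=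
    lnUB 32 (by norm_num) (by norm_num) (by norm_num) (by norm_num)
  rw [Real.log_div (by norm_num) (by norm_num)] at hs
  have h1 := log48_ge
  have h2 := log48_le
  rw [harmV128]
  push_cast
  linarith only [hs, h1, h2]

theorem key129 : (129 : ℝ) * Real.log 129 * ((10782212182893138320231 : ℝ)/63245806209101973600) ≤ 48 * Real.log 48 * (((harmonic 129 : ℚ) : ℝ) + ((harmonic 129 : ℚ) : ℝ) * 129 - 129) := by
  have hs : Real.log ((129:ℝ)/48) ≤ (((251010253 : ℝ)/250000000)) :=
    lnUB 32 (by norm_num) (by norm_num) (by norm_num) (by norm_num)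
  rw [Real.log_div (by norm_num) (by norm_num)] at hs
  have h1 := log48_ge
  have h2 := log48_le
  rw [harmV129]
  push_cast
  linarith only [hs, h1, h2]

theorem key130 : (130 : ℝ) * Real.log 130 * ((10782212182893138320231 : ℝ)/63245806209101973600) ≤ 48 * Real.log 48 * (((harmonic 130 : ℚ) : ℝ) + ((harmonic 130 : ℚ) : ℝ) * 130 - 130) := by
  have hs : Real.log ((130:ℝ)/48) ≤ (((1012006309 : ℝ)/1000000000)) :=
    lnUB 32 (by norm_num) (by norm_num) (by norm_num) (by norm_num)
  rw [Real.log_div (by norm_num) (by norm_num)] at hs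
  have h1 := log48_ge
  have h2 := log48_le
  rw [harmV130]
  push_cast
  linarith only [hs, h1, h2]

theorem key131 : (131 : ℝ) * Real.log 131 * ((10782212182893138320231 : ℝ)/63245806209101973600) ≤ 48 * Real.log 48 * (((harmonic 131 : ℚ) : ℝ) + ((harmonic 131 : ℚ) : ℝ) * 131 - 131) := by
  have hs : Real.log ((131:ℝ)/48) ≤ (((254978117 : ℝ)/250000000)) :=
    lnUB 32 (by norm_num) (by norm_num) (by norm_num) (by norm_num)
  rw [Real.log_div (by norm_num) (by norm_num)] at hs
  have h1 := log48_ge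
  have h2 := log48_le
  rw [harmV131]
  push_cast
  linarith only [hs, h1, h2]

theorem key132 : (132 : ℝ) * Real.log 132 * ((10782212182893138320231 : ℝ)/63245806209101973600) ≤ 48 * Real.log 48 * (((harmonic 132 : ℚ) : ℝ) + ((harmonic 132 : ℚ) : ℝ) * 132 - 132) := by
  have hs : Real.log ((132:ℝ)/48) ≤ (((8222083 : ℝ)/8000000)) :=
    lnUB 32 (by norm_num) (by norm_num) (by norm_num) (by norm_num)
  rw [Real.log_div (by norm_num) (by norm_num)] at hs
  have h1 := log48_ge
  have h2 := log48_le
  rw [harmV132]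
  push_cast
  linarith only [hs, h1, h2]

theorem key133 : (133 : ℝ) * Real.log 133 * ((10782212182893138320231 : ℝ)/63245806209101973600) ≤ 48 * Real.log 48 * (((harmonic 133 : ℚ) : ℝ) + ((harmonic 133 : ℚ) : ℝ) * 133 - 133) := by
  have hs : Real.log ((133:ℝ)/48) ≤ (((1035550897 : ℝ)/1000000000)) :=
    lnUB 32 (by norm_num) (by norm_num) (by norm_num) (by norm_num)
  rw [Real.log_div (by norm_num) (by norm_num)] at hs
  have h1 := log48_ge
  have h2 := log48_le
  rw [harmV133]
  push_cast
  linarith only [hs, h1, h2]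

theorem key134 : (134 : ℝ) * Real.log 134 * ((10782212182893138320231 : ℝ)/63245806209101973600) ≤ 48 * Real.log 48 * (((harmonic 134 : ℚ) : ℝ) + ((harmonic 134 : ℚ) : ℝ) * 134 - 134) := by
  have hs : Real.log ((134:ℝ)/48) ≤ (((1043284879 : ℝ)/1000000000)) :=
    lnUB 32 (by norm_num) (by norm_num) (by norm_num) (by norm_num)
  rw [Real.log_div (by norm_num) (by norm_num)] at hs
  have h1 := log48_ge
  have h2 := log48_le
  rw [harmV134]
  push_cast
  linarith only [hs, h1, h2]

theorem key135 : (135 : ℝ) * Real.log 135 * ((10782212182893138320231 : ℝ)/63245806209101973600) ≤ 48 * Real.log 48 * (((harmonic 135 : ℚ) : ℝ) + ((harmonic 135 : ℚ) : ℝ) * 135 - 135) := by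
  have hs : Real.log ((135:ℝ)/48) ≤ (((21019263 : ℝ)/20000000)) :=
    lnUB 32 (by norm_num) (by norm_num) (by norm_num) (by norm_num)
  rw [Real.log_div (by norm_num) (by norm_num)] at hs
  have h1 := log48_ge
  have h2 := log48_le
  rw [harmV135]
  push_cast
  linarith only [hs, h1, h2]

theorem key136 : (136 : ℝ) * Real.log 136 * ((10782212182893138320231 : ℝ)/63245806209101973600) ≤ 48 * Real.log 48 * (((harmonic 136 : ℚ) : ℝ) + ((harmonic 136 : ℚ) : ℝ) * 136 - 136) := by
  have hs : Real.log ((136:ℝ)/48) ≤ (((529293259 : ℝ)/500000000)) :=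
    lnUB 32 (by norm_num) (by norm_num) (by norm_num) (by norm_num)
  rw [Real.log_div (by norm_num) (by norm_num)] at hs
  have h1 := log48_ge
  have h2 := log48_le
  rw [harmV136]
  push_cast
  linarith only [hs, h1, h2]

theorem key137 : (137 : ℝ) * Real.log 137 * ((10782212182893138320231 : ℝ)/63245806209101973600) ≤ 48 * Real.log 48 * (((harmonic 137 : ℚ) : ℝ) + ((harmonic 137 : ℚ) : ℝ) * 137 - 137) := by
  have hs : Real.log ((137:ℝ)/48) ≤ (((4164671 : ℝ)/3906250)) :=
    lnUB 32 (by norm_num) (by norm_num) (by norm_num) (by norm_num)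
  rw [Real.log_div (by norm_num) (by norm_num)] at hs
  have h1 := log48_ge
  have h2 := log48_le
  rw [harmV137]
  push_cast
  linarith only [hs, h1, h2]

theorem key138 : (138 : ℝ) * Real.log 138 * ((10782212182893138320231 : ℝ)/63245806209101973600) ≤ 48 * Real.log 48 * (((harmonic 138 : ℚ) : ℝ) + ((harmonic 138 : ℚ) : ℝ) * 138 - 138) := by
  have hs : Real.log ((138:ℝ)/48) ≤ (((1073671699 : ℝ)/1000000000)) :=
    lnUB 32 (by norm_num) (by norm_num) (by norm_num) (by norm_num)
  rw [Real.log_div (by norm_num) (by norm_num)] at hs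
  have h1 := log48_ge
  have h2 := log48_le
  rw [harmV138]
  push_cast
  linarith only [hs, h1, h2]

theorem key139 : (139 : ℝ) * Real.log 139 * ((10782212182893138320231 : ℝ)/63245806209101973600) ≤ 48 * Real.log 48 * (((harmonic 139 : ℚ) : ℝ) + ((harmonic 139 : ℚ) : ℝ) * 139 - 139) := by
  have hs : Real.log ((139:ℝ)/48) ≤ (((270283761 : ℝ)/250000000)) :=
    lnUB 32 (by norm_num) (by norm_num) (by norm_num) (by norm_num)
  rw [Real.log_div (by norm_num) (by norm_num)] at hs
  have h1 := log48_ge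
  have h2 := log48_le
  rw [harmV139]
  push_cast
  linarith only [hs, h1, h2]

theorem key140 : (140 : ℝ) * Real.log 140 * ((10782212182893138320231 : ℝ)/63245806209101973600) ≤ 48 * Real.log 48 * (((harmonic 140 : ℚ) : ℝ) + ((harmonic 140 : ℚ) : ℝ) * 140 - 140) := by
  have hs : Real.log ((140:ℝ)/48) ≤ (((217709311 : ℝ)/200000000)) :=
    lnUB 32 (by norm_num) (by norm_num) (by norm_num) (by norm_num)
  rw [Real.log_div (by norm_num) (by norm_num)] at hs
  have h1 := log48_ge
  have h2 := log48_le
  rw [harmV140]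
  push_cast
  linarith only [hs, h1, h2]

theorem key141 : (141 : ℝ) * Real.log 141 * ((10782212182893138320231 : ℝ)/63245806209101973600) ≤ 48 * Real.log 48 * (((harmonic 141 : ℚ) : ℝ) + ((harmonic 141 : ℚ) : ℝ) * 141 - 141) := by
  have hs : Real.log ((141:ℝ)/48) ≤ (((273976739 : ℝ)/250000000)) :=
    lnUB 32 (by norm_num) (by norm_num) (by norm_num) (by norm_num)
  rw [Real.log_div (by norm_num) (by norm_num)] at hs
  have h1 := log48_ge
  have h2 := log48_le
  rw [harmV141]
  push_cast
  linarith only [hs, h1, h2]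

theorem key142 : (142 : ℝ) * Real.log 142 * ((10782212182893138320231 : ℝ)/63245806209101973600) ≤ 48 * Real.log 48 * (((harmonic 142 : ℚ) : ℝ) + ((harmonic 142 : ℚ) : ℝ) * 142 - 142) := by
  have hs : Real.log ((142:ℝ)/48) ≤ (((1103216961 : ℝ)/1000000000)) :=
    lnUB 32 (by norm_num) (by norm_num) (by norm_num) (by norm_num)
  rw [Real.log_div (by norm_num) (by norm_num)] at hs
  have h1 := log48_ge
  have h2 := log48_le
  rw [harmV142]
  push_cast
  linarith only [hs, h1, h2]

theorem key143 : (143 : ℝ) * Real.log 143 * ((10782212182893138320231 : ℝ)/63245806209101973600) ≤ 48 * Real.log 48 * (((harmonic 143 : ℚ) : ℝ) + ((harmonic 143 : ℚ) : ℝ) * 143 - 143) := by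
  have hs : Real.log ((143:ℝ)/48) ≤ (((69404829 : ℝ)/62500000)) :=
    lnUB 32 (by norm_num) (by norm_num) (by norm_num) (by norm_num)
  rw [Real.log_div (by norm_num) (by norm_num)] at hs
  have h1 := log48_ge
  have h2 := log48_le
  rw [harmV143]
  push_cast
  linarith only [hs, h1, h2]

theorem key144 : (144 : ℝ) * Real.log 144 * ((10782212182893138320231 : ℝ)/63245806209101973600) ≤ 48 * Real.log 48 * (((harmonic 144 : ℚ) : ℝ) + ((harmonic 144 : ℚ) : ℝ) * 144 - 144) := by
  have hs : Real.log ((144:ℝ)/48) ≤ (((279422137 : ℝ)/250000000)) :=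
    lnUB 32 (by norm_num) (by norm_num) (by norm_num) (by norm_num)
  rw [Real.log_div (by norm_num) (by norm_num)] at hs
  have h1 := log48_ge
  have h2 := log48_le
  rw [harmV144]
  push_cast
  linarith only [hs, h1, h2]

theorem key145 : (145 : ℝ) * Real.log 145 * ((10782212182893138320231 : ℝ)/63245806209101973600) ≤ 48 * Real.log 48 * (((harmonic 145 : ℚ) : ℝ) + ((harmonic 145 : ℚ) : ℝ) * 145 - 145) := by
  have hs : Real.log ((145:ℝ)/48) ≤ (((1124851481 : ℝ)/1000000000)) :=
    lnUB 32 (by norm_num) (by norm_num) (by norm_num) (by norm_num)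
  rw [Real.log_div (by norm_num) (by norm_num)] at hs
  have h1 := log48_ge
  have h2 := log48_le
  rw [harmV145]
  push_cast
  linarith only [hs, h1, h2]

theorem key146 : (146 : ℝ) * Real.log 146 * ((10782212182893138320231 : ℝ)/63245806209101973600) ≤ 48 * Real.log 48 * (((harmonic 146 : ℚ) : ℝ) + ((harmonic 146 : ℚ) : ℝ) * 146 - 146) := by
  have hs : Real.log ((146:ℝ)/48) ≤ (((1131966717 : ℝ)/1000000000)) :=
    lnUB 32 (by norm_num) (by norm_num) (by norm_num) (by norm_num)
  rw [Real.log_div (by norm_num) (by norm_num)] at hs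
  have h1 := log48_ge
  have h2 := log48_le
  rw [harmV146]
  push_cast
  linarith only [hs, h1, h2]

theorem key147 : (147 : ℝ) * Real.log 147 * ((10782212182893138320231 : ℝ)/63245806209101973600) ≤ 48 * Real.log 48 * (((harmonic 147 : ℚ) : ℝ) + ((harmonic 147 : ℚ) : ℝ) * 147 - 147) := by
  have hs : Real.log ((147:ℝ)/48) ≤ (((1139034897 : ℝ)/1000000000)) :=
    lnUB 32 (by norm_num) (by norm_num) (by norm_num) (by norm_num)
  rw [Real.log_div (by norm_num) (by norm_num)] at hs
  have h1 := log48_ge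
  have h2 := log48_le
  rw [harmV147]
  push_cast
  linarith only [hs, h1, h2]

theorem key148 : (148 : ℝ) * Real.log 148 * ((10782212182893138320231 : ℝ)/63245806209101973600) ≤ 48 * Real.log 48 * (((harmonic 148 : ℚ) : ℝ) + ((harmonic 148 : ℚ) : ℝ) * 148 - 148) := by
  have hs : Real.log ((148:ℝ)/48) ≤ (((22921133 : ℝ)/20000000)) :=
    lnUB 32 (by norm_num) (by norm_num) (by norm_num) (by norm_num)
  rw [Real.log_div (by norm_num) (by norm_num)] at hs
  have h1 := log48_ge
  have h2 := log48_le
  rw [harmV148]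
  push_cast
  linarith only [hs, h1, h2]

theorem key149 : (149 : ℝ) * Real.log 149 * ((10782212182893138320231 : ℝ)/63245806209101973600) ≤ 48 * Real.log 48 * (((harmonic 149 : ℚ) : ℝ) + ((harmonic 149 : ℚ) : ℝ) * 149 - 149) := by
  have hs : Real.log ((149:ℝ)/48) ≤ (((1153032591 : ℝ)/1000000000)) :=
    lnUB 32 (by norm_num) (by norm_num) (by norm_num) (by norm_num)
  rw [Real.log_div (by norm_num) (by norm_num)] at hs
  have h1 := log48_ge
  have h2 := log48_le
  rw [harmV149]
  push_cast
  linarith only [hs, h1, h2]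

theorem key150 : (150 : ℝ) * Real.log 150 * ((10782212182893138320231 : ℝ)/63245806209101973600) ≤ 48 * Real.log 48 * (((harmonic 150 : ℚ) : ℝ) + ((harmonic 150 : ℚ) : ℝ) * 150 - 150) := by
  have hs : Real.log ((150:ℝ)/48) ≤ (((1159963323 : ℝ)/1000000000)) :=
    lnUB 32 (by norm_num) (by norm_num) (by norm_num) (by norm_num)
  rw [Real.log_div (by norm_num) (by norm_num)] at hs
  have h1 := log48_ge
  have h2 := log48_le
  rw [harmV150]
  push_cast
  linarith only [hs, h1, h2]

theorem key151 : (151 : ℝ) * Real.log 151 * ((10782212182893138320231 : ℝ)/63245806209101973600) ≤ 48 * Real.log 48 * (((harmonic 151 : ℚ) : ℝ) + ((harmonic 151 : ℚ) : ℝ) * 151 - 151) := by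
  have hs : Real.log ((151:ℝ)/48) ≤ (((1166849437 : ℝ)/1000000000)) :=
    lnUB 32 (by norm_num) (by norm_num) (by norm_num) (by norm_num)
  rw [Real.log_div (by norm_num) (by norm_num)] at hs
  have h1 := log48_ge
  have h2 := log48_le
  rw [harmV151]
  push_cast
  linarith only [hs, h1, h2]

theorem key152 : (152 : ℝ) * Real.log 152 * ((10782212182893138320231 : ℝ)/63245806209101973600) ≤ 48 * Real.log 48 * (((harmonic 152 : ℚ) : ℝ) + ((harmonic 152 : ℚ) : ℝ) * 152 - 152) := by
  have hs : Real.log ((152:ℝ)/48) ≤ (((234738303 : ℝ)/200000000)) :=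
    lnUB 32 (by norm_num) (by norm_num) (by norm_num) (by norm_num)
  rw [Real.log_div (by norm_num) (by norm_num)] at hs
  have h1 := log48_ge
  have h2 := log48_le
  rw [harmV152]
  push_cast
  linarith only [hs, h1, h2]

theorem key153 : (153 : ℝ) * Real.log 153 * ((10782212182893138320231 : ℝ)/63245806209101973600) ≤ 48 * Real.log 48 * (((harmonic 153 : ℚ) : ℝ) + ((harmonic 153 : ℚ) : ℝ) * 153 - 153) := by
  have hs : Real.log ((153:ℝ)/48) ≤ (((1180490123 : ℝ)/1000000000)) :=
    lnUB 32 (by norm_num) (by norm_num) (by norm_num) (by norm_num)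
  rw [Real.log_div (by norm_num) (by norm_num)] at hs
  have h1 := log48_ge
  have h2 := log48_le
  rw [harmV153]
  push_cast
  linarith only [hs, h1, h2]

theorem key154 : (154 : ℝ) * Real.log 154 * ((10782212182893138320231 : ℝ)/63245806209101973600) ≤ 48 * Real.log 48 * (((harmonic 154 : ℚ) : ℝ) + ((harmonic 154 : ℚ) : ℝ) * 154 - 154) := by
  have hs : Real.log ((154:ℝ)/48) ≤ (((59362291 : ℝ)/50000000)) :=
    lnUB 32 (by norm_num) (by norm_num) (by norm_num) (by norm_num)
  rw [Real.log_div (by norm_num) (by norm_num)] at hs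
  have h1 := log48_ge
  have h2 := log48_le
  rw [harmV154]
  push_cast
  linarith only [hs, h1, h2]

theorem key155 : (155 : ℝ) * Real.log 155 * ((10782212182893138320231 : ℝ)/63245806209101973600) ≤ 48 * Real.log 48 * (((harmonic 155 : ℚ) : ℝ) + ((harmonic 155 : ℚ) : ℝ) * 155 - 155) := by
  have hs : Real.log ((155:ℝ)/48) ≤ (((1193959153 : ℝ)/1000000000)) :=
    lnUB 32 (by norm_num) (by norm_num) (by norm_num) (by norm_num)
  rw [Real.log_div (by norm_num) (by norm_num)] at hs
  have h1 := log48_ge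
  have h2 := log48_le
  rw [harmV155]
  push_cast
  linarith only [hs, h1, h2]

theorem key156 : (156 : ℝ) * Real.log 156 * ((10782212182893138320231 : ℝ)/63245806209101973600) ≤ 48 * Real.log 48 * (((harmonic 156 : ℚ) : ℝ) + ((harmonic 156 : ℚ) : ℝ) * 156 - 156) := by
  have hs : Real.log ((156:ℝ)/48) ≤ (((1200630659 : ℝ)/1000000000)) :=
    lnUB 32 (by norm_num) (by norm_num) (by norm_num) (by norm_num)
  rw [Real.log_div (by norm_num) (by norm_num)] at hs
  have h1 := log48_ge
  have h2 := log48_le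
  rw [harmV156]
  push_cast
  linarith only [hs, h1, h2]

theorem key157 : (157 : ℝ) * Real.log 157 * ((10782212182893138320231 : ℝ)/63245806209101973600) ≤ 48 * Real.log 48 * (((harmonic 157 : ℚ) : ℝ) + ((harmonic 157 : ℚ) : ℝ) * 157 - 157) := by
  have hs : Real.log ((157:ℝ)/48) ≤ (((603630431 : ℝ)/500000000)) :=
    lnUB 32 (by norm_num) (by norm_num) (by norm_num) (by norm_num)
  rw [Real.log_div (by norm_num) (by norm_num)] at hs
  have h1 := log48_ge
  have h2 := log48_le
  rw [harmV157]
  push_cast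
  linarith only [hs, h1, h2]

theorem key158 : (158 : ℝ) * Real.log 158 * ((10782212182893138320231 : ℝ)/63245806209101973600) ≤ 48 * Real.log 48 * (((harmonic 158 : ℚ) : ℝ) + ((harmonic 158 : ℚ) : ℝ) * 158 - 158) := by
  have hs : Real.log ((158:ℝ)/48) ≤ (((30346257 : ℝ)/25000000)) :=
    lnUB 32 (by norm_num) (by norm_num) (by norm_num) (by norm_num)
  rw [Real.log_div (by norm_num) (by norm_num)] at hs
  have h1 := log48_ge
  have h2 := log48_le
  rw [harmV158]
  push_cast
  linarith only [hs, h1, h2]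

theorem key159 : (159 : ℝ) * Real.log 159 * ((10782212182893138320231 : ℝ)/63245806209101973600) ≤ 48 * Real.log 48 * (((harmonic 159 : ℚ) : ℝ) + ((harmonic 159 : ℚ) : ℝ) * 159 - 159) := by
  have hs : Real.log ((159:ℝ)/48) ≤ (((1220399419 : ℝ)/1000000000)) :=
    lnUB 32 (by norm_num) (by norm_num) (by norm_num) (by norm_num)
  rw [Real.log_div (by norm_num) (by norm_num)] at hs
  have h1 := log48_ge
  have h2 := log48_le
  rw [harmV159]
  push_cast
  linarith only [hs, h1, h2]

theorem key160 : (160 : ℝ) * Real.log 160 * ((10782212182893138320231 : ℝ)/63245806209101973600) ≤ 48 * Real.log 48 * (((harmonic 160 : ℚ) : ℝ) + ((harmonic 160 : ℚ) : ℝ) * 160 - 160) := by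
  have hs : Real.log ((160:ℝ)/48) ≤ (((1226908777 : ℝ)/1000000000)) :=
    lnUB 32 (by norm_num) (by norm_num) (by norm_num) (by norm_num)
  rw [Real.log_div (by norm_num) (by norm_num)] at hs
  have h1 := log48_ge
  have h2 := log48_le
  rw [harmV160]
  push_cast
  linarith only [hs, h1, h2]

theorem key161 : (161 : ℝ) * Real.log 161 * ((10782212182893138320231 : ℝ)/63245806209101973600) ≤ 48 * Real.log 48 * (((harmonic 161 : ℚ) : ℝ) + ((harmonic 161 : ℚ) : ℝ) * 161 - 161) := by
  have hs : Real.log ((161:ℝ)/48) ≤ (((616689421 : ℝ)/500000000)) :=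
    lnUB 32 (by norm_num) (by norm_num) (by norm_num) (by norm_num)
  rw [Real.log_div (by norm_num) (by norm_num)] at hs
  have h1 := log48_ge
  have h2 := log48_le
  rw [harmV161]
  push_cast
  linarith only [hs, h1, h2]

theorem key162 : (162 : ℝ) * Real.log 162 * ((10782212182893138320231 : ℝ)/63245806209101973600) ≤ 48 * Real.log 48 * (((harmonic 162 : ℚ) : ℝ) + ((harmonic 162 : ℚ) : ℝ) * 162 - 162) := by
  have hs : Real.log ((162:ℝ)/48) ≤ (((309952523 : ℝ)/250000000)) :=
    lnUB 32 (by norm_num) (by norm_num) (by norm_num) (by norm_num)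
  rw [Real.log_div (by norm_num) (by norm_num)] at hs
  have h1 := log48_ge
  have h2 := log48_le
  rw [harmV162]
  push_cast
  linarith only [hs, h1, h2]

theorem key163 : (163 : ℝ) * Real.log 163 * ((10782212182893138320231 : ℝ)/63245806209101973600) ≤ 48 * Real.log 48 * (((harmonic 163 : ℚ) : ℝ) + ((harmonic 163 : ℚ) : ℝ) * 163 - 163) := by
  have hs : Real.log ((163:ℝ)/48) ≤ (((623101499 : ℝ)/500000000)) :=
    lnUB 32 (by norm_num) (by norm_num) (by norm_num) (by norm_num)
  rw [Real.log_div (by norm_num) (by norm_num)] at hs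
  have h1 := log48_ge
  have h2 := log48_le
  rw [harmV163]
  push_cast
  linarith only [hs, h1, h2]

theorem key164 : (164 : ℝ) * Real.log 164 * ((10782212182893138320231 : ℝ)/63245806209101973600) ≤ 48 * Real.log 48 * (((harmonic 164 : ℚ) : ℝ) + ((harmonic 164 : ℚ) : ℝ) * 164 - 164) := by
  have hs : Real.log ((164:ℝ)/48) ≤ (((626279011 : ℝ)/500000000)) :=
    lnUB 32 (by norm_num) (by norm_num) (by norm_num) (by norm_num)
  rw [Real.log_div (by norm_num) (by norm_num)] at hs
  have h1 := log48_ge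
  have h2 := log48_le
  rw [harmV164]
  push_cast
  linarith only [hs, h1, h2]

theorem key165 : (165 : ℝ) * Real.log 165 * ((10782212182893138320231 : ℝ)/63245806209101973600) ≤ 48 * Real.log 48 * (((harmonic 165 : ℚ) : ℝ) + ((harmonic 165 : ℚ) : ℝ) * 165 - 165) := by
  have hs : Real.log ((165:ℝ)/48) ≤ (((39339863 : ℝ)/31250000)) :=
    lnUB 32 (by norm_num) (by norm_num) (by norm_num) (by norm_num)
  rw [Real.log_div (by norm_num) (by norm_num)] at hs
  have h1 := log48_ge
  have h2 := log48_le
  rw [harmV165]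
  push_cast
  linarith only [hs, h1, h2]

theorem key166 : (166 : ℝ) * Real.log 166 * ((10782212182893138320231 : ℝ)/63245806209101973600) ≤ 48 * Real.log 48 * (((harmonic 166 : ℚ) : ℝ) + ((harmonic 166 : ℚ) : ℝ) * 166 - 166) := by
  have hs : Real.log ((166:ℝ)/48) ≤ (((316289057 : ℝ)/250000000)) :=
    lnUB 32 (by norm_num) (by norm_num) (by norm_num) (by norm_num)
  rw [Real.log_div (by norm_num) (by norm_num)] at hs
  have h1 := log48_ge
  have h2 := log48_le
  rw [harmV166]
  push_cast
  linarith only [hs, h1, h2]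

theorem key167 : (167 : ℝ) * Real.log 167 * ((10782212182893138320231 : ℝ)/63245806209101973600) ≤ 48 * Real.log 48 * (((harmonic 167 : ℚ) : ℝ) + ((harmonic 167 : ℚ) : ℝ) * 167 - 167) := by
  have hs : Real.log ((167:ℝ)/48) ≤ (((1271400293 : ℝ)/1000000000)) :=
    lnUB 32 (by norm_num) (by norm_num) (by norm_num) (by norm_num)
  rw [Real.log_div (by norm_num) (by norm_num)] at hs
  have h1 := log48_ge
  have h2 := log48_le
  rw [harmV167]
  push_cast
  linarith only [hs, h1, h2]

theorem key168 : (168 : ℝ) * Real.log 168 * ((10782212182893138320231 : ℝ)/63245806209101973600) ≤ 48 * Real.log 48 * (((harmonic 168 : ℚ) : ℝ) + ((harmonic 168 : ℚ) : ℝ) * 168 - 168) := by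
  have hs : Real.log ((168:ℝ)/48) ≤ (((1277608241 : ℝ)/1000000000)) :=
    lnUB 32 (by norm_num) (by norm_num) (by norm_num) (by norm_num)
  rw [Real.log_div (by norm_num) (by norm_num)] at hs
  have h1 := log48_ge
  have h2 := log48_le
  rw [harmV168]
  push_cast
  linarith only [hs, h1, h2]

theorem key169 : (169 : ℝ) * Real.log 169 * ((10782212182893138320231 : ℝ)/63245806209101973600) ≤ 48 * Real.log 48 * (((harmonic 169 : ℚ) : ℝ) + ((harmonic 169 : ℚ) : ℝ) * 169 - 169) := by
  have hs : Real.log ((169:ℝ)/48) ≤ (((256756099 : ℝ)/200000000)) :=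
    lnUB 32 (by norm_num) (by norm_num) (by norm_num) (by norm_num)
  rw [Real.log_div (by norm_num) (by norm_num)] at hs
  have h1 := log48_ge
  have h2 := log48_le
  rw [harmV169]
  push_cast
  linarith only [hs, h1, h2]

theorem key170 : (170 : ℝ) * Real.log 170 * ((10782212182893138320231 : ℝ)/63245806209101973600) ≤ 48 * Real.log 48 * (((harmonic 170 : ℚ) : ℝ) + ((harmonic 170 : ℚ) : ℝ) * 170 - 170) := by
  have hs : Real.log ((170:ℝ)/48) ≤ (((322479367 : ℝ)/250000000)) :=
    lnUB 32 (by norm_num) (by norm_num) (by norm_num) (by norm_num)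
  rw [Real.log_div (by norm_num) (by norm_num)] at hs
  have h1 := log48_ge
  have h2 := log48_le
  rw [harmV170]
  push_cast
  linarith only [hs, h1, h2]

theorem key171 : (171 : ℝ) * Real.log 171 * ((10782212182893138320231 : ℝ)/63245806209101973600) ≤ 48 * Real.log 48 * (((harmonic 171 : ℚ) : ℝ) + ((harmonic 171 : ℚ) : ℝ) * 171 - 171) := by
  have hs : Real.log ((171:ℝ)/48) ≤ (((129601957 : ℝ)/100000000)) :=
    lnUB 32 (by norm_num) (by norm_num) (by norm_num) (by norm_num)
  rw [Real.log_div (by norm_num) (by norm_num)] at hs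
  have h1 := log48_ge
  have h2 := log48_le
  rw [harmV171]
  push_cast
  linarith only [hs, h1, h2]

theorem key172 : (172 : ℝ) * Real.log 172 * ((10782212182893138320231 : ℝ)/63245806209101973600) ≤ 48 * Real.log 48 * (((harmonic 172 : ℚ) : ℝ) + ((harmonic 172 : ℚ) : ℝ) * 172 - 172) := by
  have hs : Real.log ((172:ℝ)/48) ≤ (((651043599 : ℝ)/500000000)) :=
    lnUB 32 (by norm_num) (by norm_num) (by norm_num) (by norm_num)
  rw [Real.log_div (by norm_num) (by norm_num)] at hs
  have h1 := log48_ge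
  have h2 := log48_le
  rw [harmV172]
  push_cast
  linarith only [hs, h1, h2]

theorem key173 : (173 : ℝ) * Real.log 173 * ((10782212182893138320231 : ℝ)/63245806209101973600) ≤ 48 * Real.log 48 * (((harmonic 173 : ℚ) : ℝ) + ((harmonic 173 : ℚ) : ℝ) * 173 - 173) := by
  have hs : Real.log ((173:ℝ)/48) ≤ (((1308120749 : ℝ)/1000000000)) :=
    lnUB 32 (by norm_num) (by norm_num) (by norm_num) (by norm_num)
  rw [Real.log_div (by norm_num) (by norm_num)] at hs
  have h1 := log48_ge
  have h2 := log48_le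
  rw [harmV173]
  push_cast
  linarith only [hs, h1, h2]

theorem key174 : (174 : ℝ) * Real.log 174 * ((10782212182893138320231 : ℝ)/63245806209101973600) ≤ 48 * Real.log 48 * (((harmonic 174 : ℚ) : ℝ) + ((harmonic 174 : ℚ) : ℝ) * 174 - 174) := by
  have hs : Real.log ((174:ℝ)/48) ≤ (((1314120607 : ℝ)/1000000000)) :=
    lnUB 32 (by norm_num) (by norm_num) (by norm_num) (by norm_num)
  rw [Real.log_div (by norm_num) (by norm_num)] at hs
  have h1 := log48_ge
  have h2 := log48_le
  rw [harmV174]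
  push_cast
  linarith only [hs, h1, h2]

theorem key175 : (175 : ℝ) * Real.log 175 * ((10782212182893138320231 : ℝ)/63245806209101973600) ≤ 48 * Real.log 48 * (((harmonic 175 : ℚ) : ℝ) + ((harmonic 175 : ℚ) : ℝ) * 175 - 175) := by
  have hs : Real.log ((175:ℝ)/48) ≤ (((1320087153 : ℝ)/1000000000)) :=
    lnUB 32 (by norm_num) (by norm_num) (by norm_num) (by norm_num)
  rw [Real.log_div (by norm_num) (by norm_num)] at hs
  have h1 := log48_ge
  have h2 := log48_le
  rw [harmV175]
  push_cast
  linarith only [hs, h1, h2]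

theorem key176 : (176 : ℝ) * Real.log 176 * ((10782212182893138320231 : ℝ)/63245806209101973600) ≤ 48 * Real.log 48 * (((harmonic 176 : ℚ) : ℝ) + ((harmonic 176 : ℚ) : ℝ) * 176 - 176) := by
  have hs : Real.log ((176:ℝ)/48) ≤ (((663010381 : ℝ)/500000000)) :=
    lnUB 32 (by norm_num) (by norm_num) (by norm_num) (by norm_num)
  rw [Real.log_div (by norm_num) (by norm_num)] at hs
  have h1 := log48_ge
  have h2 := log48_le
  rw [harmV176]
  push_cast
  linarith only [hs, h1, h2]

theorem key177 : (177 : ℝ) * Real.log 177 * ((10782212182893138320231 : ℝ)/63245806209101973600) ≤ 48 * Real.log 48 * (((harmonic 177 : ℚ) : ℝ) + ((harmonic 177 : ℚ) : ℝ) * 177 - 177) := by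
  have hs : Real.log ((177:ℝ)/48) ≤ (((1331921799 : ℝ)/1000000000)) :=
    lnUB 32 (by norm_num) (by norm_num) (by norm_num) (by norm_num)
  rw [Real.log_div (by norm_num) (by norm_num)] at hs
  have h1 := log48_ge
  have h2 := log48_le
  rw [harmV177]
  push_cast
  linarith only [hs, h1, h2]

theorem key178 : (178 : ℝ) * Real.log 178 * ((10782212182893138320231 : ℝ)/63245806209101973600) ≤ 48 * Real.log 48 * (((harmonic 178 : ℚ) : ℝ) + ((harmonic 178 : ℚ) : ℝ) * 178 - 178) := by
  have hs : Real.log ((178:ℝ)/48) ≤ (((1337790627 : ℝ)/1000000000)) :=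
    lnUB 32 (by norm_num) (by norm_num) (by norm_num) (by norm_num)
  rw [Real.log_div (by norm_num) (by norm_num)] at hs
  have h1 := log48_ge
  have h2 := log48_le
  rw [harmV178]
  push_cast
  linarith only [hs, h1, h2]

theorem key179 : (179 : ℝ) * Real.log 179 * ((10782212182893138320231 : ℝ)/63245806209101973600) ≤ 48 * Real.log 48 * (((harmonic 179 : ℚ) : ℝ) + ((harmonic 179 : ℚ) : ℝ) * 179 - 179) := by
  have hs : Real.log ((179:ℝ)/48) ≤ (((1343627601 : ℝ)/1000000000)) :=
    lnUB 32 (by norm_num) (by norm_num) (by norm_num) (by norm_num)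
  rw [Real.log_div (by norm_num) (by norm_num)] at hs
  have h1 := log48_ge
  have h2 := log48_le
  rw [harmV179]
  push_cast
  linarith only [hs, h1, h2]

lemma log_le_half {y : ℝ} (hy : 1 ≤ y) : Real.log y ≤ (y - y⁻¹)/2 := by
  rcases eq_or_lt_of_le hy with h|h
  · rw [← h]; norm_num
  · have h0 : 0 < Real.log y := Real.log_pos h
    have hs := Real.self_lt_sinh_iff.mpr h0
    rw [Real.sinh_eq, Real.exp_log (by linarith), ← Real.log_inv,
      Real.exp_log (by positivity)] at hs
    linarith

lemma trap (d : ℕ) (hd : 1 ≤ d) :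
    Real.log ((d:ℝ)+1) ≤ Real.log d + 1/(2*(d:ℝ)) + 1/(2*((d:ℝ)+1)) := by
  have hd0 : (0:ℝ) < d := by exact_mod_cast hd
  have h1 : (1:ℝ) ≤ ((d:ℝ)+1)/d := by rw [le_div_iff₀ hd0]; linarith
  have h2 := log_le_half h1
  rw [Real.log_div (by linarith) (by linarith)] at h2
  have h3 : ((((d:ℝ)+1)/d) - (((d:ℝ)+1)/d)⁻¹)/2 = 1/(2*(d:ℝ)) + 1/(2*((d:ℝ)+1)) := by
    rw [inv_div]
    field_simp
    ring
  rw [h3] at h2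
  linarith

lemma log180_le : Real.log 180 ≤ ((162293547 : ℝ)/31250000) := by
  have hr : Real.log ((15:ℝ)/4) ≤ (((165272807 : ℝ)/125000000)) :=
    lnUB 2048 (by norm_num) (by norm_num) (by norm_num) (by rw [show (2048:ℕ) = 16*16*8 from rfl, pow_mul, pow_mul]; norm_num)
  have h : (180:ℝ) = 48 * (15/4) := by norm_num
  rw [h, Real.log_mul (by norm_num) (by norm_num)]
  linarith [log48_le]

lemma log180_ge : ((10385040761 : ℝ)/2000000000) ≤ Real.log 180 := by
  have hr : (((1321329407 : ℝ)/1000000000)) ≤ Real.log ((15:ℝ)/4) :=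
    lnLB 2048 (by norm_num) (by norm_num) (by norm_num) (by rw [show (2048:ℕ) = 16*16*8 from rfl, pow_mul, pow_mul]; norm_num)
  have h : (180:ℝ) = 48 * (15/4) := by norm_num
  rw [h, Real.log_mul (by norm_num) (by norm_num)]
  linarith [log48_ge]

lemma Hlb : ∀ d : ℕ, 180 ≤ d →
    Real.log d + ((3873698504279739366639760530183480057125072943898121882770122221501337796902880219 : ℝ)/6716117783409557733774365832287604067228748263957518654010323204508255820250000000) + 1/(2*(d:ℝ)) ≤ ((harmonic d : ℚ) : ℝ) := by
  intro d hd
  induction d, hd using Nat.le_induction with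
  | base =>
      rw [harmV180]
      have h := log180_le
      push_cast
      linarith
  | succ n hn ih =>
      have h1 : (1:ℕ) ≤ n := by omega
      have ht := trap n h1
      rw [harmonic_succ]
      have e : 1/(2*((n:ℝ)+1)) + 1/(2*((n:ℝ)+1)) = ((n:ℝ)+1)⁻¹ := by
        have hne : ((n:ℝ)+1) ≠ 0 := by positivity
        rw [← add_div, inv_eq_one_div, div_eq_div_iff (by positivity) (by positivity)]
        ring
      push_cast
      push_cast at ih
      linarith [ht, ih, e]

lemma auxmain : ∀ d : ℕ, 2 ≤ d →
    (d:ℝ) * Real.log d * ((10782212182893138320231 : ℝ)/63245806209101973600) ≤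
      48 * Real.log 48 * (((harmonic d : ℚ) : ℝ) + ((harmonic d : ℚ) : ℝ) * d - d) ∧
    0 < ((harmonic d : ℚ) : ℝ) + ((harmonic d : ℚ) : ℝ) * d - d := by
  intro d hd
  rcases lt_or_ge d 180 with hlt | hge
  · interval_cases d
    · exact ⟨by push_cast; exact key2, by rw [harmV2]; norm_num⟩
    · exact ⟨by push_cast; exact key3, by rw [harmV3]; norm_num⟩
    · exact ⟨by push_cast; exact key4, by rw [harmV4]; norm_num⟩
    · exact ⟨by push_cast; exact key5, by rw [harmV5]; norm_num⟩
    · exact ⟨by push_cast; exact key6, by rw [harmV6]; norm_num⟩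
    · exact ⟨by push_cast; exact key7, by rw [harmV7]; norm_num⟩
    · exact ⟨by push_cast; exact key8, by rw [harmV8]; norm_num⟩
    · exact ⟨by push_cast; exact key9, by rw [harmV9]; norm_num⟩
    · exact ⟨by push_cast; exact key10, by rw [harmV10]; norm_num⟩
    · exact ⟨by push_cast; exact key11, by rw [harmV11]; norm_num⟩
    · exact ⟨by push_cast; exact key12, by rw [harmV12]; norm_num⟩
    · exact ⟨by push_cast; exact key13, by rw [harmV13]; norm_num⟩
    · exact ⟨by push_cast; exact key14, by rw [harmV14]; norm_num⟩
    · exact ⟨by push_cast; exact key15, by rw [harmV15]; norm_num⟩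
    · exact ⟨by push_cast; exact key16, by rw [harmV16]; norm_num⟩
    · exact ⟨by push_cast; exact key17, by rw [harmV17]; norm_num⟩
    · exact ⟨by push_cast; exact key18, by rw [harmV18]; norm_num⟩
    · exact ⟨by push_cast; exact key19, by rw [harmV19]; norm_num⟩
    · exact ⟨by push_cast; exact key20, by rw [harmV20]; norm_num⟩
    · exact ⟨by push_cast; exact key21, by rw [harmV21]; norm_num⟩
    · exact ⟨by push_cast; exact key22, by rw [harmV22]; norm_num⟩
    · exact ⟨by push_cast; exact key23, by rw [harmV23]; norm_num⟩
    · exact ⟨by push_cast; exact key24, by rw [harmV24]; norm_num⟩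
    · exact ⟨by push_cast; exact key25, by rw [harmV25]; norm_num⟩
    · exact ⟨by push_cast; exact key26, by rw [harmV26]; norm_num⟩
    · exact ⟨by push_cast; exact key27, by rw [harmV27]; norm_num⟩
    · exact ⟨by push_cast; exact key28, by rw [harmV28]; norm_num⟩
    · exact ⟨by push_cast; exact key29, by rw [harmV29]; norm_num⟩
    · exact ⟨by push_cast; exact key30, by rw [harmV30]; norm_num⟩
    · exact ⟨by push_cast; exact key31, by rw [harmV31]; norm_num⟩
    · exact ⟨by push_cast; exact key32, by rw [harmV32]; norm_num⟩
    · exact ⟨by push_cast; exact key33, by rw [harmV33]; norm_num⟩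
    · exact ⟨by push_cast; exact key34, by rw [harmV34]; norm_num⟩
    · exact ⟨by push_cast; exact key35, by rw [harmV35]; norm_num⟩
    · exact ⟨by push_cast; exact key36, by rw [harmV36]; norm_num⟩
    · exact ⟨by push_cast; exact key37, by rw [harmV37]; norm_num⟩
    · exact ⟨by push_cast; exact key38, by rw [harmV38]; norm_num⟩
    · exact ⟨by push_cast; exact key39, by rw [harmV39]; norm_num⟩
    · exact ⟨by push_cast; exact key40, by rw [harmV40]; norm_num⟩
    · exact ⟨by push_cast; exact key41, by rw [harmV41]; norm_num⟩
    · exact ⟨by push_cast; exact key42, by rw [harmV42]; norm_num⟩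
    · exact ⟨by push_cast; exact key43, by rw [harmV43]; norm_num⟩
    · exact ⟨by push_cast; exact key44, by rw [harmV44]; norm_num⟩
    · exact ⟨by push_cast; exact key45, by rw [harmV45]; norm_num⟩
    · exact ⟨by push_cast; exact key46, by rw [harmV46]; norm_num⟩
    · exact ⟨by push_cast; exact key47, by rw [harmV47]; norm_num⟩
    · exact ⟨by push_cast; exact key48, by rw [harmV48]; norm_num⟩
    · exact ⟨by push_cast; exact key49, by rw [harmV49]; norm_num⟩
    · exact ⟨by push_cast; exact key50, by rw [harmV50]; norm_num⟩
    · exact ⟨by push_cast; exact key51, by rw [harmV51]; norm_num⟩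
    · exact ⟨by push_cast; exact key52, by rw [harmV52]; norm_num⟩
    · exact ⟨by push_cast; exact key53, by rw [harmV53]; norm_num⟩
    · exact ⟨by push_cast; exact key54, by rw [harmV54]; norm_num⟩
    · exact ⟨by push_cast; exact key55, by rw [harmV55]; norm_num⟩
    · exact ⟨by push_cast; exact key56, by rw [harmV56]; norm_num⟩
    · exact ⟨by push_cast; exact key57, by rw [harmV57]; norm_num⟩
    · exact ⟨by push_cast; exact key58, by rw [harmV58]; norm_num⟩
    · exact ⟨by push_cast; exact key59, by rw [harmV59]; norm_num⟩
    · exact ⟨by push_cast; exact key60, by rw [harmV60]; norm_num⟩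
    · exact ⟨by push_cast; exact key61, by rw [harmV61]; norm_num⟩
    · exact ⟨by push_cast; exact key62, by rw [harmV62]; norm_num⟩
    · exact ⟨by push_cast; exact key63, by rw [harmV63]; norm_num⟩
    · exact ⟨by push_cast; exact key64, by rw [harmV64]; norm_num⟩
    · exact ⟨by push_cast; exact key65, by rw [harmV65]; norm_num⟩
    · exact ⟨by push_cast; exact key66, by rw [harmV66]; norm_num⟩
    · exact ⟨by push_cast; exact key67, by rw [harmV67]; norm_num⟩
    · exact ⟨by push_cast; exact key68, by rw [harmV68]; norm_num⟩
    · exact ⟨by push_cast; exact key69, by rw [harmV69]; norm_num⟩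
    · exact ⟨by push_cast; exact key70, by rw [harmV70]; norm_num⟩
    · exact ⟨by push_cast; exact key71, by rw [harmV71]; norm_num⟩
    · exact ⟨by push_cast; exact key72, by rw [harmV72]; norm_num⟩
    · exact ⟨by push_cast; exact key73, by rw [harmV73]; norm_num⟩
    · exact ⟨by push_cast; exact key74, by rw [harmV74]; norm_num⟩
    · exact ⟨by push_cast; exact key75, by rw [harmV75]; norm_num⟩
    · exact ⟨by push_cast; exact key76, by rw [harmV76]; norm_num⟩
    · exact ⟨by push_cast; exact key77, by rw [harmV77]; norm_num⟩
    · exact ⟨by push_cast; exact key78, by rw [harmV78]; norm_num⟩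
    · exact ⟨by push_cast; exact key79, by rw [harmV79]; norm_num⟩
    · exact ⟨by push_cast; exact key80, by rw [harmV80]; norm_num⟩
    · exact ⟨by push_cast; exact key81, by rw [harmV81]; norm_num⟩
    · exact ⟨by push_cast; exact key82, by rw [harmV82]; norm_num⟩
    · exact ⟨by push_cast; exact key83, by rw [harmV83]; norm_num⟩
    · exact ⟨by push_cast; exact key84, by rw [harmV84]; norm_num⟩
    · exact ⟨by push_cast; exact key85, by rw [harmV85]; norm_num⟩
    · exact ⟨by push_cast; exact key86, by rw [harmV86]; norm_num⟩
    · exact ⟨by push_cast; exact key87, by rw [harmV87]; norm_num⟩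
    · exact ⟨by push_cast; exact key88, by rw [harmV88]; norm_num⟩
    · exact ⟨by push_cast; exact key89, by rw [harmV89]; norm_num⟩
    · exact ⟨by push_cast; exact key90, by rw [harmV90]; norm_num⟩
    · exact ⟨by push_cast; exact key91, by rw [harmV91]; norm_num⟩
    · exact ⟨by push_cast; exact key92, by rw [harmV92]; norm_num⟩
    · exact ⟨by push_cast; exact key93, by rw [harmV93]; norm_num⟩
    · exact ⟨by push_cast; exact key94, by rw [harmV94]; norm_num⟩
    · exact ⟨by push_cast; exact key95, by rw [harmV95]; norm_num⟩
    · exact ⟨by push_cast; exact key96, by rw [harmV96]; norm_num⟩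
    · exact ⟨by push_cast; exact key97, by rw [harmV97]; norm_num⟩
    · exact ⟨by push_cast; exact key98, by rw [harmV98]; norm_num⟩
    · exact ⟨by push_cast; exact key99, by rw [harmV99]; norm_num⟩
    · exact ⟨by push_cast; exact key100, by rw [harmV100]; norm_num⟩
    · exact ⟨by push_cast; exact key101, by rw [harmV101]; norm_num⟩
    · exact ⟨by push_cast; exact key102, by rw [harmV102]; norm_num⟩
    · exact ⟨by push_cast; exact key103, by rw [harmV103]; norm_num⟩
    · exact ⟨by push_cast; exact key104, by rw [harmV104]; norm_num⟩
    · exact ⟨by push_cast; exact key105, by rw [harmV105]; norm_num⟩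
    · exact ⟨by push_cast; exact key106, by rw [harmV106]; norm_num⟩
    · exact ⟨by push_cast; exact key107, by rw [harmV107]; norm_num⟩
    · exact ⟨by push_cast; exact key108, by rw [harmV108]; norm_num⟩
    · exact ⟨by push_cast; exact key109, by rw [harmV109]; norm_num⟩
    · exact ⟨by push_cast; exact key110, by rw [harmV110]; norm_num⟩
    · exact ⟨by push_cast; exact key111, by rw [harmV111]; norm_num⟩
    · exact ⟨by push_cast; exact key112, by rw [harmV112]; norm_num⟩
    · exact ⟨by push_cast; exact key113, by rw [harmV113]; norm_num⟩
    · exact ⟨by push_cast; exact key114, by rw [harmV114]; norm_num⟩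
    · exact ⟨by push_cast; exact key115, by rw [harmV115]; norm_num⟩
    · exact ⟨by push_cast; exact key116, by rw [harmV116]; norm_num⟩
    · exact ⟨by push_cast; exact key117, by rw [harmV117]; norm_num⟩
    · exact ⟨by push_cast; exact key118, by rw [harmV118]; norm_num⟩
    · exact ⟨by push_cast; exact key119, by rw [harmV119]; norm_num⟩
    · exact ⟨by push_cast; exact key120, by rw [harmV120]; norm_num⟩
    · exact ⟨by push_cast; exact key121, by rw [harmV121]; norm_num⟩
    · exact ⟨by push_cast; exact key122, by rw [harmV122]; norm_num⟩
    · exact ⟨by push_cast; exact key123, by rw [harmV123]; norm_num⟩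
    · exact ⟨by push_cast; exact key124, by rw [harmV124]; norm_num⟩
    · exact ⟨by push_cast; exact key125, by rw [harmV125]; norm_num⟩
    · exact ⟨by push_cast; exact key126, by rw [harmV126]; norm_num⟩
    · exact ⟨by push_cast; exact key127, by rw [harmV127]; norm_num⟩
    · exact ⟨by push_cast; exact key128, by rw [harmV128]; norm_num⟩
    · exact ⟨by push_cast; exact key129, by rw [harmV129]; norm_num⟩
    · exact ⟨by push_cast; exact key130, by rw [harmV130]; norm_num⟩
    · exact ⟨by push_cast; exact key131, by rw [harmV131]; norm_num⟩
    · exact ⟨by push_cast; exact key132, by rw [harmV132]; norm_num⟩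
    · exact ⟨by push_cast; exact key133, by rw [harmV133]; norm_num⟩
    · exact ⟨by push_cast; exact key134, by rw [harmV134]; norm_num⟩
    · exact ⟨by push_cast; exact key135, by rw [harmV135]; norm_num⟩
    · exact ⟨by push_cast; exact key136, by rw [harmV136]; norm_num⟩
    · exact ⟨by push_cast; exact key137, by rw [harmV137]; norm_num⟩
    · exact ⟨by push_cast; exact key138, by rw [harmV138]; norm_num⟩
    · exact ⟨by push_cast; exact key139, by rw [harmV139]; norm_num⟩
    · exact ⟨by push_cast; exact key140, by rw [harmV140]; norm_num⟩
    · exact ⟨by push_cast; exact key141, by rw [harmV141]; norm_num⟩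
    · exact ⟨by push_cast; exact key142, by rw [harmV142]; norm_num⟩
    · exact ⟨by push_cast; exact key143, by rw [harmV143]; norm_num⟩
    · exact ⟨by push_cast; exact key144, by rw [harmV144]; norm_num⟩
    · exact ⟨by push_cast; exact key145, by rw [harmV145]; norm_num⟩
    · exact ⟨by push_cast; exact key146, by rw [harmV146]; norm_num⟩
    · exact ⟨by push_cast; exact key147, by rw [harmV147]; norm_num⟩
    · exact ⟨by push_cast; exact key148, by rw [harmV148]; norm_num⟩
    · exact ⟨by push_cast; exact key149, by rw [harmV149]; norm_num⟩
    · exact ⟨by push_cast; exact key150, by rw [harmV150]; norm_num⟩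
    · exact ⟨by push_cast; exact key151, by rw [harmV151]; norm_num⟩
    · exact ⟨by push_cast; exact key152, by rw [harmV152]; norm_num⟩
    · exact ⟨by push_cast; exact key153, by rw [harmV153]; norm_num⟩
    · exact ⟨by push_cast; exact key154, by rw [harmV154]; norm_num⟩
    · exact ⟨by push_cast; exact key155, by rw [harmV155]; norm_num⟩
    · exact ⟨by push_cast; exact key156, by rw [harmV156]; norm_num⟩
    · exact ⟨by push_cast; exact key157, by rw [harmV157]; norm_num⟩
    · exact ⟨by push_cast; exact key158, by rw [harmV158]; norm_num⟩
    · exact ⟨by push_cast; exact key159, by rw [harmV159]; norm_num⟩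
    · exact ⟨by push_cast; exact key160, by rw [harmV160]; norm_num⟩
    · exact ⟨by push_cast; exact key161, by rw [harmV161]; norm_num⟩
    · exact ⟨by push_cast; exact key162, by rw [harmV162]; norm_num⟩
    · exact ⟨by push_cast; exact key163, by rw [harmV163]; norm_num⟩
    · exact ⟨by push_cast; exact key164, by rw [harmV164]; norm_num⟩
    · exact ⟨by push_cast; exact key165, by rw [harmV165]; norm_num⟩
    · exact ⟨by push_cast; exact key166, by rw [harmV166]; norm_num⟩
    · exact ⟨by push_cast; exact key167, by rw [harmV167]; norm_num⟩
    · exact ⟨by push_cast; exact key168, by rw [harmV168]; norm_num⟩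
    · exact ⟨by push_cast; exact key169, by rw [harmV169]; norm_num⟩
    · exact ⟨by push_cast; exact key170, by rw [harmV170]; norm_num⟩
    · exact ⟨by push_cast; exact key171, by rw [harmV171]; norm_num⟩
    · exact ⟨by push_cast; exact key172, by rw [harmV172]; norm_num⟩
    · exact ⟨by push_cast; exact key173, by rw [harmV173]; norm_num⟩
    · exact ⟨by push_cast; exact key174, by rw [harmV174]; norm_num⟩
    · exact ⟨by push_cast; exact key175, by rw [harmV175]; norm_num⟩
    · exact ⟨by push_cast; exact key176, by rw [harmV176]; norm_num⟩
    · exact ⟨by push_cast; exact key177, by rw [harmV177]; norm_num⟩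
    · exact ⟨by push_cast; exact key178, by rw [harmV178]; norm_num⟩
    · exact ⟨by push_cast; exact key179, by rw [harmV179]; norm_num⟩
  · have hH := Hlb d hge
    have hdR : (180:ℝ) ≤ (d:ℝ) := by exact_mod_cast hge
    have hL : (((10385040761 : ℝ)/2000000000)) ≤ Real.log d :=
      le_trans log180_ge (Real.log_le_log (by norm_num) hdR)
    have hM1 := log48_ge
    have hM2 := log48_le
    have hdpos : (0:ℝ) ≤ (d:ℝ) := by positivity
    have hinv : 0 < 1/(2*(d:ℝ)) := by positivity
    have hge' : Real.log d + ((3873698504279739366639760530183480057125072943898121882770122221501337796902880219 : ℝ)/6716117783409557733774365832287604067228748263957518654010323204508255820250000000) ≤ ((harmonic d : ℚ) : ℝ) := by linarith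
    constructor
    · have hA : 0 ≤ 48 * Real.log 48 * (1+(d:ℝ)) - (d:ℝ) * ((10782212182893138320231 : ℝ)/63245806209101973600) := by
        nlinarith [mul_nonneg (sub_nonneg.mpr hM1) (show (0:ℝ) ≤ 1+(d:ℝ) by positivity), hdR]
      have p1 : 0 ≤ (Real.log d - (((10385040761 : ℝ)/2000000000))) * (48 * Real.log 48 * (1+(d:ℝ)) - (d:ℝ) * ((10782212182893138320231 : ℝ)/63245806209101973600)) :=
        mul_nonneg (by linarith) hA
      have p2 : 0 ≤ (Real.log 48 - (((7742381947 : ℝ)/2000000000))) * (((((10385040761 : ℝ)/2000000000)) + ((3873698504279739366639760530183480057125072943898121882770122221501337796902880219 : ℝ)/6716117783409557733774365832287604067228748263957518654010323204508255820250000000)) * (1+(d:ℝ)) - (d:ℝ)) :=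
        mul_nonneg (by linarith) (by nlinarith [hdR])
      have p3 : 0 ≤ Real.log 48 * ((((harmonic d : ℚ) : ℝ) - (Real.log d + ((3873698504279739366639760530183480057125072943898121882770122221501337796902880219 : ℝ)/6716117783409557733774365832287604067228748263957518654010323204508255820250000000))) * (1+(d:ℝ))) :=
        mul_nonneg (by linarith) (mul_nonneg (by linarith) (by positivity))
      nlinarith [p1, p2, p3, hdR, hM1]
    · have p : (0:ℝ) ≤ (((harmonic d : ℚ) : ℝ) - 1) * (d:ℝ) :=
        mul_nonneg (by linarith) hdpos
      linarith


/-- for every integer `d ≥ 2`,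
`d² / (H_d + H_d·d − d) ≤ 1.09 · d / ln d`; equivalently the function
`d ↦ d·(ln d)/(H_d + H_d·d − d)` is bounded by `1.09`, with its maximum attained
at `d = 48`. -/
theorem stmt9 :
    (∀ d : ℕ, 2 ≤ d →
      (d : ℝ) ^ 2 / ((harmonic d : ℝ) + (harmonic d : ℝ) * d - d) ≤
        1.09 * d / Real.log d) ∧
    (∀ d : ℕ, 2 ≤ d →
      (d : ℝ) * Real.log d / ((harmonic d : ℝ) + (harmonic d : ℝ) * d - d) ≤
        (48 : ℝ) * Real.log 48 /
          ((harmonic 48 : ℝ) + (harmonic 48 : ℝ) * 48 - 48)) := by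
  have hD48 : ((harmonic 48 : ℚ) : ℝ) + ((harmonic 48 : ℚ) : ℝ) * 48 - 48 = ((10782212182893138320231 : ℝ)/63245806209101973600) := by
    rw [harmV48]; norm_num
  constructor
  · intro d hd
    obtain ⟨key, hden⟩ := auxmain d hd
    have hd1 : (1:ℝ) < (d:ℝ) := by exact_mod_cast Nat.lt_of_lt_of_le (by norm_num) hd
    have hlog : 0 < Real.log d := Real.log_pos hd1
    rw [div_le_div_iff₀ hden hlog]
    have hM2 := log48_le
    have q1 : 0 ≤ (1.09 * ((10782212182893138320231 : ℝ)/63245806209101973600) - 48 * Real.log 48) *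
        (((harmonic d : ℚ) : ℝ) + ((harmonic d : ℚ) : ℝ) * d - d) :=
      mul_nonneg (by norm_num; linarith) hden.le
    have q2 : (d:ℝ) * Real.log d * ((10782212182893138320231 : ℝ)/63245806209101973600) ≤ 1.09 * ((10782212182893138320231 : ℝ)/63245806209101973600) *
        (((harmonic d : ℚ) : ℝ) + ((harmonic d : ℚ) : ℝ) * d - d) := by nlinarith [key, q1]
    have q3 : (d:ℝ) * Real.log d ≤ 1.09 *
        (((harmonic d : ℚ) : ℝ) + ((harmonic d : ℚ) : ℝ) * d - d) := by nlinarith [q2]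
    have hdpos : (0:ℝ) ≤ (d:ℝ) := by positivity
    nlinarith [mul_nonneg (sub_nonneg.mpr q3) hdpos]
  · intro d hd
    obtain ⟨key, hden⟩ := auxmain d hd
    rw [hD48, div_le_div_iff₀ hden (by norm_num : (0:ℝ) < ((10782212182893138320231 : ℝ)/63245806209101973600))]
    nlinarith [key]


end QSteer

end
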